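/- arXiv:1104.5452 — 4 statements merged into one kernel-verified Lean document; each statement's English description precedes it below -/
import Mathlib

section
/- Let λ ∈ [1/2, 1). Then there is no F_λ-invariant Borel probability measure on (0,1] that is absolutely continuous with respect to Lebesgue measure. -/
open MeasureTheory Set Filter Topology
open scoped ENNReal NNReal

/-- The Markov partition interval `W n = (lam^n, lam^(n-1)]` for `n ≥ 1`. -/
noncomputable def Wint (lam : ℝ) (n : ℕ) : Set ℝ := Set.Ioc (lam ^ n) (lam ^ (n - 1))

/-- The map `F_lam : (0,1] → (0,1]`, extended by the identity outside `(0,1]`.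
On `W n` it is `x ↦ (x - lam^n)/(lam(1-lam))` for `n ≥ 2` and
`x ↦ (x - lam)/(1-lam)` on `W 1`; for `x ∈ (0,1]` the branch index is
the least `n` with `lam^n < x`. -/
noncomputable def Flam (lam : ℝ) (x : ℝ) : ℝ :=
  if 0 < x ∧ x ≤ 1 then
    if sInf {n : ℕ | lam ^ n < x} = 1 then (x - lam) / (1 - lam)
    else (x - lam ^ sInf {n : ℕ | lam ^ n < x}) / (lam * (1 - lam))
  else x

/-- The slope of `F_lam` on the branch `W n`. -/
noncomputable def slopeW (lam : ℝ) (n : ℕ) : ℝ :=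
  if n = 1 then 1 / (1 - lam) else 1 / (lam * (1 - lam))

/-- A Borel measure `m` on `(0,1]` is `(t,p)`-conformal for `F_lam` if for every
branch `W n` and every Borel `A ⊆ W n` one has `m(F_lam(A)) = e^p * s_n^t * m(A)`. -/
def IsConformal (lam t p : ℝ) (m : Measure ℝ) : Prop :=
  ∀ n : ℕ, 1 ≤ n → ∀ A : Set ℝ, MeasurableSet A → A ⊆ Wint lam n →
    m (Flam lam '' A) = ENNReal.ofReal (Real.exp p * slopeW lam n ^ t) * m A

/-- A set is wandering for `F_lam` if its preimages under all iterates are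
pairwise disjoint. -/
def IsWanderingSet (lam : ℝ) (A : Set ℝ) : Prop :=
  Pairwise fun i j : ℕ => Disjoint ((Flam lam)^[i] ⁻¹' A) ((Flam lam)^[j] ⁻¹' A)

namespace Stmt1Aux

noncomputable def cc (lam : ℝ) (i : ℕ) : ℝ := if i = 1 then 1 - lam else lam * (1 - lam)

variable {lam : ℝ}

lemma Wzero : Wint lam 0 = ∅ := by simp [Wint]

lemma cc_pos (h0 : 0 < lam) (h2 : lam < 1) (i : ℕ) : 0 < cc lam i := by
  unfold cc; split <;> nlinarith

lemma pow_sub_one_mul' (h0 : 0 < lam) {m : ℕ} (hm : 1 ≤ m) :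
    lam ^ (m - 1) * lam = lam ^ m := by
  rw [← pow_succ]; congr 1; omega

lemma pow_sub_two_mul' (h0 : 0 < lam) {m : ℕ} (hm : 2 ≤ m) :
    lam ^ (m - 2) * lam = lam ^ (m - 1) := by
  rw [← pow_succ]; congr 1; omega

lemma Wsub (h0 : 0 < lam) (h2 : lam < 1) {m : ℕ} (hm : 1 ≤ m) :
    Wint lam m ⊆ Set.Ioc 0 1 := by
  intro x hx
  obtain ⟨hx1, hx2⟩ := hx
  constructor
  · exact lt_trans (pow_pos h0 m) hx1
  · exact hx2.trans (pow_le_one₀ h0.le h2.le)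

lemma Wdisj (h0 : 0 < lam) (h2 : lam < 1) :
    ∀ m n : ℕ, m ≠ n → Disjoint (Wint lam m) (Wint lam n) := by
  have key : ∀ m n : ℕ, m < n → Disjoint (Wint lam m) (Wint lam n) := by
    intro m n hmn
    rw [Set.disjoint_left]
    rintro x ⟨hx1, _⟩ ⟨_, hx4⟩
    have : lam ^ (n - 1) ≤ lam ^ m :=
      pow_le_pow_of_le_one h0.le h2.le (by omega)
    linarith
  intro m n hmn
  rcases lt_or_gt_of_ne hmn with h | h
  · exact key m n h
  · exact (key n m h).symm

lemma sInf_idx (h0 : 0 < lam) (h2 : lam < 1) {m : ℕ} (hm : 1 ≤ m) {x : ℝ}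
    (hx : x ∈ Wint lam m) : sInf {n : ℕ | lam ^ n < x} = m := by
  obtain ⟨hx1, hx2⟩ := hx
  have hmem : m ∈ {n : ℕ | lam ^ n < x} := hx1
  refine le_antisymm (Nat.sInf_le hmem) ?_
  refine le_csInf ⟨m, hmem⟩ ?_
  intro k hk
  by_contra hlt
  push_neg at hlt
  have hk1 : k ≤ m - 1 := by omega
  have : lam ^ (m - 1) ≤ lam ^ k := pow_le_pow_of_le_one h0.le h2.le hk1
  have : x ≤ lam ^ k := le_trans hx2 this
  exact absurd hk (by simp only [Set.mem_setOf_eq]; linarith)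

lemma exists_mem_W (h0 : 0 < lam) (h2 : lam < 1) {x : ℝ} (hx : x ∈ Set.Ioc 0 1) :
    ∃ m : ℕ, 1 ≤ m ∧ x ∈ Wint lam m := by
  obtain ⟨hx1, hx2⟩ := hx
  obtain ⟨n, hn⟩ := exists_pow_lt_of_lt_one hx1 h2
  have hne : {n : ℕ | lam ^ n < x}.Nonempty := ⟨n, hn⟩
  set m := sInf {n : ℕ | lam ^ n < x} with hmdef
  have hmmem : lam ^ m < x := Nat.sInf_mem hne
  have hm1 : 1 ≤ m := by
    rcases Nat.eq_zero_or_pos m with h | h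
    · exfalso; rw [h] at hmmem; simp at hmmem; linarith
    · exact h
  refine ⟨m, hm1, hmmem, ?_⟩
  by_contra hlt
  push_neg at hlt
  have : m - 1 ∈ {n : ℕ | lam ^ n < x} := hlt
  have := Nat.sInf_le this
  omega

lemma Wunion (h0 : 0 < lam) (h2 : lam < 1) :
    (⋃ m : ℕ, Wint lam m) = Set.Ioc 0 1 := by
  apply Set.Subset.antisymm
  · intro x hx
    obtain ⟨m, hm⟩ := Set.mem_iUnion.mp hx
    rcases Nat.eq_zero_or_pos m with h | h
    · rw [h, Wzero] at hm; exact absurd hm (Set.notMem_empty x)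
    · exact Wsub h0 h2 h hm
  · intro x hx
    obtain ⟨m, _, hm⟩ := exists_mem_W h0 h2 hx
    exact Set.mem_iUnion.mpr ⟨m, hm⟩

lemma Flam_on (h0 : 0 < lam) (h2 : lam < 1) {m : ℕ} (hm : 1 ≤ m) {x : ℝ}
    (hx : x ∈ Wint lam m) : Flam lam x = (x - lam ^ m) / cc lam m := by
  have hxI : x ∈ Set.Ioc 0 1 := Wsub h0 h2 hm hx
  have hs : sInf {n : ℕ | lam ^ n < x} = m := sInf_idx h0 h2 hm hx
  unfold Flam
  rw [if_pos ⟨hxI.1, hxI.2⟩, hs]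
  rcases eq_or_lt_of_le hm with h | h
  · rw [if_pos h.symm]
    rw [← h]
    simp [cc, pow_one]
  · rw [if_neg (by omega)]
    unfold cc
    rw [if_neg (by omega)]

lemma Flam_id {x : ℝ} (hx : x ∉ Set.Ioc (0:ℝ) 1) : Flam lam x = x := by
  unfold Flam
  rw [if_neg]
  intro h; exact hx ⟨h.1, h.2⟩

lemma Flam_le_pow (h0 : 0 < lam) (h2 : lam < 1) {m : ℕ} (hm : 2 ≤ m) {x : ℝ}
    (hx : x ∈ Wint lam m) : Flam lam x ≤ lam ^ (m - 2) := by
  obtain ⟨hx1, hx2⟩ := hx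
  rw [Flam_on h0 h2 (by omega) ⟨hx1, hx2⟩]
  have hcc : cc lam m = lam * (1 - lam) := by unfold cc; rw [if_neg (by omega)]
  rw [hcc, div_le_iff₀ (by nlinarith)]
  have e1 : lam ^ (m - 2) * lam = lam ^ (m - 1) := pow_sub_two_mul' h0 hm
  have e2 : lam ^ (m - 1) * lam = lam ^ m := pow_sub_one_mul' h0 (by omega)
  nlinarith [hx2]

lemma Flam_pos (h0 : 0 < lam) (h2 : lam < 1) {m : ℕ} (hm : 1 ≤ m) {x : ℝ}
    (hx : x ∈ Wint lam m) : 0 < Flam lam x := by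
  rw [Flam_on h0 h2 hm hx]
  exact div_pos (by have := hx.1; linarith) (cc_pos h0 h2 m)

lemma Flam_mem_I (h0 : 0 < lam) (h2 : lam < 1) {x : ℝ} (hx : x ∈ Set.Ioc 0 1) :
    Flam lam x ∈ Set.Ioc (0:ℝ) 1 := by
  obtain ⟨m, hm1, hm⟩ := exists_mem_W h0 h2 hx
  refine ⟨Flam_pos h0 h2 hm1 hm, ?_⟩
  rcases eq_or_lt_of_le hm1 with h | h
  · rw [Flam_on h0 h2 hm1 hm]
    have hcc : cc lam m = 1 - lam := by unfold cc; rw [if_pos h.symm]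
    rw [hcc, div_le_one (by linarith)]
    have := hm.2
    have : x ≤ 1 := hx.2
    have hl : lam ^ m = lam := by rw [← h]; ring
    linarith
  · have h2m : 2 ≤ m := h
    calc Flam lam x ≤ lam ^ (m - 2) := Flam_le_pow h0 h2 h2m hm
    _ ≤ 1 := pow_le_one₀ h0.le h2.le

lemma Flam_iter_mem_I (h0 : 0 < lam) (h2 : lam < 1) {x : ℝ} (hx : x ∈ Set.Ioc 0 1)
    (k : ℕ) : (Flam lam)^[k] x ∈ Set.Ioc (0:ℝ) 1 := by
  induction k with
  | zero => simpa using hx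
  | succ k ih =>
    rw [Function.iterate_succ_apply']
    exact Flam_mem_I h0 h2 ih


lemma measurable_Flam (h0 : 0 < lam) (h2 : lam < 1) : Measurable (Flam lam) := by
  have hN : Measurable (fun x : ℝ => sInf {n : ℕ | lam ^ n < x}) := by
    apply measurable_to_countable'
    intro j
    rcases Nat.eq_zero_or_pos j with hj | hj
    · have : (fun x : ℝ => sInf {n : ℕ | lam ^ n < x}) ⁻¹' {j} = (Set.Ioc (0:ℝ) 1)ᶜ := by
        ext x
        simp only [Set.mem_preimage, Set.mem_singleton_iff, Set.mem_compl_iff, hj]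
        constructor
        · intro hx hxI
          obtain ⟨m, hm1, hmw⟩ := exists_mem_W h0 h2 hxI
          rw [sInf_idx h0 h2 hm1 hmw] at hx
          omega
        · intro hx
          rcases le_or_gt x 0 with hle | hgt
          · have : {n : ℕ | lam ^ n < x} = ∅ := by
              ext n; simp only [Set.mem_setOf_eq, Set.mem_empty_iff_false, iff_false, not_lt]
              exact le_trans hle (pow_pos h0 n).le
            rw [this, Nat.sInf_empty]
          · have hx1 : 1 < x := by
              by_contra hle1
              exact hx ⟨hgt, by linarith⟩
            have h0mem : (0:ℕ) ∈ {n : ℕ | lam ^ n < x} := by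
              simp only [Set.mem_setOf_eq, pow_zero]; linarith
            have := Nat.sInf_le h0mem
            omega
      rw [this]
      exact (measurableSet_Ioc).compl
    · have : (fun x : ℝ => sInf {n : ℕ | lam ^ n < x}) ⁻¹' {j} = Wint lam j := by
        ext x
        simp only [Set.mem_preimage, Set.mem_singleton_iff]
        constructor
        · intro hx
          have hxI : x ∈ Set.Ioc (0:ℝ) 1 := by
            by_contra hxI
            rcases le_or_gt x 0 with hle | hgt
            · have : {n : ℕ | lam ^ n < x} = ∅ := by
                ext n; simp only [Set.mem_setOf_eq, Set.mem_empty_iff_false, iff_false, not_lt]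
                exact le_trans hle (pow_pos h0 n).le
              rw [this, Nat.sInf_empty] at hx; omega
            · have hx1 : 1 < x := by
                by_contra hle1
                exact hxI ⟨hgt, by linarith⟩
              have h0mem : (0:ℕ) ∈ {n : ℕ | lam ^ n < x} := by
                simp only [Set.mem_setOf_eq, pow_zero]; linarith
              have := Nat.sInf_le h0mem
              omega
          obtain ⟨m, hm1, hmw⟩ := exists_mem_W h0 h2 hxI
          rw [sInf_idx h0 h2 hm1 hmw] at hx
          subst hx; exact hmw
        · intro hx
          exact sInf_idx h0 h2 hj hx
      rw [this]
      exact measurableSet_Ioc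
  have hpow : Measurable (fun x : ℝ => lam ^ sInf {n : ℕ | lam ^ n < x}) :=
    (measurable_from_nat (f := fun n : ℕ => lam ^ n)).comp hN
  unfold Flam
  apply Measurable.ite
  · have : {x : ℝ | 0 < x ∧ x ≤ 1} = Set.Ioc (0:ℝ) 1 := by ext x; simp [Set.mem_Ioc]
    rw [this]; exact measurableSet_Ioc
  · apply Measurable.ite
    · exact hN (measurableSet_singleton 1)
    · exact (measurable_id.sub measurable_const).div measurable_const
    · exact (measurable_id.sub hpow).div measurable_const
  · exact measurable_id

lemma gb_le (h0 : 0 < lam) (h2 : lam < 1) {m i : ℕ} (hm : 1 ≤ m) (hi : 1 ≤ i)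
    (him : i ≤ m + 1) {b : ℝ} (hb : b ≤ lam ^ (m - 1)) :
    lam ^ i + cc lam i * b ≤ lam ^ (i - 1) := by
  rcases eq_or_lt_of_le hi with h | h
  · subst h
    have hcc : cc lam 1 = 1 - lam := by unfold cc; rw [if_pos rfl]
    have hb1 : b ≤ 1 := le_trans hb (pow_le_one₀ h0.le h2.le)
    rw [hcc]
    simp only [pow_one, Nat.sub_self, pow_zero]
    nlinarith
  · have hi2 : 2 ≤ i := h
    have hcc : cc lam i = lam * (1 - lam) := by unfold cc; rw [if_neg (by omega)]
    have hble : b ≤ lam ^ (i - 2) :=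
      le_trans hb (pow_le_pow_of_le_one h0.le h2.le (by omega))
    have e1 : lam ^ (i - 2) * lam = lam ^ (i - 1) := pow_sub_two_mul' h0 hi2
    have e2 : lam ^ (i - 1) * lam = lam ^ i := pow_sub_one_mul' h0 (by omega)
    rw [hcc]
    nlinarith [pow_pos h0 (i-2), pow_pos h0 (i-1), mul_le_mul_of_nonneg_left hble (by nlinarith : (0:ℝ) ≤ lam * (1 - lam))]

lemma sub_mem_W (h0 : 0 < lam) (h2 : lam < 1) {m i : ℕ} (hm : 1 ≤ m) (hi : 1 ≤ i)
    (him : i ≤ m + 1) {a b : ℝ} (ha : lam ^ m ≤ a) (hb : b ≤ lam ^ (m - 1)) :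
    Set.Ioc (lam ^ i + cc lam i * a) (lam ^ i + cc lam i * b) ⊆ Wint lam i := by
  intro x hx
  obtain ⟨hx1, hx2⟩ := hx
  have hapos : 0 < a := lt_of_lt_of_le (pow_pos h0 m) ha
  constructor
  · have : 0 < cc lam i * a := mul_pos (cc_pos h0 h2 i) hapos
    linarith
  · exact le_trans hx2 (gb_le h0 h2 hm hi him hb)

lemma Fpre (h0 : 0 < lam) (h2 : lam < 1) {m : ℕ} (hm : 1 ≤ m) {a b : ℝ}
    (ha : lam ^ m ≤ a) (hab : a ≤ b) (hb : b ≤ lam ^ (m - 1)) :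
    (Flam lam) ⁻¹' (Set.Ioc a b)
      = ⋃ i ∈ Finset.Icc 1 (m + 1), Set.Ioc (lam ^ i + cc lam i * a) (lam ^ i + cc lam i * b) := by
  have hapos : 0 < a := lt_of_lt_of_le (pow_pos h0 m) ha
  have hb1 : b ≤ 1 := le_trans hb (pow_le_one₀ h0.le h2.le)
  ext x
  simp only [Set.mem_preimage, Set.mem_iUnion, Finset.mem_Icc, exists_prop]
  constructor
  · intro hFx
    have hxI : x ∈ Set.Ioc (0:ℝ) 1 := by
      by_contra hxI
      rw [Flam_id hxI] at hFx
      exact hxI ⟨lt_trans hapos hFx.1, le_trans hFx.2 hb1⟩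
    obtain ⟨i, hi1, hiw⟩ := exists_mem_W h0 h2 hxI
    have hFeq : Flam lam x = (x - lam ^ i) / cc lam i := Flam_on h0 h2 hi1 hiw
    have him : i ≤ m + 1 := by
      by_contra hgt
      push_neg at hgt
      have hi2 : 2 ≤ i := by omega
      have h1 : Flam lam x ≤ lam ^ (i - 2) := Flam_le_pow h0 h2 hi2 hiw
      have h3 : lam ^ (i - 2) ≤ lam ^ m := pow_le_pow_of_le_one h0.le h2.le (by omega)
      have := hFx.1
      linarith
    refine ⟨i, ⟨hi1, him⟩, ?_, ?_⟩
    · have := hFx.1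
      rw [hFeq, lt_div_iff₀ (cc_pos h0 h2 i)] at this
      linarith
    · have := hFx.2
      rw [hFeq, div_le_iff₀ (cc_pos h0 h2 i)] at this
      linarith
  · rintro ⟨i, ⟨hi1, him⟩, hx1, hx2⟩
    have hiw : x ∈ Wint lam i := sub_mem_W h0 h2 hm hi1 him ha hb ⟨hx1, hx2⟩
    rw [Flam_on h0 h2 hi1 hiw]
    constructor
    · rw [lt_div_iff₀ (cc_pos h0 h2 i)]; linarith
    · rw [div_le_iff₀ (cc_pos h0 h2 i)]; linarith


noncomputable def pp (lam : ℝ) (k m : ℕ) : ℝ≥0∞ :=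
  volume ((Flam lam)^[k] ⁻¹' (Wint lam m) ∩ Set.Ioc 0 1)

noncomputable def DD (lam : ℝ) (m : ℕ) : ℝ := lam ^ (m - 1) * (1 - lam)

lemma DD_pos (h0 : 0 < lam) (h2 : lam < 1) (m : ℕ) : 0 < DD lam m :=
  mul_pos (pow_pos h0 _) (by linarith)

lemma DD_eq (h0 : 0 < lam) {m : ℕ} (hm : 1 ≤ m) :
    lam ^ (m - 1) - lam ^ m = DD lam m := by
  unfold DD
  rw [← pow_sub_one_mul' h0 hm]
  ring

lemma pp_zero (k : ℕ) : pp lam k 0 = 0 := by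
  unfold pp
  rw [Wzero]
  simp

lemma pp_le_one (k m : ℕ) : pp lam k m ≤ 1 := by
  unfold pp
  calc volume ((Flam lam)^[k] ⁻¹' (Wint lam m) ∩ Set.Ioc 0 1)
      ≤ volume (Set.Ioc (0:ℝ) 1) := measure_mono Set.inter_subset_right
    _ = 1 := by rw [Real.volume_Ioc]; norm_num

lemma onestep (h0 : 0 < lam) (h2 : lam < 1) {k : ℕ}
    (ih : ∀ m : ℕ, 1 ≤ m → ∀ a b : ℝ, lam ^ m ≤ a → a ≤ b → b ≤ lam ^ (m - 1) →
      volume ((Flam lam)^[k] ⁻¹' (Set.Ioc a b) ∩ Set.Ioc 0 1)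
        = ENNReal.ofReal ((b - a) / DD lam m) * pp lam k m)
    {m : ℕ} (hm : 1 ≤ m) {a b : ℝ} (ha : lam ^ m ≤ a) (hab : a ≤ b) (hb : b ≤ lam ^ (m - 1)) :
    volume ((Flam lam)^[k + 1] ⁻¹' (Set.Ioc a b) ∩ Set.Ioc 0 1)
      = ∑ i ∈ Finset.Icc 1 (m + 1), ENNReal.ofReal (cc lam i * (b - a) / DD lam i) * pp lam k i := by
  have hFm : Measurable (Flam lam) := measurable_Flam h0 h2
  have hpre : ((Flam lam)^[k + 1]) ⁻¹' (Set.Ioc a b)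
      = ⋃ i ∈ Finset.Icc 1 (m + 1),
          (Flam lam)^[k] ⁻¹' (Set.Ioc (lam ^ i + cc lam i * a) (lam ^ i + cc lam i * b)) := by
    rw [Function.iterate_succ']
    rw [Set.preimage_comp, Fpre h0 h2 hm ha hab hb, Set.preimage_iUnion₂]
  rw [hpre, Set.iUnion₂_inter]
  rw [measure_biUnion_finset]
  · apply Finset.sum_congr rfl
    intro i hi
    rw [Finset.mem_Icc] at hi
    have hi1 : 1 ≤ i := hi.1
    have him : i ≤ m + 1 := hi.2
    have hga : lam ^ i ≤ lam ^ i + cc lam i * a := by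
      have hapos : 0 < a := lt_of_lt_of_le (pow_pos h0 m) ha
      nlinarith [cc_pos h0 h2 i]
    have hgab : lam ^ i + cc lam i * a ≤ lam ^ i + cc lam i * b := by
      nlinarith [cc_pos h0 h2 i]
    have hgb : lam ^ i + cc lam i * b ≤ lam ^ (i - 1) := gb_le h0 h2 hm hi1 him hb
    rw [ih i hi1 _ _ hga hgab hgb]
    congr 2
    ring
  · intro i hi j hj hij
    apply Disjoint.mono Set.inter_subset_left Set.inter_subset_left
    apply Disjoint.preimage
    rw [Finset.mem_coe, Finset.mem_Icc] at hi hj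
    exact Disjoint.mono (sub_mem_W h0 h2 hm hi.1 hi.2 ha hb)
      (sub_mem_W h0 h2 hm hj.1 hj.2 ha hb) (Wdisj h0 h2 i j hij)
  · intro i hi
    exact ((hFm.iterate k) measurableSet_Ioc).inter measurableSet_Ioc

lemma master (h0 : 0 < lam) (h2 : lam < 1) :
    ∀ k : ℕ, ∀ m : ℕ, 1 ≤ m → ∀ a b : ℝ, lam ^ m ≤ a → a ≤ b → b ≤ lam ^ (m - 1) →
      volume ((Flam lam)^[k] ⁻¹' (Set.Ioc a b) ∩ Set.Ioc 0 1)
        = ENNReal.ofReal ((b - a) / DD lam m) * pp lam k m := by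
  intro k
  induction k with
  | zero =>
    intro m hm a b ha hab hb
    have hsub : Set.Ioc a b ⊆ Set.Ioc (0:ℝ) 1 := by
      intro x hx
      constructor
      · exact lt_of_lt_of_le (lt_of_lt_of_le (pow_pos h0 m) ha) hx.1.le
      · exact le_trans hx.2 (le_trans hb (pow_le_one₀ h0.le h2.le))
    have hW : pp lam 0 m = ENNReal.ofReal (DD lam m) := by
      unfold pp
      simp only [Function.iterate_zero, Set.preimage_id]
      rw [Set.inter_eq_self_of_subset_left (Wsub h0 h2 hm)]
      unfold Wint
      rw [Real.volume_Ioc, DD_eq h0 hm]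
    simp only [Function.iterate_zero, Set.preimage_id]
    rw [Set.inter_eq_self_of_subset_left hsub, Real.volume_Ioc, hW]
    rw [← ENNReal.ofReal_mul (div_nonneg (by linarith) (DD_pos h0 h2 m).le)]
    congr 1
    rw [div_mul_cancel₀ _ (ne_of_gt (DD_pos h0 h2 m))]
  | succ k ih =>
    intro m hm a b ha hab hb
    rw [onestep h0 h2 ih hm ha hab hb]
    have hmend : lam ^ m ≤ lam ^ (m - 1) := pow_le_pow_of_le_one h0.le h2.le (by omega)
    have hWm : Wint lam m = Set.Ioc (lam ^ m) (lam ^ (m - 1)) := rfl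
    have hpp : pp lam (k + 1) m
        = ∑ i ∈ Finset.Icc 1 (m + 1),
            ENNReal.ofReal (cc lam i * (lam ^ (m - 1) - lam ^ m) / DD lam i) * pp lam k i := by
      unfold pp
      rw [hWm]
      exact onestep h0 h2 ih hm le_rfl hmend le_rfl
    rw [hpp, Finset.mul_sum]
    apply Finset.sum_congr rfl
    intro i hi
    rw [Finset.mem_Icc] at hi
    rw [← mul_assoc, ← ENNReal.ofReal_mul (div_nonneg (by linarith) (DD_pos h0 h2 m).le)]
    congr 2
    rw [DD_eq h0 hm]
    have hDm := DD_pos h0 h2 m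
    have hDi := DD_pos h0 h2 i
    field_simp

lemma kernel_rec (h0 : 0 < lam) (h2 : lam < 1) (k : ℕ) {m : ℕ} (hm : 1 ≤ m) :
    pp lam (k + 1) m
      = ∑ i ∈ Finset.Icc 1 (m + 1),
          ENNReal.ofReal (cc lam i * (lam ^ m / lam ^ i)) * pp lam k i := by
  have hmend : lam ^ m ≤ lam ^ (m - 1) := pow_le_pow_of_le_one h0.le h2.le (by omega)
  have hexp : pp lam (k + 1) m
      = ∑ i ∈ Finset.Icc 1 (m + 1),
          ENNReal.ofReal (cc lam i * (lam ^ (m - 1) - lam ^ m) / DD lam i) * pp lam k i := by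
    unfold pp
    exact onestep h0 h2 (master h0 h2 k) hm le_rfl hmend le_rfl
  rw [hexp]
  apply Finset.sum_congr rfl
  intro i hi
  rw [Finset.mem_Icc] at hi
  congr 1
  rw [DD_eq h0 hm]
  unfold DD
  have hgap : (0:ℝ) < 1 - lam := by linarith
  have e1 : lam ^ (m - 1) * lam = lam ^ m := pow_sub_one_mul' h0 hm
  have e2 : lam ^ (i - 1) * lam = lam ^ i := pow_sub_one_mul' h0 hi.1
  have hratio : (lam ^ (m - 1) * (1 - lam)) / (lam ^ (i - 1) * (1 - lam))
      = lam ^ m / lam ^ i := by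
    rw [div_eq_div_iff (by positivity) (by positivity), ← e1, ← e2]
    ring
  rw [mul_div_assoc, hratio]

lemma mass (h0 : 0 < lam) (h2 : lam < 1) (k : ℕ) : ∑' m : ℕ, pp lam k m = 1 := by
  have hFm : Measurable (Flam lam) := measurable_Flam h0 h2
  have hdisj : Pairwise fun m n : ℕ =>
      Disjoint ((Flam lam)^[k] ⁻¹' (Wint lam m) ∩ Set.Ioc 0 1)
        ((Flam lam)^[k] ⁻¹' (Wint lam n) ∩ Set.Ioc 0 1) := by
    intro m n hmn
    apply Disjoint.mono Set.inter_subset_left Set.inter_subset_left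
    exact Disjoint.preimage _ (Wdisj h0 h2 m n hmn)
  have hmeas : ∀ m : ℕ, MeasurableSet ((Flam lam)^[k] ⁻¹' (Wint lam m) ∩ Set.Ioc (0:ℝ) 1) := by
    intro m
    exact ((hFm.iterate k) measurableSet_Ioc).inter measurableSet_Ioc
  have := measure_iUnion (μ := volume) hdisj hmeas
  unfold pp
  rw [← this]
  have : (⋃ m : ℕ, (Flam lam)^[k] ⁻¹' (Wint lam m) ∩ Set.Ioc (0:ℝ) 1) = Set.Ioc (0:ℝ) 1 := by
    rw [← Set.iUnion_inter, ← Set.preimage_iUnion, Wunion h0 h2]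
    apply Set.Subset.antisymm Set.inter_subset_right
    intro x hx
    exact ⟨Flam_iter_mem_I h0 h2 hx k, hx⟩
  rw [this, Real.volume_Ioc]
  norm_num


/-! ### series infrastructure -/

lemma tsum_shift {f : ℕ → ℝ≥0∞} (a : ℕ) (h : ∀ m, m < a → f m = 0) :
    ∑' m, f m = ∑' j, f (a + j) := by
  induction a with
  | zero => simp
  | succ a ih =>
    rw [ih (fun m hm => h m (by omega))]
    rw [tsum_eq_zero_add' ENNReal.summable]
    rw [show a + 0 = a by omega, h a (by omega), zero_add]
    exact tsum_congr fun j => by rw [show a + (j + 1) = a + 1 + j by omega]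

lemma real_SG0 : ∑' n : ℕ, (1/2 : ℝ) ^ n = 2 := by
  rw [tsum_geometric_of_lt_one (by norm_num) (by norm_num)]
  norm_num

lemma real_SG1 : ∑' n : ℕ, (n : ℝ) * (1/2) ^ n = 2 := by
  have := tsum_coe_mul_geometric_of_norm_lt_one (𝕜 := ℝ) (r := 1/2) (by norm_num)
  rw [this]; norm_num

lemma sum_SG0 : Summable (fun n : ℕ => (1/2 : ℝ) ^ n) :=
  summable_geometric_of_lt_one (by norm_num) (by norm_num)

lemma sum_SG1 : Summable (fun n : ℕ => (n : ℝ) * (1/2) ^ n) := by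
  simpa using summable_pow_mul_geometric_of_norm_lt_one (R := ℝ) 1 (r := 1/2) (by norm_num)

lemma sum_SG2 : Summable (fun n : ℕ => (n : ℝ) ^ 2 * (1/2) ^ n) := by
  simpa using summable_pow_mul_geometric_of_norm_lt_one (R := ℝ) 2 (r := 1/2) (by norm_num)

lemma real_SG2 : ∑' n : ℕ, (n : ℝ) ^ 2 * (1/2) ^ n = 6 := by
  set S := ∑' n : ℕ, (n : ℝ) ^ 2 * (1/2) ^ n with hS
  have hshift := Summable.tsum_eq_zero_add sum_SG2
  have hfun : ∀ n : ℕ, ((n + 1 : ℕ) : ℝ) ^ 2 * (1/2) ^ (n + 1)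
      = (1/2) * ((n : ℝ) ^ 2 * (1/2) ^ n) + (n : ℝ) * (1/2) ^ n + (1/2) * (1/2) ^ n := by
    intro n
    push_cast
    ring
  rw [tsum_congr hfun] at hshift
  rw [Summable.tsum_add (((sum_SG2.mul_left _).add sum_SG1)) (sum_SG0.mul_left _)] at hshift
  rw [Summable.tsum_add (sum_SG2.mul_left _) sum_SG1] at hshift
  rw [tsum_mul_left, tsum_mul_left, real_SG1, real_SG0, ← hS] at hshift
  simp only [Nat.cast_zero, ne_eq, OfNat.ofNat_ne_zero, not_false_eq_true, zero_pow,
    zero_mul, zero_add, pow_zero] at hshift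
  linarith

lemma ofReal_half : ENNReal.ofReal ((1:ℝ)/2) = 2⁻¹ := by
  rw [ENNReal.ofReal_div_of_pos] <;> norm_num

lemma ofReal_half_pow (n : ℕ) : ENNReal.ofReal ((1/2 : ℝ) ^ n) = (2⁻¹ : ℝ≥0∞) ^ n := by
  rw [ENNReal.ofReal_pow (by norm_num), ofReal_half]

lemma ESG0 : ∑' n : ℕ, ((2:ℝ≥0∞)⁻¹) ^ n = 2 := by
  rw [ENNReal.tsum_geometric, ENNReal.one_sub_inv_two]
  norm_num

lemma ESG1 : ∑' n : ℕ, (n : ℝ≥0∞) * (2⁻¹) ^ n = 2 := by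
  have h := ENNReal.ofReal_tsum_of_nonneg (f := fun n : ℕ => (n : ℝ) * (1/2) ^ n)
    (fun n => by positivity) sum_SG1
  rw [real_SG1] at h
  have h2 : ∀ n : ℕ, ENNReal.ofReal ((n : ℝ) * (1/2) ^ n) = (n : ℝ≥0∞) * (2⁻¹) ^ n := by
    intro n
    rw [ENNReal.ofReal_mul (by positivity), ENNReal.ofReal_natCast, ofReal_half_pow]
  rw [tsum_congr h2] at h
  rw [← h]
  norm_num

lemma ESG2 : ∑' n : ℕ, (n : ℝ≥0∞) ^ 2 * (2⁻¹) ^ n = 6 := by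
  have h := ENNReal.ofReal_tsum_of_nonneg (f := fun n : ℕ => (n : ℝ) ^ 2 * (1/2) ^ n)
    (fun n => by positivity) sum_SG2
  rw [real_SG2] at h
  have h2 : ∀ n : ℕ, ENNReal.ofReal ((n : ℝ) ^ 2 * (1/2) ^ n) = (n : ℝ≥0∞) ^ 2 * (2⁻¹) ^ n := by
    intro n
    rw [ENNReal.ofReal_mul (by positivity), ofReal_half_pow, ENNReal.ofReal_pow (by positivity),
      ENNReal.ofReal_natCast]
  rw [tsum_congr h2] at h
  rw [← h]
  norm_num


/-! ### kernel in tsum form -/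

noncomputable def Kc (lam : ℝ) (i m : ℕ) : ℝ≥0∞ :=
  if 1 ≤ m ∧ 1 ≤ i ∧ i ≤ m + 1 then ENNReal.ofReal (cc lam i * (lam ^ m / lam ^ i)) else 0

lemma swap_sum (h0 : 0 < lam) (h2 : lam < 1) (w : ℕ → ℝ≥0∞) (k : ℕ) :
    ∑' m, w m * pp lam (k + 1) m = ∑' i, (∑' m, Kc lam i m * w m) * pp lam k i := by
  have hm0 : ∀ m, w m * pp lam (k + 1) m = ∑' i, Kc lam i m * w m * pp lam k i := by
    intro m
    rcases Nat.eq_zero_or_pos m with hm | hm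
    · subst hm
      rw [pp_zero, mul_zero]
      symm
      apply ENNReal.summable.tsum_eq_zero_iff |>.mpr
      intro i
      have : Kc lam i 0 = 0 := by unfold Kc; rw [if_neg (by omega)]
      rw [this, zero_mul, zero_mul]
    · rw [kernel_rec h0 h2 k hm, Finset.mul_sum]
      rw [tsum_eq_sum (s := Finset.Icc 1 (m + 1))
        (fun i hi => by
          have : Kc lam i m = 0 := by
            unfold Kc
            rw [Finset.mem_Icc] at hi
            rw [if_neg (by omega)]
          rw [this, zero_mul, zero_mul])]
      apply Finset.sum_congr rfl
      intro i hi
      rw [Finset.mem_Icc] at hi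
      have : Kc lam i m = ENNReal.ofReal (cc lam i * (lam ^ m / lam ^ i)) := by
        unfold Kc; rw [if_pos (by omega)]
      rw [this]
      ring
  rw [tsum_congr hm0, ENNReal.tsum_comm]
  exact tsum_congr fun i => ENNReal.tsum_mul_right

lemma inner_gen (h0 : 0 < lam) (h2 : lam < 1) (w : ℕ → ℝ≥0∞) {i : ℕ} (hi : 1 ≤ i) :
    ∑' m, Kc lam i m * w m
      = ∑' j, ENNReal.ofReal ((1 - lam) * lam ^ j) * w (max (i - 1) 1 + j) := by
  set a := max (i - 1) 1 with ha
  have hshift : ∑' m, Kc lam i m * w m = ∑' j, Kc lam i (a + j) * w (a + j) := by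
    apply tsum_shift
    intro m hm
    have : Kc lam i m = 0 := by
      unfold Kc
      rw [if_neg (by omega)]
    rw [this, zero_mul]
  rw [hshift]
  apply tsum_congr
  intro j
  congr 1
  have hcond : Kc lam i (a + j) = ENNReal.ofReal (cc lam i * (lam ^ (a + j) / lam ^ i)) := by
    unfold Kc
    rw [if_pos (by omega)]
  rw [hcond]
  congr 1
  rcases eq_or_lt_of_le hi with h | h
  · subst h
    have hae : a = 1 := by omega
    rw [hae]
    unfold cc
    rw [if_pos rfl]
    rw [pow_add, pow_one]
    field_simp
  · have hi2 : 2 ≤ i := h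
    have hae : a = i - 1 := by omega
    rw [hae]
    unfold cc
    rw [if_neg (by omega)]
    rw [pow_add]
    have e2 : lam ^ (i - 1) * lam = lam ^ i := pow_sub_one_mul' h0 (by omega)
    rw [← e2]
    have hp : (0:ℝ) < lam ^ (i - 1) := pow_pos h0 _
    field_simp

/-! ### Case A : lam = 1/2 -/

section CaseA

lemma h0A : (0:ℝ) < 1/2 := by norm_num
lemma h2A : (1/2:ℝ) < 1 := by norm_num

lemma whalf (j : ℕ) :
    ENNReal.ofReal ((1 - (1/2:ℝ)) * (1/2) ^ j) = (2⁻¹ : ℝ≥0∞) ^ (j + 1) := by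
  rw [show (1 - (1/2:ℝ)) * (1/2) ^ j = (1/2) ^ (j+1) by rw [pow_succ]; ring]
  exact ofReal_half_pow (j + 1)

lemma WA1 (a : ℕ) :
    ∑' j : ℕ, (2⁻¹ : ℝ≥0∞) ^ (j + 1) * ((a + j : ℕ) : ℝ≥0∞) = (a : ℝ≥0∞) + 1 := by
  have hterm : ∀ j : ℕ, (2⁻¹ : ℝ≥0∞) ^ (j + 1) * ((a + j : ℕ) : ℝ≥0∞)
      = 2⁻¹ * ((a : ℝ≥0∞) * (2⁻¹) ^ j) + 2⁻¹ * ((j : ℝ≥0∞) * (2⁻¹) ^ j) := by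
    intro j
    push_cast
    rw [pow_succ]
    ring
  rw [tsum_congr hterm, ENNReal.tsum_add, ENNReal.tsum_mul_left, ENNReal.tsum_mul_left,
    ENNReal.tsum_mul_left, ESG0, ESG1]
  have h21 : (2⁻¹ : ℝ≥0∞) * 2 = 1 := ENNReal.inv_mul_cancel (by norm_num) (by norm_num)
  calc 2⁻¹ * ((a:ℝ≥0∞) * 2) + 2⁻¹ * 2 = (2⁻¹ * 2) * (a:ℝ≥0∞) + 2⁻¹ * 2 := by ring
  _ = (a:ℝ≥0∞) + 1 := by rw [h21, one_mul]

lemma WA2 (a : ℕ) :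
    ∑' j : ℕ, (2⁻¹ : ℝ≥0∞) ^ (j + 1) * ((a + j : ℕ) : ℝ≥0∞) ^ 2
      = (a : ℝ≥0∞) ^ 2 + 2 * (a : ℝ≥0∞) + 3 := by
  have hterm : ∀ j : ℕ, (2⁻¹ : ℝ≥0∞) ^ (j + 1) * ((a + j : ℕ) : ℝ≥0∞) ^ 2
      = 2⁻¹ * ((a : ℝ≥0∞) ^ 2 * (2⁻¹) ^ j) + (2 * (a : ℝ≥0∞)) * (2⁻¹ * ((j : ℝ≥0∞) * (2⁻¹) ^ j))
        + 2⁻¹ * ((j : ℝ≥0∞) ^ 2 * (2⁻¹) ^ j) := by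
    intro j
    push_cast
    rw [pow_succ]
    ring
  rw [tsum_congr hterm, ENNReal.tsum_add, ENNReal.tsum_add, ENNReal.tsum_mul_left,
    ENNReal.tsum_mul_left, ENNReal.tsum_mul_left, ENNReal.tsum_mul_left, ENNReal.tsum_mul_left,
    ESG0, ESG1, ESG2]
  have h21 : (2⁻¹ : ℝ≥0∞) * 2 = 1 := ENNReal.inv_mul_cancel (by norm_num) (by norm_num)
  have h26 : (2⁻¹ : ℝ≥0∞) * 6 = 3 := by
    rw [show (6:ℝ≥0∞) = 2 * 3 by norm_num, ← mul_assoc, h21, one_mul]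
  calc 2⁻¹ * ((a:ℝ≥0∞) ^ 2 * 2) + 2 * (a:ℝ≥0∞) * (2⁻¹ * 2) + 2⁻¹ * 6
      = (2⁻¹ * 2) * (a:ℝ≥0∞) ^ 2 + 2 * (a:ℝ≥0∞) * (2⁻¹ * 2) + 2⁻¹ * 6 := by ring
  _ = (a:ℝ≥0∞) ^ 2 + 2 * (a:ℝ≥0∞) + 3 := by rw [h21, h26, one_mul, mul_one]

lemma innerA1 (i : ℕ) :
    ∑' m, Kc (1/2:ℝ) i m * (m : ℝ≥0∞)
      = (i : ℝ≥0∞) + (if i = 1 then 1 else 0) := by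
  rcases Nat.eq_zero_or_pos i with hi | hi
  · subst hi
    simp only [Nat.cast_zero, zero_add, if_neg (by omega : ¬(0:ℕ) = 1)]
    apply ENNReal.summable.tsum_eq_zero_iff |>.mpr
    intro m
    have : Kc (1/2:ℝ) 0 m = 0 := by unfold Kc; rw [if_neg (by omega)]
    rw [this, zero_mul]
  · rw [inner_gen h0A h2A _ hi]
    rw [tsum_congr (fun j => by rw [whalf j])]
    rw [WA1]
    rcases eq_or_lt_of_le (show 1 ≤ i from hi) with h | h
    · rw [← h]
      norm_num
    · have hi2 : 2 ≤ i := h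
      rw [if_neg (by omega), add_zero]
      have hmax : max (i - 1) 1 = i - 1 := by omega
      rw [hmax]
      have hieq : (i : ℝ≥0∞) = ((i - 1 : ℕ) : ℝ≥0∞) + 1 := by
        rw [← Nat.cast_add_one]
        congr 1
        omega
      rw [hieq]

lemma innerA2 (i : ℕ) :
    ∑' m, Kc (1/2:ℝ) i m * (m : ℝ≥0∞) ^ 2
      = (i : ℝ≥0∞) ^ 2 * (if 1 ≤ i then 1 else 0) + 2 * (if 1 ≤ i then 1 else 0)
        + (if i = 1 then 3 else 0) := by
  rcases Nat.eq_zero_or_pos i with hi | hi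
  · subst hi
    simp only [if_neg (by omega : ¬(1:ℕ) ≤ 0), if_neg (by omega : ¬(0:ℕ) = 1)]
    simp only [mul_zero, add_zero, zero_add]
    apply ENNReal.summable.tsum_eq_zero_iff |>.mpr
    intro m
    have : Kc (1/2:ℝ) 0 m = 0 := by unfold Kc; rw [if_neg (by omega)]
    rw [this, zero_mul]
  · rw [inner_gen h0A h2A _ hi]
    rw [tsum_congr (fun j => by rw [whalf j])]
    rw [WA2]
    simp only [if_pos (show 1 ≤ i by omega), mul_one]
    rcases eq_or_lt_of_le (show 1 ≤ i from hi) with h | h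
    · rw [← h]
      norm_num
    · have hi2 : 2 ≤ i := h
      rw [if_neg (by omega), add_zero]
      have hmax : max (i - 1) 1 = i - 1 := by omega
      rw [hmax]
      have hieq : (i : ℝ≥0∞) = ((i - 1 : ℕ) : ℝ≥0∞) + 1 := by
        rw [← Nat.cast_add_one]
        congr 1
        omega
      rw [hieq]
      ring


noncomputable def AA (k : ℕ) : ℝ≥0∞ := ∑' m : ℕ, (m : ℝ≥0∞) * pp (1/2:ℝ) k m
noncomputable def BB (k : ℕ) : ℝ≥0∞ := ∑' m : ℕ, (m : ℝ≥0∞) ^ 2 * pp (1/2:ℝ) k m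

lemma AA_rec (k : ℕ) : AA (k + 1) = AA k + pp (1/2:ℝ) k 1 := by
  unfold AA
  rw [swap_sum h0A h2A (fun m => (m : ℝ≥0∞)) k]
  rw [tsum_congr (fun i => by rw [innerA1 i])]
  have hsplit : ∀ i : ℕ, (((i:ℝ≥0∞) + if i = 1 then 1 else 0)) * pp (1/2:ℝ) k i
      = (i:ℝ≥0∞) * pp (1/2:ℝ) k i + (if i = 1 then pp (1/2:ℝ) k 1 else 0) := by
    intro i
    by_cases h : i = 1
    · subst h; simp [add_mul]
    · simp [h]
  rw [tsum_congr hsplit, ENNReal.tsum_add, tsum_ite_eq]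

lemma BB_rec (k : ℕ) : BB (k + 1) = BB k + 2 + 3 * pp (1/2:ℝ) k 1 := by
  unfold BB
  rw [swap_sum h0A h2A (fun m => (m : ℝ≥0∞) ^ 2) k]
  rw [tsum_congr (fun i => by rw [innerA2 i])]
  have hsplit : ∀ i : ℕ, ((i:ℝ≥0∞) ^ 2 * (if 1 ≤ i then 1 else 0) + 2 * (if 1 ≤ i then 1 else 0)
        + (if i = 1 then 3 else 0)) * pp (1/2:ℝ) k i
      = (i:ℝ≥0∞) ^ 2 * pp (1/2:ℝ) k i + 2 * pp (1/2:ℝ) k i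
        + (if i = 1 then 3 * pp (1/2:ℝ) k 1 else 0) := by
    intro i
    match i with
    | 0 => simp [pp_zero]
    | 1 => simp [add_mul]
    | (n+2) =>
      rw [if_pos (by omega), if_neg (by omega), if_neg (by omega)]
      simp [add_mul]
  rw [tsum_congr hsplit, ENNReal.tsum_add, ENNReal.tsum_add, tsum_ite_eq,
    ENNReal.tsum_mul_left, mass h0A h2A k, mul_one]

lemma pp0val {m : ℕ} (hm : 1 ≤ m) : pp (1/2:ℝ) 0 m = (2⁻¹ : ℝ≥0∞) ^ m := by
  unfold pp
  simp only [Function.iterate_zero, Set.preimage_id]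
  rw [Set.inter_eq_self_of_subset_left (Wsub h0A h2A hm)]
  unfold Wint
  rw [Real.volume_Ioc]
  have e1 : (1/2:ℝ) ^ (m - 1) * (1/2) = (1/2) ^ m := pow_sub_one_mul' h0A hm
  rw [show (1/2:ℝ) ^ (m-1) - (1/2) ^ m = (1/2) ^ m by linarith]
  exact ofReal_half_pow m

lemma BB_zero : BB 0 = 6 := by
  unfold BB
  have this : ∀ m : ℕ, (m : ℝ≥0∞) ^ 2 * pp (1/2:ℝ) 0 m = (m : ℝ≥0∞) ^ 2 * (2⁻¹) ^ m := by
    intro m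
    rcases Nat.eq_zero_or_pos m with hm | hm
    · subst hm; simp [pp_zero]
    · rw [pp0val hm]
  rw [tsum_congr this, ESG2]

lemma BB_bound (K : ℕ) : BB K ≤ 6 + 5 * (K : ℝ≥0∞) := by
  induction K with
  | zero => simp [BB_zero]
  | succ K ih =>
    rw [BB_rec]
    calc BB K + 2 + 3 * pp (1/2:ℝ) K 1 ≤ (6 + 5 * (K : ℝ≥0∞)) + 2 + 3 * 1 := by
          gcongr
          exact pp_le_one K 1
    _ = 6 + 5 * ((K:ℝ≥0∞) + 1) := by ring
    _ = 6 + 5 * (((K+1 : ℕ)):ℝ≥0∞) := by rw [Nat.cast_add_one]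

lemma AA_split (T : ℕ) (hT : 1 ≤ T) (K : ℕ) :
    AA K ≤ (T : ℝ≥0∞) + (T : ℝ≥0∞)⁻¹ * BB K := by
  have hTne : (T : ℝ≥0∞) ≠ 0 := by
    simp only [ne_eq, Nat.cast_eq_zero]; omega
  have hTnt : (T : ℝ≥0∞) ≠ ⊤ := ENNReal.natCast_ne_top T
  have ptw : ∀ m : ℕ, (m : ℝ≥0∞) ≤ (T : ℝ≥0∞) + (T : ℝ≥0∞)⁻¹ * (m : ℝ≥0∞) ^ 2 := by
    intro m
    rcases le_or_gt m T with h | h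
    · calc (m : ℝ≥0∞) ≤ (T : ℝ≥0∞) := by exact_mod_cast h
      _ ≤ _ := self_le_add_right _ _
    · have h1 : (m : ℝ≥0∞) = (T : ℝ≥0∞)⁻¹ * ((T : ℝ≥0∞) * m) := by
        rw [← mul_assoc, ENNReal.inv_mul_cancel hTne hTnt, one_mul]
      have h2 : (T : ℝ≥0∞) * m ≤ (m : ℝ≥0∞) * m :=
        mul_le_mul_left (by exact_mod_cast h.le) _
      calc (m : ℝ≥0∞) = (T : ℝ≥0∞)⁻¹ * ((T : ℝ≥0∞) * m) := h1
      _ ≤ (T : ℝ≥0∞)⁻¹ * ((m : ℝ≥0∞) * m) := mul_le_mul_right h2 _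
      _ = (T : ℝ≥0∞)⁻¹ * (m : ℝ≥0∞) ^ 2 := by rw [sq]
      _ ≤ _ := le_add_self
  unfold AA BB
  calc ∑' m : ℕ, (m : ℝ≥0∞) * pp (1/2:ℝ) K m
      ≤ ∑' m : ℕ, ((T : ℝ≥0∞) + (T : ℝ≥0∞)⁻¹ * (m : ℝ≥0∞) ^ 2) * pp (1/2:ℝ) K m :=
        ENNReal.tsum_le_tsum (fun m => mul_le_mul_left (ptw m) _)
  _ = ∑' m : ℕ, ((T : ℝ≥0∞) * pp (1/2:ℝ) K m
        + (T : ℝ≥0∞)⁻¹ * ((m : ℝ≥0∞) ^ 2 * pp (1/2:ℝ) K m)) := by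
        apply tsum_congr; intro m; ring
  _ = (T : ℝ≥0∞) * (∑' m : ℕ, pp (1/2:ℝ) K m)
        + (T : ℝ≥0∞)⁻¹ * (∑' m : ℕ, (m : ℝ≥0∞) ^ 2 * pp (1/2:ℝ) K m) := by
        rw [ENNReal.tsum_add, ENNReal.tsum_mul_left, ENNReal.tsum_mul_left]
  _ = (T : ℝ≥0∞) + (T : ℝ≥0∞)⁻¹ * (∑' m : ℕ, (m : ℝ≥0∞) ^ 2 * pp (1/2:ℝ) K m) := by
        rw [mass h0A h2A K, mul_one]

lemma AA_partial (K0 K : ℕ) :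
    AA K0 + ∑ k ∈ Finset.Ico K0 (K0 + K), pp (1/2:ℝ) k 1 = AA (K0 + K) := by
  induction K with
  | zero => simp
  | succ K ih =>
    rw [show K0 + (K + 1) = (K0 + K) + 1 by omega, AA_rec, ← ih,
      Finset.sum_Ico_succ_top (by omega : K0 ≤ K0 + K)]
    ring


lemma caseA_small (ε : ℝ) (hε : 0 < ε) (K0 : ℕ) :
    ∃ k, K0 ≤ k ∧ pp (1/2:ℝ) k 1 < ENNReal.ofReal ε := by
  by_contra hcon
  push_neg at hcon
  obtain ⟨T, hT⟩ := exists_nat_gt (max (10 / ε) 1)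
  have hT10 : 10 / ε < (T:ℝ) := lt_of_le_of_lt (le_max_left _ _) hT
  have hT1R : (1:ℝ) < T := lt_of_le_of_lt (le_max_right _ _) hT
  have hT1 : 1 ≤ T := by exact_mod_cast hT1R.le
  have hTpos : (0:ℝ) < T := by linarith
  obtain ⟨K, hK⟩ := exists_nat_gt (2 * ((T:ℝ) + 6 + 5 * K0) / ε)
  have hlow : (K : ℝ≥0∞) * ENNReal.ofReal ε ≤ AA (K0 + K) := by
    have hsum : (K : ℝ≥0∞) * ENNReal.ofReal ε
        ≤ ∑ k ∈ Finset.Ico K0 (K0 + K), pp (1/2:ℝ) k 1 := by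
      have hcard : (Finset.Ico K0 (K0 + K)).card = K := by rw [Nat.card_Ico]; omega
      have h := Finset.card_nsmul_le_sum (Finset.Ico K0 (K0+K)) (fun k => pp (1/2:ℝ) k 1)
        (ENNReal.ofReal ε) (fun k hk => hcon k (Finset.mem_Ico.mp hk).1)
      rwa [hcard, nsmul_eq_mul] at h
    calc (K : ℝ≥0∞) * ENNReal.ofReal ε
        ≤ ∑ k ∈ Finset.Ico K0 (K0+K), pp (1/2:ℝ) k 1 := hsum
    _ ≤ AA K0 + ∑ k ∈ Finset.Ico K0 (K0+K), pp (1/2:ℝ) k 1 := le_add_self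
    _ = AA (K0 + K) := AA_partial K0 K
  have hup : AA (K0 + K) ≤ (T:ℝ≥0∞) + (T:ℝ≥0∞)⁻¹ * (6 + 5 * ((K0+K : ℕ):ℝ≥0∞)) := by
    calc AA (K0+K) ≤ (T:ℝ≥0∞) + (T:ℝ≥0∞)⁻¹ * BB (K0+K) := AA_split T hT1 _
    _ ≤ _ := by gcongr; exact BB_bound _
  have hco := le_trans hlow hup
  have hR : (T:ℝ≥0∞) + (T:ℝ≥0∞)⁻¹ * (6 + 5 * ((K0+K:ℕ):ℝ≥0∞))
      = ENNReal.ofReal ((T:ℝ) + ((T:ℝ))⁻¹ * (6 + 5 * ((K0+K:ℕ):ℝ))) := by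
    rw [ENNReal.ofReal_add (by positivity) (by positivity),
      ENNReal.ofReal_mul (by positivity),
      ENNReal.ofReal_add (by norm_num) (by positivity),
      ENNReal.ofReal_mul (by norm_num),
      ENNReal.ofReal_inv_of_pos hTpos,
      ENNReal.ofReal_natCast, ENNReal.ofReal_natCast]
    norm_num
  have hL : (K:ℝ≥0∞) * ENNReal.ofReal ε = ENNReal.ofReal ((K:ℝ) * ε) := by
    rw [ENNReal.ofReal_mul (by positivity), ENNReal.ofReal_natCast]
  rw [hL, hR] at hco
  have hreal : (K:ℝ) * ε ≤ (T:ℝ) + ((T:ℝ))⁻¹ * (6 + 5 * ((K0+K:ℕ):ℝ)) :=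
    (ENNReal.ofReal_le_ofReal_iff (by positivity)).mp hco
  have hcast : ((K0+K:ℕ):ℝ) = (K0:ℝ) + K := by push_cast; ring
  rw [hcast] at hreal
  have h10 : 10 < (T:ℝ) * ε := by
    rw [div_lt_iff₀ hε] at hT10; linarith
  have hTinv5 : ((T:ℝ))⁻¹ * 5 ≤ ε / 2 := by
    rw [inv_mul_le_iff₀ hTpos]
    nlinarith
  have hTinv1 : ((T:ℝ))⁻¹ ≤ 1 := by
    rw [inv_le_one_iff₀]; right; linarith
  have hexp : ((T:ℝ))⁻¹ * (6 + 5 * ((K0:ℝ) + K))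
      = ((T:ℝ))⁻¹ * (6 + 5*(K0:ℝ)) + (((T:ℝ))⁻¹ * 5) * K := by ring
  have hb1 : ((T:ℝ))⁻¹ * (6 + 5*(K0:ℝ)) ≤ 6 + 5*(K0:ℝ) := by
    nlinarith [hTinv1, sq_nonneg ((T:ℝ))⁻¹]
  have hb2 : (((T:ℝ))⁻¹ * 5) * K ≤ (ε/2) * K := by
    apply mul_le_mul_of_nonneg_right hTinv5 (by positivity)
  have hKe : (K:ℝ) * ε ≤ (T:ℝ) + (6 + 5*(K0:ℝ)) + (ε/2) * K := by
    rw [hexp] at hreal; linarith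
  have hKbig : 2 * ((T:ℝ) + 6 + 5 * K0) / ε < K := hK
  rw [div_lt_iff₀ hε] at hKbig
  nlinarith


lemma pdesc (h0 : 0 < lam) (h2 : lam < 1) (k : ℕ) {m : ℕ} (hm : 1 ≤ m) :
    ENNReal.ofReal (1 - lam) * pp lam k (m + 1) ≤ pp lam (k + 1) m := by
  rw [kernel_rec h0 h2 k hm]
  have hmem : m + 1 ∈ Finset.Icc 1 (m + 1) := Finset.mem_Icc.mpr ⟨by omega, le_rfl⟩
  have hval : ENNReal.ofReal (cc lam (m+1) * (lam ^ m / lam ^ (m+1)))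
      = ENNReal.ofReal (1 - lam) := by
    congr 1
    unfold cc
    rw [if_neg (by omega), pow_succ]
    have : (0:ℝ) < lam ^ m := pow_pos h0 m
    field_simp
  calc ENNReal.ofReal (1 - lam) * pp lam k (m + 1)
      = ENNReal.ofReal (cc lam (m+1) * (lam ^ m / lam ^ (m+1))) * pp lam k (m+1) := by
        rw [hval]
  _ ≤ _ := Finset.single_le_sum (f := fun i => ENNReal.ofReal (cc lam i * (lam ^ m / lam ^ i)) * pp lam k i) (fun i _ => zero_le) hmem

lemma pchain (k n : ℕ) (hn : 1 ≤ n) :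
    pp (1/2:ℝ) k n ≤ 2 ^ (n - 1) * pp (1/2:ℝ) (k + (n - 1)) 1 := by
  induction n generalizing k with
  | zero => omega
  | succ n ih =>
    rcases Nat.eq_zero_or_pos n with hn0 | hn0
    · subst hn0
      simp
    · have hstep : pp (1/2:ℝ) k (n + 1) ≤ 2 * pp (1/2:ℝ) (k + 1) n := by
        have h := pdesc h0A h2A k hn0
        rw [show (1 - (1/2:ℝ)) = 1/2 by norm_num, ofReal_half] at h
        have h2 := mul_le_mul_right h (2 : ℝ≥0∞)
        rwa [← mul_assoc, show (2:ℝ≥0∞) * 2⁻¹ = 1 by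
          rw [ENNReal.mul_inv_cancel (by norm_num) (by norm_num)], one_mul] at h2
      calc pp (1/2:ℝ) k (n + 1) ≤ 2 * pp (1/2:ℝ) (k + 1) n := hstep
      _ ≤ 2 * (2 ^ (n - 1) * pp (1/2:ℝ) ((k + 1) + (n - 1)) 1) :=
          mul_le_mul_right (ih (k+1) hn0) _
      _ = 2 ^ ((n+1) - 1) * pp (1/2:ℝ) (k + ((n+1) - 1)) 1 := by
          rw [← mul_assoc]
          congr 2
          · rw [← pow_succ']
            congr 1
            omega
          · omega

lemma caseA_final {n : ℕ} (hn : 1 ≤ n) (ε : ℝ) (hε : 0 < ε) :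
    ∃ k, pp (1/2:ℝ) k n < ENNReal.ofReal ε := by
  have hpow : (0:ℝ) < 2 ^ (n-1) := by positivity
  obtain ⟨k', hk'ge, hsmall⟩ := caseA_small (ε / 2 ^ (n-1)) (by positivity) (n - 1)
  refine ⟨k' - (n - 1), ?_⟩
  have hidx : (k' - (n - 1)) + (n - 1) = k' := by omega
  calc pp (1/2:ℝ) (k' - (n-1)) n ≤ 2 ^ (n-1) * pp (1/2:ℝ) ((k' - (n-1)) + (n-1)) 1 :=
      pchain _ n hn
  _ = 2 ^ (n-1) * pp (1/2:ℝ) k' 1 := by rw [hidx]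
  _ < 2 ^ (n-1) * ENNReal.ofReal (ε / 2 ^ (n-1)) := by
      rw [ENNReal.mul_lt_mul_iff_right (by positivity) (by
        exact ENNReal.pow_ne_top (by norm_num))]
      exact hsmall
  _ = ENNReal.ofReal ε := by
      rw [show (2:ℝ≥0∞) ^ (n-1) = ENNReal.ofReal ((2:ℝ) ^ (n-1)) by
        rw [ENNReal.ofReal_pow (by norm_num)]
        norm_num]
      rw [← ENNReal.ofReal_mul (by positivity)]
      congr 1
      field_simp

end CaseA

/-! ### Case B : lam > 1/2 -/

noncomputable def Th (lam : ℝ) : ℝ≥0∞ := ENNReal.ofReal (1/(2*lam))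
noncomputable def Rr (lam : ℝ) : ℝ≥0∞ := ENNReal.ofReal (4*lam*(1-lam))
noncomputable def SS (lam : ℝ) (k : ℕ) : ℝ≥0∞ := ∑' m : ℕ, (Th lam) ^ m * pp lam k m

section CaseB
variable (hh : 1/2 < lam) (h2 : lam < 1)

lemma lam_half_mul (hh : 1/2 < lam) : ENNReal.ofReal lam * Th lam = 2⁻¹ := by
  unfold Th
  rw [← ENNReal.ofReal_mul (by linarith)]
  rw [show lam * (1/(2*lam)) = 1/2 by field_simp]
  exact ofReal_half

lemma innerB (hh : 1/2 < lam) (h2 : lam < 1) (i : ℕ) :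
    ∑' m, Kc lam i m * (Th lam) ^ m ≤ Rr lam * (Th lam) ^ i := by
  have h0 : (0:ℝ) < lam := by linarith
  rcases Nat.eq_zero_or_pos i with hi | hi
  · subst hi
    have : ∀ m : ℕ, Kc lam 0 m * (Th lam) ^ m = 0 := by
      intro m
      have : Kc lam 0 m = 0 := by unfold Kc; rw [if_neg (by omega)]
      rw [this, zero_mul]
    rw [tsum_congr this]
    simp
  · rw [inner_gen h0 h2 _ hi]
    have hterm : ∀ j : ℕ, ENNReal.ofReal ((1 - lam) * lam ^ j) * (Th lam) ^ (max (i-1) 1 + j)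
        = (ENNReal.ofReal (1 - lam) * (Th lam) ^ (max (i-1) 1)) * (2⁻¹) ^ j := by
      intro j
      rw [ENNReal.ofReal_mul (by linarith), ENNReal.ofReal_pow h0.le, pow_add]
      rw [show ENNReal.ofReal (1-lam) * ENNReal.ofReal lam ^ j
            * ((Th lam) ^ (max (i-1) 1) * (Th lam) ^ j)
          = (ENNReal.ofReal (1-lam) * (Th lam) ^ (max (i-1) 1))
            * (ENNReal.ofReal lam * Th lam) ^ j by rw [mul_pow]; ring]
      rw [lam_half_mul hh]
    rw [tsum_congr hterm, ENNReal.tsum_mul_left, ESG0]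
    have hkey : ENNReal.ofReal (1 - lam) * 2 * (Th lam) ^ (max (i-1) 1) ≤ Rr lam * (Th lam) ^ i := by
      rcases eq_or_lt_of_le (show 1 ≤ i from hi) with h | h
      · have hie : i = 1 := by omega
        subst hie
        have hmax : max (1 - 1) 1 = 1 := by norm_num
        rw [hmax, pow_one]
        apply mul_le_mul_left
        rw [show (2:ℝ≥0∞) = ENNReal.ofReal 2 by norm_num, ← ENNReal.ofReal_mul (by linarith)]
        unfold Rr
        apply ENNReal.ofReal_le_ofReal
        nlinarith
      · have hi2 : 2 ≤ i := h
        have hmax : max (i-1) 1 = i - 1 := by omega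
        rw [hmax]
        have hsplit : (Th lam) ^ i = (Th lam) ^ (i-1) * Th lam := by
          rw [← pow_succ]
          congr 1
          omega
        rw [hsplit]
        rw [show Rr lam * ((Th lam) ^ (i-1) * Th lam) = (Rr lam * Th lam) * (Th lam) ^ (i-1) by
          ring]
        apply mul_le_mul_left
        unfold Rr Th
        rw [show (2:ℝ≥0∞) = ENNReal.ofReal 2 by norm_num, ← ENNReal.ofReal_mul (by linarith),
          ← ENNReal.ofReal_mul (by nlinarith : (0:ℝ) ≤ 4*lam*(1-lam))]
        apply ENNReal.ofReal_le_ofReal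
        rw [show 4*lam*(1-lam) * (1/(2*lam)) = 2*(1-lam) * (lam / lam) by ring,
          div_self (ne_of_gt h0), mul_one]
        linarith
    calc ENNReal.ofReal (1-lam) * (Th lam) ^ (max (i-1) 1) * 2
        = ENNReal.ofReal (1-lam) * 2 * (Th lam) ^ (max (i-1) 1) := by ring
    _ ≤ Rr lam * (Th lam) ^ i := hkey

lemma SS_rec (hh : 1/2 < lam) (h2 : lam < 1) (k : ℕ) :
    SS lam (k+1) ≤ Rr lam * SS lam k := by
  have h0 : (0:ℝ) < lam := by linarith
  unfold SS
  rw [swap_sum h0 h2 (fun m => (Th lam) ^ m) k]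
  calc ∑' i : ℕ, (∑' m : ℕ, Kc lam i m * (Th lam) ^ m) * pp lam k i
      ≤ ∑' i : ℕ, (Rr lam * (Th lam) ^ i) * pp lam k i :=
        ENNReal.tsum_le_tsum (fun i => mul_le_mul_left (innerB hh h2 i) _)
  _ = Rr lam * ∑' i : ℕ, (Th lam) ^ i * pp lam k i := by
        rw [← ENNReal.tsum_mul_left]
        exact tsum_congr fun i => by ring

lemma SS_zero_le (hh : 1/2 < lam) (h2 : lam < 1) : SS lam 0 ≤ 4 := by
  have h0 : (0:ℝ) < lam := by linarith
  unfold SS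
  have hterm : ∀ m : ℕ, (Th lam) ^ m * pp lam 0 m ≤ (2⁻¹:ℝ≥0∞) ^ m * ENNReal.ofReal lam⁻¹ := by
    intro m
    rcases Nat.eq_zero_or_pos m with hm | hm
    · subst hm
      rw [pp_zero]
      simp
    · have hpp : pp lam 0 m ≤ ENNReal.ofReal (lam ^ (m-1)) := by
        unfold pp
        simp only [Function.iterate_zero, Set.preimage_id]
        calc volume (Wint lam m ∩ Set.Ioc 0 1) ≤ volume (Wint lam m) :=
            measure_mono Set.inter_subset_left
        _ = ENNReal.ofReal (lam ^ (m-1) - lam ^ m) := by unfold Wint; rw [Real.volume_Ioc]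
        _ ≤ ENNReal.ofReal (lam ^ (m-1)) := ENNReal.ofReal_le_ofReal (by nlinarith [pow_pos h0 m])
      calc (Th lam) ^ m * pp lam 0 m ≤ (Th lam) ^ m * ENNReal.ofReal (lam ^ (m-1)) :=
          mul_le_mul_right hpp _
      _ = (2⁻¹:ℝ≥0∞) ^ m * ENNReal.ofReal lam⁻¹ := by
          unfold Th
          rw [← ENNReal.ofReal_pow (by positivity), ← ENNReal.ofReal_mul (by positivity),
            ← ofReal_half_pow, ← ENNReal.ofReal_mul (by positivity)]
          congr 1
          have e1 : lam ^ (m - 1) * lam = lam ^ m := pow_sub_one_mul' h0 hm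
          have hpm1 : (0:ℝ) < lam ^ (m-1) := pow_pos h0 _
          rw [div_pow, mul_pow, one_pow, ← e1]
          field_simp
          rw [← mul_pow]; norm_num
  calc ∑' m : ℕ, (Th lam) ^ m * pp lam 0 m
      ≤ ∑' m : ℕ, (2⁻¹:ℝ≥0∞) ^ m * ENNReal.ofReal lam⁻¹ :=
        ENNReal.tsum_le_tsum hterm
  _ = (∑' m : ℕ, (2⁻¹:ℝ≥0∞) ^ m) * ENNReal.ofReal lam⁻¹ := ENNReal.tsum_mul_right
  _ = 2 * ENNReal.ofReal lam⁻¹ := by rw [ESG0]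
  _ ≤ 2 * 2 := by
      apply mul_le_mul_right
      rw [show (2:ℝ≥0∞) = ENNReal.ofReal 2 by norm_num]
      apply ENNReal.ofReal_le_ofReal
      rw [inv_le_iff_one_le_mul₀ h0]
      linarith
  _ = 4 := by norm_num

lemma SS_bound (hh : 1/2 < lam) (h2 : lam < 1) (k : ℕ) :
    SS lam k ≤ (Rr lam) ^ k * 4 := by
  induction k with
  | zero => simpa using SS_zero_le hh h2
  | succ k ih =>
    calc SS lam (k+1) ≤ Rr lam * SS lam k := SS_rec hh h2 k
    _ ≤ Rr lam * ((Rr lam) ^ k * 4) := mul_le_mul_right ih _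
    _ = (Rr lam) ^ (k+1) * 4 := by rw [← mul_assoc, ← pow_succ']

lemma caseB_final (hh : 1/2 < lam) (h2 : lam < 1) {n : ℕ} (hn : 1 ≤ n)
    (ε : ℝ) (hε : 0 < ε) : ∃ k, pp lam k n < ENNReal.ofReal ε := by
  have h0 : (0:ℝ) < lam := by linarith
  have hθ : (0:ℝ) < 1/(2*lam) := by positivity
  have hρ0 : (0:ℝ) ≤ 4*lam*(1-lam) := by nlinarith
  have h21 : (0:ℝ) < 2*lam - 1 := by linarith
  have hρ1 : 4*lam*(1-lam) < 1 := by nlinarith [mul_pos h21 h21]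
  obtain ⟨k, hk⟩ := exists_pow_lt_of_lt_one
    (show (0:ℝ) < (1/(2*lam))^n * ε / 4 by positivity) hρ1
  refine ⟨k, ?_⟩
  have hle : (Th lam) ^ n * pp lam k n ≤ (Rr lam) ^ k * 4 := by
    calc (Th lam) ^ n * pp lam k n ≤ SS lam k := ENNReal.le_tsum n
    _ ≤ (Rr lam) ^ k * 4 := SS_bound hh h2 k
  have hstrict : (Rr lam) ^ k * 4 < (Th lam) ^ n * ENNReal.ofReal ε := by
    unfold Rr Th
    rw [← ENNReal.ofReal_pow hρ0, ← ENNReal.ofReal_pow hθ.le]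
    rw [show (4:ℝ≥0∞) = ENNReal.ofReal 4 by norm_num]
    rw [← ENNReal.ofReal_mul (pow_nonneg hρ0 k), ← ENNReal.ofReal_mul (by positivity)]
    apply ENNReal.ofReal_lt_ofReal_iff (by positivity) |>.mpr
    nlinarith [hk]
  have hfin : (Th lam) ^ n * pp lam k n < (Th lam) ^ n * ENNReal.ofReal ε :=
    lt_of_le_of_lt hle hstrict
  rw [ENNReal.mul_lt_mul_iff_right (by
      apply pow_ne_zero
      unfold Th
      simp only [ne_eq, ENNReal.ofReal_eq_zero, not_le]
      positivity)
    (by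
      apply ENNReal.pow_ne_top
      unfold Th
      exact ENNReal.ofReal_ne_top)] at hfin
  exact hfin

end CaseB

/-! ### the measure argument -/

lemma iSup_nat_cast_top : (⨆ M : ℕ, (M:ℝ≥0∞)) = ⊤ := by
  rw [eq_top_iff]
  by_contra hcon
  push_neg at hcon
  obtain ⟨M, hM⟩ := ENNReal.exists_nat_gt (ne_of_lt hcon)
  exact lt_irrefl _ (lt_of_le_of_lt (le_iSup (fun M : ℕ => (M:ℝ≥0∞)) M) hM)

lemma abscont (μ : Measure ℝ) (hP : IsProbabilityMeasure μ) (hAC : μ ≪ volume)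
    (ε : ℝ) (hε : 0 < ε) :
    ∃ M : ℕ, ∀ A : Set ℝ, MeasurableSet A → μ A ≤ M * volume A + ENNReal.ofReal ε := by
  haveI := hP
  set f := μ.rnDeriv volume with hfdef
  have hf : Measurable f := μ.measurable_rnDeriv volume
  have hμ : volume.withDensity f = μ := μ.withDensity_rnDeriv_eq volume hAC
  have hint : ∫⁻ x, f x = 1 := by
    have h1 : (volume.withDensity f) Set.univ = ∫⁻ x, f x := by
      rw [withDensity_apply f MeasurableSet.univ, setLIntegral_univ]
    rw [hμ] at h1
    rw [← h1, measure_univ]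
  have hmono : Monotone (fun M : ℕ => fun x : ℝ => min (f x) M) := by
    intro a b hab x
    exact le_min (min_le_left _ _) (le_trans (min_le_right _ _) (by exact_mod_cast hab))
  have hsup : (⨆ M : ℕ, ∫⁻ x, min (f x) M) = 1 := by
    rw [← lintegral_iSup (fun M => hf.min measurable_const) hmono]
    rw [← hint]
    congr 1
    funext x
    apply le_antisymm (iSup_le fun M => min_le_left _ _)
    rcases eq_or_ne (f x) ⊤ with htop | hne
    · rw [htop]
      calc (⊤:ℝ≥0∞) = ⨆ M : ℕ, (M:ℝ≥0∞) := iSup_nat_cast_top.symm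
      _ ≤ ⨆ M : ℕ, min (⊤:ℝ≥0∞) (M:ℝ≥0∞) :=
          iSup_mono fun M => le_of_eq (min_eq_right le_top).symm
    · obtain ⟨M, hM⟩ := ENNReal.exists_nat_gt hne
      calc f x = min (f x) M := (min_eq_left hM.le).symm
      _ ≤ ⨆ M : ℕ, min (f x) M := le_iSup (fun M : ℕ => min (f x) M) M
  have hlt : (1:ℝ≥0∞) - ENNReal.ofReal ε < ⨆ M : ℕ, ∫⁻ x, min (f x) M := by
    rw [hsup]
    apply ENNReal.sub_lt_self (by norm_num) (by norm_num)
    simp only [ne_eq, ENNReal.ofReal_eq_zero, not_le]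
    exact hε
  obtain ⟨M, hM⟩ := lt_iSup_iff.mp hlt
  refine ⟨M, ?_⟩
  have htail : ∫⁻ x, (f x - min (f x) M) ≤ ENNReal.ofReal ε := by
    have hmle : ∫⁻ x, min (f x) M ≤ 1 := by
      rw [← hint]
      exact lintegral_mono fun x => min_le_left _ _
    rw [lintegral_sub (hf.min measurable_const) (ne_top_of_le_ne_top ENNReal.one_ne_top hmle)
      (Filter.Eventually.of_forall fun x => min_le_left _ _)]
    rw [hint]
    calc (1:ℝ≥0∞) - ∫⁻ x, min (f x) M ≤ 1 - (1 - ENNReal.ofReal ε) :=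
      tsub_le_tsub_left hM.le 1
    _ ≤ ENNReal.ofReal ε := by
        rcases le_total (ENNReal.ofReal ε) 1 with h | h
        · rw [ENNReal.sub_sub_cancel ENNReal.one_ne_top h]
        · calc (1:ℝ≥0∞) - (1 - ENNReal.ofReal ε) ≤ 1 := tsub_le_self
          _ ≤ ENNReal.ofReal ε := h
  intro A hA
  have hμA : μ A = ∫⁻ x in A, f x := by rw [← hμ, withDensity_apply f hA]
  calc μ A = ∫⁻ x in A, f x := hμA
  _ ≤ ∫⁻ x in A, (min (f x) M + (f x - min (f x) M)) := by
      apply lintegral_mono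
      intro x
      exact le_of_eq (add_tsub_cancel_of_le (min_le_left _ _)).symm
  _ = (∫⁻ x in A, min (f x) M) + ∫⁻ x in A, (f x - min (f x) M) :=
      lintegral_add_left (hf.min measurable_const) _
  _ ≤ (M:ℝ≥0∞) * volume A + ENNReal.ofReal ε := by
      apply add_le_add
      · calc ∫⁻ x in A, min (f x) M ≤ ∫⁻ _ in A, (M:ℝ≥0∞) :=
            lintegral_mono fun x => min_le_right _ _
        _ = (M:ℝ≥0∞) * volume A := by rw [setLIntegral_const]
      · exact le_trans (setLIntegral_le_lintegral _ _) htail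

lemma mu_inv_iter {lam : ℝ} (μ : Measure ℝ) (hF : Measurable (Flam lam))
    (hInv : ∀ A : Set ℝ, MeasurableSet A → μ (Flam lam ⁻¹' A) = μ A) :
    ∀ k : ℕ, ∀ A : Set ℝ, MeasurableSet A → μ ((Flam lam)^[k] ⁻¹' A) = μ A := by
  intro k
  induction k with
  | zero => intro A hA; simp
  | succ k ih =>
    intro A hA
    rw [Function.iterate_succ, Set.preimage_comp]
    rw [hInv _ ((hF.iterate k) hA)]
    exact ih A hA

end Stmt1Aux

/-- For `lam ∈ [1/2, 1)` there is no `F_lam`-invariant Borel probability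
measure on `(0,1]` absolutely continuous w.r.t. Lebesgue measure. -/
theorem stmt1 (lam : ℝ) (h1 : 1/2 ≤ lam) (h2 : lam < 1) :
    ¬ ∃ μ : Measure ℝ, IsProbabilityMeasure μ ∧ μ (Set.Ioc 0 1) = 1 ∧
      (∀ A : Set ℝ, MeasurableSet A → μ (Flam lam ⁻¹' A) = μ A) ∧
      μ ≪ volume := by

  rintro ⟨μ, hProb, hI, hInv, hAC⟩
  haveI := hProb
  have h0 : (0:ℝ) < lam := by linarith
  have hF : Measurable (Flam lam) := Stmt1Aux.measurable_Flam h0 h2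
  have hcompl : μ ((Set.Ioc (0:ℝ) 1)ᶜ) = 0 := by
    rw [measure_compl measurableSet_Ioc (by rw [hI]; exact ENNReal.one_ne_top), hI, measure_univ]
    simp
  have hW0 : ∀ n : ℕ, 1 ≤ n → μ (Wint lam n) = 0 := by
    intro n hn
    have hle : ∀ ε : ℝ, 0 < ε → μ (Wint lam n) ≤ ENNReal.ofReal ε + ENNReal.ofReal ε := by
      intro ε hε
      obtain ⟨M, hM⟩ := Stmt1Aux.abscont μ hProb hAC ε hε
      have hsm : ∃ k, (M:ℝ≥0∞) * Stmt1Aux.pp lam k n ≤ ENNReal.ofReal ε := by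
        rcases Nat.eq_zero_or_pos M with hM0 | hM0
        · exact ⟨0, by rw [hM0]; simp⟩
        · have hεM : (0:ℝ) < ε / M := by positivity
          have hex : ∃ k, Stmt1Aux.pp lam k n < ENNReal.ofReal (ε / M) := by
            rcases eq_or_lt_of_le h1 with hl | hl
            · subst hl
              exact Stmt1Aux.caseA_final hn _ hεM
            · exact Stmt1Aux.caseB_final hl h2 hn _ hεM
          obtain ⟨k, hk⟩ := hex
          refine ⟨k, ?_⟩
          calc (M:ℝ≥0∞) * Stmt1Aux.pp lam k n
              ≤ (M:ℝ≥0∞) * ENNReal.ofReal (ε / M) := mul_le_mul_right hk.le _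
          _ = ENNReal.ofReal ε := by
              rw [show (M:ℝ≥0∞) = ENNReal.ofReal (M:ℝ) from (ENNReal.ofReal_natCast M).symm,
                ← ENNReal.ofReal_mul (by positivity)]
              congr 1
              field_simp
      obtain ⟨k, hk⟩ := hsm
      have hinv : μ ((Flam lam)^[k] ⁻¹' (Wint lam n)) = μ (Wint lam n) :=
        Stmt1Aux.mu_inv_iter μ hF hInv k _ measurableSet_Ioc
      have hsplit : μ ((Flam lam)^[k] ⁻¹' (Wint lam n))
          ≤ μ ((Flam lam)^[k] ⁻¹' (Wint lam n) ∩ Set.Ioc 0 1) + μ ((Set.Ioc (0:ℝ) 1)ᶜ) := by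
        calc μ ((Flam lam)^[k] ⁻¹' (Wint lam n))
            ≤ μ ((Flam lam)^[k] ⁻¹' (Wint lam n) ∩ Set.Ioc 0 1)
              + μ ((Flam lam)^[k] ⁻¹' (Wint lam n) \ Set.Ioc 0 1) :=
            measure_le_inter_add_diff μ _ _
        _ ≤ _ := by
            apply add_le_add_right
            apply measure_mono
            intro x hx
            exact hx.2
      rw [hcompl, add_zero] at hsplit
      have hμvol : μ ((Flam lam)^[k] ⁻¹' (Wint lam n) ∩ Set.Ioc 0 1)
          ≤ (M:ℝ≥0∞) * Stmt1Aux.pp lam k n + ENNReal.ofReal ε :=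
        hM _ (((hF.iterate k) measurableSet_Ioc).inter measurableSet_Ioc)
      calc μ (Wint lam n) = μ ((Flam lam)^[k] ⁻¹' (Wint lam n)) := hinv.symm
      _ ≤ μ ((Flam lam)^[k] ⁻¹' (Wint lam n) ∩ Set.Ioc 0 1) := hsplit
      _ ≤ (M:ℝ≥0∞) * Stmt1Aux.pp lam k n + ENNReal.ofReal ε := hμvol
      _ ≤ ENNReal.ofReal ε + ENNReal.ofReal ε := add_le_add_left hk _
    by_contra hne
    have hfin : μ (Wint lam n) ≠ ⊤ := by
      apply ne_top_of_le_ne_top ENNReal.one_ne_top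
      calc μ (Wint lam n) ≤ μ Set.univ := measure_mono (Set.subset_univ _)
      _ = 1 := measure_univ
    have hpos : 0 < (μ (Wint lam n)).toReal := ENNReal.toReal_pos hne hfin
    set t := (μ (Wint lam n)).toReal with ht
    have := hle (t/4) (by positivity)
    have heq : ENNReal.ofReal (t/4) + ENNReal.ofReal (t/4) = ENNReal.ofReal (t/2) := by
      rw [← ENNReal.ofReal_add (by positivity) (by positivity)]
      congr 1
      ring
    rw [heq] at this
    have hlt2 : ENNReal.ofReal (t/2) < μ (Wint lam n) := by
      rw [show μ (Wint lam n) = ENNReal.ofReal t from (ENNReal.ofReal_toReal hfin).symm]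
      apply ENNReal.ofReal_lt_ofReal_iff hpos |>.mpr
      linarith
    exact absurd this (not_le.mpr hlt2)
  have hsum0 : ∑' n : ℕ, μ (Wint lam n) = 0 := by
    apply ENNReal.summable.tsum_eq_zero_iff.mpr
    intro n
    rcases Nat.eq_zero_or_pos n with hn | hn
    · subst hn
      rw [Stmt1Aux.Wzero]
      exact measure_empty
    · exact hW0 n hn
  have hcover : μ (Set.Ioc (0:ℝ) 1) ≤ ∑' n : ℕ, μ (Wint lam n) := by
    rw [← Stmt1Aux.Wunion h0 h2]
    exact measure_iUnion_le _
  rw [hI, hsum0] at hcover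
  simp at hcover
end

section
/- Let λ ∈ (1/2, 1). Then for Lebesgue-almost every x ∈ (0,1], the forward orbit escapes to the origin: F_λ^n(x) → 0 as n → ∞. In particular Lebesgue measure is dissipative for F_λ. -/
open MeasureTheory Set Filter Topology ENNReal

section auxsec

noncomputable def idxF (lam x : ℝ) : ℕ := sInf {n : ℕ | lam ^ n < x}

lemma Flam_def (lam x : ℝ) : Flam lam x =
  if 0 < x ∧ x ≤ 1 then
    if idxF lam x = 1 then (x - lam) / (1 - lam)
    else (x - lam ^ idxF lam x) / (lam * (1 - lam))
  else x := rfl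

variable {lam : ℝ}

lemma idxF_eq_of_mem (h0 : 0 < lam) (h2 : lam < 1) {m : ℕ} (hm : 1 ≤ m) {x : ℝ}
    (hx : x ∈ Wint lam m) : idxF lam x = m := by
  obtain ⟨hx1, hx2⟩ := hx
  have hmem : m ∈ {n : ℕ | lam ^ n < x} := hx1
  refine le_antisymm (Nat.sInf_le hmem) ?_
  by_contra h
  push_neg at h
  have hs : lam ^ (idxF lam x) < x := Nat.sInf_mem ⟨m, hmem⟩
  have hle : lam ^ (m - 1) ≤ lam ^ (idxF lam x) :=
    pow_le_pow_of_le_one h0.le h2.le (by omega)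
  exact absurd hs (not_lt.2 (hx2.trans hle))

lemma exists_pow_lt_aux (h0 : 0 < lam) (h2 : lam < 1) {x : ℝ} (hx : 0 < x) :
    ∃ n : ℕ, lam ^ n < x :=
  ((tendsto_pow_atTop_nhds_zero_of_lt_one h0.le h2).eventually (gt_mem_nhds hx)).exists

lemma idxF_mem (h0 : 0 < lam) (h2 : lam < 1) {x : ℝ} (hx : x ∈ Set.Ioc (0:ℝ) 1) :
    1 ≤ idxF lam x ∧ x ∈ Wint lam (idxF lam x) := by
  obtain ⟨n, hn⟩ := exists_pow_lt_aux h0 h2 hx.1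
  have hne : {n : ℕ | lam ^ n < x}.Nonempty := ⟨n, hn⟩
  have hlt : lam ^ (idxF lam x) < x := Nat.sInf_mem hne
  have h1 : 1 ≤ idxF lam x := by
    rcases Nat.eq_zero_or_pos (idxF lam x) with h | h
    · rw [h] at hlt; simp at hlt; linarith [hx.2]
    · exact h
  refine ⟨h1, hlt, ?_⟩
  have : idxF lam x - 1 ∉ {n : ℕ | lam ^ n < x} := Nat.notMem_of_lt_sInf (show idxF lam x - 1 < idxF lam x by omega)
  exact not_lt.1 this

lemma mem_Ioc_of_mem_W (h0 : 0 < lam) (h2 : lam < 1) {m : ℕ} {x : ℝ}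
    (hx : x ∈ Wint lam m) : x ∈ Set.Ioc (0:ℝ) 1 :=
  ⟨lt_trans (pow_pos h0 m) hx.1, hx.2.trans (pow_le_one₀ h0.le h2.le)⟩

/-- The branch formula: on `W m`, `Flam` is the affine map with offset `lam^m`. -/
lemma Flam_eq_of_mem (h0 : 0 < lam) (h2 : lam < 1) {m : ℕ} (hm : 1 ≤ m) {x : ℝ}
    (hx : x ∈ Wint lam m) :
    Flam lam x = (x - lam ^ m) / (if m = 1 then 1 - lam else lam * (1 - lam)) := by
  have hx01 := mem_Ioc_of_mem_W h0 h2 hx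
  have hidx : idxF lam x = m := idxF_eq_of_mem h0 h2 hm hx
  rw [Flam_def, if_pos ⟨hx01.1, hx01.2⟩, hidx]
  by_cases h : m = 1
  · rw [if_pos h, if_pos h, h, pow_one]
  · rw [if_neg h, if_neg h]

lemma Flam_le_of_mem (h0 : 0 < lam) (h2 : lam < 1) {m : ℕ} (hm : 2 ≤ m) {x : ℝ}
    (hx : x ∈ Wint lam m) : Flam lam x ≤ lam ^ (m - 2) := by
  have hd : 0 < lam * (1 - lam) := mul_pos h0 (by linarith)
  rw [Flam_eq_of_mem h0 h2 (by omega) hx, if_neg (by omega)]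
  rw [div_le_iff₀ hd]
  have e1 : lam ^ (m - 1) = lam ^ (m - 2) * lam := by
    rw [← pow_succ]; congr 1; omega
  have e2 : lam ^ m = lam ^ (m - 1) * lam := by
    rw [← pow_succ]; congr 1; omega
  have hx2 := hx.2
  nlinarith [pow_pos h0 (m-2), pow_pos h0 (m-1)]

lemma Flam_mem_Ioc (h0 : 0 < lam) (h2 : lam < 1) {x : ℝ} (hx : x ∈ Set.Ioc (0:ℝ) 1) :
    Flam lam x ∈ Set.Ioc (0:ℝ) 1 := by
  obtain ⟨h1, hW⟩ := idxF_mem h0 h2 hx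
  set m := idxF lam x with hm
  have hpos : 0 < Flam lam x := by
    rw [Flam_eq_of_mem h0 h2 h1 hW]
    apply div_pos (by linarith [hW.1])
    by_cases h : m = 1
    · rw [if_pos h]; linarith
    · rw [if_neg h]; exact mul_pos h0 (by linarith)
  refine ⟨hpos, ?_⟩
  by_cases h : m = 1
  · rw [Flam_eq_of_mem h0 h2 h1 hW, if_pos h, h, pow_one]
    rw [div_le_one (by linarith)]
    have := hW.2
    rw [h] at this; simp at this; linarith
  · have hm2 : 2 ≤ m := by omega
    calc Flam lam x ≤ lam ^ (m - 2) := Flam_le_of_mem h0 h2 hm2 hW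
      _ ≤ 1 := pow_le_one₀ h0.le h2.le

lemma iter_mem_Ioc (h0 : 0 < lam) (h2 : lam < 1) {x : ℝ} (hx : x ∈ Set.Ioc (0:ℝ) 1)
    (k : ℕ) : (Flam lam)^[k] x ∈ Set.Ioc (0:ℝ) 1 := by
  induction k with
  | zero => exact hx
  | succ k ih => rw [Function.iterate_succ_apply']; exact Flam_mem_Ioc h0 h2 ih

lemma measurable_idxF (h0 : 0 < lam) (h2 : lam < 1) : Measurable (idxF lam) := by
  apply measurable_to_countable'
  intro m
  match m with
  | 0 =>
    have : idxF lam ⁻¹' {0} = Set.Iic 0 ∪ Set.Ioi 1 := by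
      ext x
      simp only [mem_preimage, mem_singleton_iff, mem_union, mem_Iic, mem_Ioi]
      constructor
      · intro h
        by_contra hc
        push_neg at hc
        have hx : x ∈ Set.Ioc (0:ℝ) 1 := ⟨hc.1, hc.2⟩
        have := (idxF_mem h0 h2 hx).1
        omega
      · rintro (h | h)
        · have : {n : ℕ | lam ^ n < x} = ∅ := by
            ext n; simp only [mem_setOf_eq, mem_empty_iff_false, iff_false, not_lt]
            exact le_trans h (pow_pos h0 n).le
          rw [idxF, this, Nat.sInf_empty]
        · rw [idxF, Nat.sInf_eq_zero]
          left; simpa using h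
    rw [this]; exact measurableSet_Iic.union measurableSet_Ioi
  | (m+1) =>
    have : idxF lam ⁻¹' {m+1} = Wint lam (m+1) := by
      ext x
      simp only [mem_preimage, mem_singleton_iff]
      constructor
      · intro h
        have hne : {n : ℕ | lam ^ n < x}.Nonempty := by
          by_contra hc
          rw [not_nonempty_iff_eq_empty] at hc
          rw [idxF, hc, Nat.sInf_empty] at h
          omega
        have hlt : lam ^ (idxF lam x) < x := Nat.sInf_mem hne
        have hnot : m ∉ {n : ℕ | lam ^ n < x} :=
          Nat.notMem_of_lt_sInf (show m < idxF lam x by omega)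
        rw [h] at hlt
        exact ⟨hlt, by simpa using not_lt.1 hnot⟩
      · intro hx
        exact idxF_eq_of_mem h0 h2 (by omega) hx
    rw [this]; exact measurableSet_Ioc

lemma measurable_Flam (h0 : 0 < lam) (h2 : lam < 1) : Measurable (Flam lam) := by
  have hidx := measurable_idxF h0 h2
  have h1 : Flam lam = fun x =>
      if 0 < x ∧ x ≤ 1 then
        if idxF lam x = 1 then (x - lam) / (1 - lam)
        else (x - lam ^ idxF lam x) / (lam * (1 - lam))
      else x := by funext x; exact Flam_def lam x
  rw [h1]
  have hs1 : MeasurableSet {x : ℝ | 0 < x ∧ x ≤ 1} := by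
    have : {x : ℝ | 0 < x ∧ x ≤ 1} = Set.Ioc 0 1 := rfl
    rw [this]; exact measurableSet_Ioc
  have hs2 : MeasurableSet {x : ℝ | idxF lam x = 1} := hidx (measurableSet_singleton 1)
  apply Measurable.ite hs1
  · apply Measurable.ite hs2
    · exact (measurable_id.sub_const lam).div_const _
    · have hpow : Measurable fun x : ℝ => lam ^ idxF lam x :=
        (measurable_from_top (f := fun n : ℕ => lam ^ n)).comp hidx
      exact (measurable_id.sub hpow).div_const _
  · exact measurable_id

noncomputable def muF (lam : ℝ) : Measure ℝ := volume.withDensity (fun x => 2 ^ idxF lam x)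

variable {lam : ℝ}

lemma vol_affine (c : ℝ) {d : ℝ} (hd : 0 < d) (A : Set ℝ) :
    volume ((fun x => (x - c) / d) ⁻¹' A) = ENNReal.ofReal d * volume A := by
  have he : (fun x : ℝ => (x - c) / d) = (fun x : ℝ => x * d⁻¹) ∘ (fun x : ℝ => x + (-c)) := by
    funext x; simp [div_eq_mul_inv, sub_eq_add_neg]
  rw [he, preimage_comp]
  rw [measure_preimage_add_right volume (-c) _]
  rw [Real.volume_preimage_mul_right (inv_ne_zero hd.ne')]
  rw [inv_inv, abs_of_pos hd]

lemma muF_apply (h0 : 0 < lam) (h2 : lam < 1) {m : ℕ} (hm : 1 ≤ m) {A : Set ℝ}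
    (hA : MeasurableSet A) (hsub : A ⊆ Wint lam m) :
    muF lam A = 2 ^ m * volume A := by
  rw [muF, withDensity_apply _ hA]
  rw [setLIntegral_congr_fun hA (fun x hx => by
    rw [idxF_eq_of_mem h0 h2 hm (hsub hx)])]
  exact setLIntegral_const A _

lemma volume_le_muF {A : Set ℝ} (hA : MeasurableSet A) : volume A ≤ muF lam A := by
  rw [muF, withDensity_apply _ hA]
  calc volume A = ∫⁻ _ in A, 1 ∂volume := by rw [setLIntegral_const A 1, one_mul]
    _ ≤ ∫⁻ x in A, 2 ^ idxF lam x ∂volume :=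
      lintegral_mono fun x => by
        have h : (2:ℝ≥0∞) ^ 0 ≤ 2 ^ idxF lam x := pow_le_pow_right' one_le_two (Nat.zero_le _)
        simpa using h

lemma muF_Ioc_le (h0 : 0 < lam) (h2 : lam < 1) (N : ℕ) :
    muF lam (Set.Ioc (lam ^ N) 1) ≤ 2 ^ N := by
  rw [muF, withDensity_apply _ measurableSet_Ioc]
  calc ∫⁻ x in Set.Ioc (lam ^ N) 1, 2 ^ idxF lam x ∂volume
      ≤ ∫⁻ _ in Set.Ioc (lam ^ N) 1, 2 ^ N ∂volume := by
        apply setLIntegral_mono (by fun_prop)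
        intro x hx
        exact pow_le_pow_right' one_le_two (Nat.sInf_le hx.1)
    _ = 2 ^ N * volume (Set.Ioc (lam ^ N) 1) := setLIntegral_const _ _
    _ ≤ 2 ^ N * 1 := by
        apply mul_le_mul_right
        rw [Real.volume_Ioc]
        apply ENNReal.ofReal_le_one.2
        have := pow_pos h0 N
        linarith
    _ = 2 ^ N := mul_one _

lemma W_pairwise_disjoint (h0 : 0 < lam) (h2 : lam < 1) :
    Pairwise (Function.onFun Disjoint fun n : ℕ => Wint lam (n + 1)) := by
  have key : ∀ i j : ℕ, i < j → Disjoint (Wint lam (i + 1)) (Wint lam (j + 1)) := by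
    intro i j hij
    rw [Set.disjoint_left]
    intro x hxi hxj
    have h1 : x ≤ lam ^ j := by simpa using hxj.2
    have h2' : lam ^ j ≤ lam ^ (i + 1) :=
      pow_le_pow_of_le_one h0.le h2.le (by omega)
    exact absurd hxi.1 (not_lt.2 (h1.trans h2'))
  intro i j hij
  rcases hij.lt_or_gt with h | h
  · exact key i j h
  · exact (key j i h).symm

lemma two_pow_eq (n : ℕ) : (2:ℝ≥0∞) ^ n = ENNReal.ofReal ((2:ℝ) ^ n) := by
  rw [ENNReal.ofReal_pow (by norm_num : (0:ℝ) ≤ 2)]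
  norm_num

lemma real_sum_bound (h1 : 1/2 < lam) (h2 : lam < 1) (m : ℕ) :
    ∑ n ∈ Finset.range (m+1), (2:ℝ)^(n+1) * (if n = 0 then 1 - lam else lam * (1 - lam))
      ≤ 4 * lam * (1 - lam) * 2 ^ m := by
  induction m with
  | zero =>
    rw [Finset.sum_range_one, if_pos rfl]
    norm_num
    nlinarith
  | succ k ih =>
    rw [Finset.sum_range_succ, if_neg k.succ_ne_zero]
    have h2k : (2:ℝ)^(k+1+1) = 2*2^(k+1) := by ring
    have h2k' : (2:ℝ)^(k+1) = 2*2^k := by ring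
    have key : (2:ℝ)^(k+1+1) * (lam*(1-lam)) = 4*lam*(1-lam)*2^(k+1) - 4*lam*(1-lam)*2^k := by
      rw [h2k, h2k']; ring
    linarith [ih]

lemma key_branch (h1 : 1/2 < lam) (h2 : lam < 1) {m : ℕ} (hm : 1 ≤ m) {A : Set ℝ}
    (hA : MeasurableSet A) (hsub : A ⊆ Wint lam m) :
    muF lam (Flam lam ⁻¹' A ∩ Set.Ioc 0 1) ≤ ENNReal.ofReal (4 * lam * (1 - lam)) * muF lam A := by
  have h0 : 0 < lam := by linarith
  have h1l : 0 < 1 - lam := by linarith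
  have hρ0 : 0 ≤ 4 * lam * (1 - lam) := by nlinarith
  set d : ℕ → ℝ := fun n => if n = 0 then 1 - lam else lam * (1 - lam) with hd
  have hdpos : ∀ n, 0 < d n := by
    intro n; by_cases h : n = 0 <;> simp [hd, h] <;> nlinarith
  have hmeasF := measurable_Flam h0 h2
  have hTmeas : ∀ n : ℕ, MeasurableSet (Flam lam ⁻¹' A ∩ Wint lam (n+1)) :=
    fun n => (hA.preimage hmeasF).inter measurableSet_Ioc
  have hcover : Flam lam ⁻¹' A ∩ Set.Ioc 0 1 ⊆ ⋃ n : ℕ, Flam lam ⁻¹' A ∩ Wint lam (n+1) := by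
    rintro x ⟨hxA, hxI⟩
    obtain ⟨h1x, hW⟩ := idxF_mem h0 h2 hxI
    refine mem_iUnion.2 ⟨idxF lam x - 1, hxA, ?_⟩
    rwa [Nat.sub_add_cancel h1x]
  have hAvol : muF lam A = 2 ^ m * volume A := muF_apply h0 h2 hm hA hsub
  have hterm : ∀ n : ℕ, muF lam (Flam lam ⁻¹' A ∩ Wint lam (n+1)) ≤
      (if n ≤ m then ENNReal.ofReal ((2:ℝ)^(n+1) * d n) * volume A else 0) := by
    intro n
    by_cases hn : n ≤ m
    · rw [if_pos hn]
      have hWsub : Flam lam ⁻¹' A ∩ Wint lam (n+1) ⊆ (fun x => (x - lam^(n+1)) / d n) ⁻¹' A := by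
        rintro x ⟨hxA, hxW⟩
        have heq0 := Flam_eq_of_mem h0 h2 (Nat.succ_le_succ (Nat.zero_le n)) hxW
        have heq : Flam lam x = (x - lam^(n+1)) / d n := by
          rw [heq0]; congr 1; simp only [hd]
          by_cases h : n = 0
          · simp [h]
          · rw [if_neg h, if_neg (by omega)]
        rwa [mem_preimage, ← heq]
      calc muF lam (Flam lam ⁻¹' A ∩ Wint lam (n+1))
          = 2^(n+1) * volume (Flam lam ⁻¹' A ∩ Wint lam (n+1)) :=
            muF_apply h0 h2 (Nat.succ_le_succ (Nat.zero_le n)) (hTmeas n) inter_subset_right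
        _ ≤ 2^(n+1) * volume ((fun x => (x - lam^(n+1)) / d n) ⁻¹' A) :=
            mul_le_mul_right (measure_mono hWsub) _
        _ = 2^(n+1) * (ENNReal.ofReal (d n) * volume A) := by rw [vol_affine _ (hdpos n)]
        _ = ENNReal.ofReal ((2:ℝ)^(n+1) * d n) * volume A := by
            rw [ENNReal.ofReal_mul (by positivity), ← mul_assoc, two_pow_eq]
    · rw [if_neg hn]
      have hempty : Flam lam ⁻¹' A ∩ Wint lam (n+1) = ∅ := by
        rw [eq_empty_iff_forall_notMem]
        rintro x ⟨hxA, hxW⟩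
        have hle : Flam lam x ≤ lam ^ (n+1-2) := Flam_le_of_mem h0 h2 (by omega) hxW
        have hgt : lam ^ m < Flam lam x := (hsub hxA).1
        have hmono : lam ^ (n+1-2) ≤ lam ^ m := pow_le_pow_of_le_one h0.le h2.le (by omega)
        linarith
      rw [hempty]; simp
  calc muF lam (Flam lam ⁻¹' A ∩ Set.Ioc 0 1)
      ≤ ∑' n, muF lam (Flam lam ⁻¹' A ∩ Wint lam (n+1)) :=
        le_trans (measure_mono hcover) (measure_iUnion_le _)
    _ ≤ ∑' n, (if n ≤ m then ENNReal.ofReal ((2:ℝ)^(n+1) * d n) * volume A else 0) :=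
        ENNReal.tsum_le_tsum hterm
    _ = ∑ n ∈ Finset.range (m+1), (if n ≤ m then ENNReal.ofReal ((2:ℝ)^(n+1) * d n) * volume A else 0) :=
        tsum_eq_sum (fun b hb => if_neg (by simp at hb; omega))
    _ = ∑ n ∈ Finset.range (m+1), ENNReal.ofReal ((2:ℝ)^(n+1) * d n) * volume A := by
        refine Finset.sum_congr rfl fun n hn => ?_
        rw [if_pos (by simp at hn; omega)]
    _ = (∑ n ∈ Finset.range (m+1), ENNReal.ofReal ((2:ℝ)^(n+1) * d n)) * volume A :=
        (Finset.sum_mul ..).symm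
    _ = ENNReal.ofReal (∑ n ∈ Finset.range (m+1), (2:ℝ)^(n+1) * d n) * volume A := by
        rw [ENNReal.ofReal_sum_of_nonneg (fun i _ => by positivity)]
    _ ≤ ENNReal.ofReal (4*lam*(1-lam) * 2^m) * volume A :=
        mul_le_mul_left (ENNReal.ofReal_le_ofReal (real_sum_bound h1 h2 m)) _
    _ = ENNReal.ofReal (4*lam*(1-lam)) * muF lam A := by
        rw [hAvol, ENNReal.ofReal_mul hρ0, mul_assoc, ← two_pow_eq]

lemma key_general (h1 : 1/2 < lam) (h2 : lam < 1) {A : Set ℝ}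
    (hA : MeasurableSet A) (hsub : A ⊆ Set.Ioc (0:ℝ) 1) :
    muF lam (Flam lam ⁻¹' A ∩ Set.Ioc 0 1) ≤ ENNReal.ofReal (4 * lam * (1 - lam)) * muF lam A := by
  have h0 : 0 < lam := by linarith
  have hAm : ∀ n : ℕ, MeasurableSet (A ∩ Wint lam (n+1)) :=
    fun n => hA.inter measurableSet_Ioc
  have hdecomp : (⋃ n : ℕ, A ∩ Wint lam (n+1)) = A := by
    apply Subset.antisymm (iUnion_subset fun n => inter_subset_left)
    intro x hx
    obtain ⟨h1x, hW⟩ := idxF_mem h0 h2 (hsub hx)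
    refine mem_iUnion.2 ⟨idxF lam x - 1, hx, ?_⟩
    rwa [Nat.sub_add_cancel h1x]
  have hcover : Flam lam ⁻¹' A ∩ Set.Ioc 0 1 ⊆
      ⋃ n : ℕ, (Flam lam ⁻¹' (A ∩ Wint lam (n+1)) ∩ Set.Ioc 0 1) := by
    rintro x ⟨hxA, hxI⟩
    obtain ⟨h1x, hW⟩ := idxF_mem h0 h2 (hsub hxA)
    refine mem_iUnion.2 ⟨idxF lam (Flam lam x) - 1, ⟨hxA, ?_⟩, hxI⟩
    rwa [Nat.sub_add_cancel h1x]
  have hdisj : Pairwise (Function.onFun Disjoint fun n : ℕ => A ∩ Wint lam (n+1)) :=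
    (W_pairwise_disjoint h0 h2).mono fun i j h => h.mono inter_subset_right inter_subset_right
  calc muF lam (Flam lam ⁻¹' A ∩ Set.Ioc 0 1)
      ≤ ∑' n, muF lam (Flam lam ⁻¹' (A ∩ Wint lam (n+1)) ∩ Set.Ioc 0 1) :=
        le_trans (measure_mono hcover) (measure_iUnion_le _)
    _ ≤ ∑' n, ENNReal.ofReal (4 * lam * (1 - lam)) * muF lam (A ∩ Wint lam (n+1)) :=
        ENNReal.tsum_le_tsum fun n =>
          key_branch h1 h2 (Nat.succ_le_succ (Nat.zero_le n)) (hAm n) inter_subset_right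
    _ = ENNReal.ofReal (4 * lam * (1 - lam)) * ∑' n, muF lam (A ∩ Wint lam (n+1)) :=
        ENNReal.tsum_mul_left
    _ = ENNReal.ofReal (4 * lam * (1 - lam)) * muF lam A := by
        rw [← measure_iUnion hdisj hAm, hdecomp]

lemma key_iter (h1 : 1/2 < lam) (h2 : lam < 1) (k : ℕ) : ∀ {A : Set ℝ},
    MeasurableSet A → A ⊆ Set.Ioc (0:ℝ) 1 →
    muF lam ((Flam lam)^[k] ⁻¹' A ∩ Set.Ioc 0 1) ≤
      (ENNReal.ofReal (4 * lam * (1 - lam)))^k * muF lam A := by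
  have h0 : 0 < lam := by linarith
  induction k with
  | zero =>
    intro A hA hsub
    simpa using measure_mono (inter_subset_left (s := A) (t := Set.Ioc (0:ℝ) 1))
  | succ k ih =>
    intro A hA hsub
    have hB : MeasurableSet (Flam lam ⁻¹' A ∩ Set.Ioc 0 1) :=
      (hA.preimage (measurable_Flam h0 h2)).inter measurableSet_Ioc
    have hsub3 : (Flam lam)^[k+1] ⁻¹' A ∩ Set.Ioc 0 1 ⊆
        (Flam lam)^[k] ⁻¹' (Flam lam ⁻¹' A ∩ Set.Ioc 0 1) ∩ Set.Ioc 0 1 := by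
      rintro x ⟨hxA, hxI⟩
      refine ⟨⟨?_, iter_mem_Ioc h0 h2 hxI k⟩, hxI⟩
      rw [mem_preimage, ← Function.iterate_succ_apply' (Flam lam) k x]
      exact hxA
    calc muF lam ((Flam lam)^[k+1] ⁻¹' A ∩ Set.Ioc 0 1)
        ≤ muF lam ((Flam lam)^[k] ⁻¹' (Flam lam ⁻¹' A ∩ Set.Ioc 0 1) ∩ Set.Ioc 0 1) :=
          measure_mono hsub3
      _ ≤ (ENNReal.ofReal (4 * lam * (1 - lam)))^k * muF lam (Flam lam ⁻¹' A ∩ Set.Ioc 0 1) :=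
          ih hB inter_subset_right
      _ ≤ (ENNReal.ofReal (4 * lam * (1 - lam)))^k *
            (ENNReal.ofReal (4 * lam * (1 - lam)) * muF lam A) :=
          mul_le_mul_right (key_general h1 h2 hA hsub) _
      _ = (ENNReal.ofReal (4 * lam * (1 - lam)))^(k+1) * muF lam A := by ring

end auxsec

/-- For `lam ∈ (1/2, 1)`, for Lebesgue-a.e. `x ∈ (0,1]` the orbit
`F_lam^n(x)` tends to `0`; in particular Lebesgue measure is dissipative. -/
theorem stmt2 (lam : ℝ) (h1 : 1/2 < lam) (h2 : lam < 1) :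
    ∀ᵐ x ∂(volume.restrict (Set.Ioc (0:ℝ) 1)),
      Filter.Tendsto (fun n => (Flam lam)^[n] x) Filter.atTop (nhds 0) := by
  have h0 : 0 < lam := by linarith
  have hρlt : ENNReal.ofReal (4 * lam * (1 - lam)) < 1 := by
    rw [← ENNReal.ofReal_one]
    apply (ENNReal.ofReal_lt_ofReal_iff (by norm_num)).2
    nlinarith
  have hmain : ∀ N : ℕ, ∀ᵐ x ∂(volume.restrict (Set.Ioc (0:ℝ) 1)),
      ∀ᶠ k in atTop, (Flam lam)^[k] x ∉ Set.Ioc (lam ^ N) 1 := by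
    intro N
    apply ae_eventually_notMem (s := fun k => (Flam lam)^[k] ⁻¹' Set.Ioc (lam ^ N) 1)
    have hbound : ∀ k : ℕ,
        (volume.restrict (Set.Ioc (0:ℝ) 1)) ((Flam lam)^[k] ⁻¹' Set.Ioc (lam ^ N) 1)
          ≤ (ENNReal.ofReal (4 * lam * (1 - lam)))^k * 2 ^ N := by
      intro k
      rw [Measure.restrict_apply' measurableSet_Ioc]
      have hmeas : MeasurableSet ((Flam lam)^[k] ⁻¹' Set.Ioc (lam ^ N) 1 ∩ Set.Ioc (0:ℝ) 1) :=
        (measurableSet_Ioc.preimage ((measurable_Flam h0 h2).iterate k)).inter measurableSet_Ioc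
      calc volume ((Flam lam)^[k] ⁻¹' Set.Ioc (lam ^ N) 1 ∩ Set.Ioc 0 1)
          ≤ muF lam ((Flam lam)^[k] ⁻¹' Set.Ioc (lam ^ N) 1 ∩ Set.Ioc 0 1) :=
            volume_le_muF hmeas
        _ ≤ (ENNReal.ofReal (4 * lam * (1 - lam)))^k * muF lam (Set.Ioc (lam ^ N) 1) :=
            key_iter h1 h2 k measurableSet_Ioc (Set.Ioc_subset_Ioc_left (pow_pos h0 N).le)
        _ ≤ (ENNReal.ofReal (4 * lam * (1 - lam)))^k * 2 ^ N :=
            mul_le_mul_right (muF_Ioc_le h0 h2 N) _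
    refine ne_top_of_le_ne_top ?_ (ENNReal.tsum_le_tsum hbound)
    rw [ENNReal.tsum_mul_right, ENNReal.tsum_geometric]
    exact ENNReal.mul_ne_top (ENNReal.inv_ne_top.2 (tsub_pos_of_lt hρlt).ne')
      (by simp [ENNReal.pow_ne_top])
  have hae : ∀ᵐ x ∂(volume.restrict (Set.Ioc (0:ℝ) 1)),
      (∀ N : ℕ, ∀ᶠ k in atTop, (Flam lam)^[k] x ∉ Set.Ioc (lam ^ N) 1) ∧ x ∈ Set.Ioc (0:ℝ) 1 :=
    ((ae_all_iff.2 hmain).and (ae_restrict_mem measurableSet_Ioc))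
  filter_upwards [hae] with x hx
  obtain ⟨hx1, hx2⟩ := hx
  have hiter : ∀ k, (Flam lam)^[k] x ∈ Set.Ioc (0:ℝ) 1 := fun k => iter_mem_Ioc h0 h2 hx2 k
  rw [tendsto_order]
  constructor
  · intro a ha
    exact Eventually.of_forall fun k => lt_trans ha (hiter k).1
  · intro a ha
    obtain ⟨N, hN⟩ := ((tendsto_pow_atTop_nhds_zero_of_lt_one h0.le h2).eventually
      (gt_mem_nhds ha)).exists
    filter_upwards [hx1 N] with k hk
    have hle : (Flam lam)^[k] x ≤ lam ^ N := by
      by_contra hc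
      push_neg at hc
      exact hk ⟨hc, (hiter k).2⟩
    exact lt_of_le_of_lt hle hN
end

section
/- Let λ ∈ (0,1) and t > 0, and set p = log ψ(t) where ψ(t) = (1−λ)^t/(1−λ^t). Then there exists a (t,p)-conformal Borel probability measure m on (0,1] satisfying m(W_k) = (1−λ^t)·λ^{t(k−1)} for every k ≥ 1. -/
open MeasureTheory Set Filter Topology

namespace S4

/-- branch index -/
noncomputable def kidx (lam x : ℝ) : ℕ := sInf {n : ℕ | lam ^ n < x}

/-- reciprocal slope of branch n -/
noncomputable def dfac (lam : ℝ) (n : ℕ) : ℝ := if n = 1 then 1 - lam else lam * (1 - lam)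

variable {lam : ℝ} (hl1 : 0 < lam) (hl2 : lam < 1)
include hl1 hl2

lemma dfac_pos (n : ℕ) : 0 < dfac lam n := by
  unfold dfac; split
  · linarith
  · have : 0 < 1 - lam := by linarith
    positivity

lemma dfac_le_one (n : ℕ) : dfac lam n ≤ 1 := by
  unfold dfac; split
  · linarith
  · nlinarith

lemma Wint_subset (n : ℕ) (hn : 1 ≤ n) : Wint lam n ⊆ Set.Ioc 0 1 := by
  intro x hx
  have h0 : (0:ℝ) < lam ^ n := pow_pos hl1 n
  exact ⟨lt_trans h0 hx.1, hx.2.trans (pow_le_one₀ hl1.le hl2.le)⟩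

lemma kidx_eq {x : ℝ} {n : ℕ} (hn : 1 ≤ n) (hx : x ∈ Wint lam n) : kidx lam x = n := by
  refine le_antisymm (Nat.sInf_le hx.1) ?_
  refine le_csInf ⟨n, hx.1⟩ ?_
  intro m hm
  by_contra hc
  push_neg at hc
  have h1 : m ≤ n - 1 := by omega
  have : lam ^ (n-1) ≤ lam ^ m := pow_le_pow_of_le_one hl1.le hl2.le h1
  have : x ≤ lam ^ m := hx.2.trans this
  exact absurd hm (not_lt.2 this)

lemma kidx_pos {x : ℝ} (hx : x ∈ Set.Ioc 0 1) : 1 ≤ kidx lam x := by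
  have hne : {n : ℕ | lam ^ n < x}.Nonempty := by
    obtain ⟨n, hn⟩ := exists_pow_lt_of_lt_one hx.1 hl2
    exact ⟨n, hn⟩
  rcases Nat.eq_zero_or_pos (kidx lam x) with h | h
  · exfalso
    have := Nat.sInf_mem hne
    rw [show sInf {n : ℕ | lam ^ n < x} = kidx lam x from rfl, h] at this
    simp only [Set.mem_setOf_eq, pow_zero] at this
    exact absurd hx.2 (not_le.2 this)
  · exact h

lemma mem_Wint_kidx {x : ℝ} (hx : x ∈ Set.Ioc 0 1) : x ∈ Wint lam (kidx lam x) := by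
  have hne : {n : ℕ | lam ^ n < x}.Nonempty := by
    obtain ⟨n, hn⟩ := exists_pow_lt_of_lt_one hx.1 hl2
    exact ⟨n, hn⟩
  constructor
  · exact Nat.sInf_mem hne
  · have h1 : 1 ≤ kidx lam x := kidx_pos hl1 hl2 hx
    have : kidx lam x - 1 < kidx lam x := by omega
    have h2 := Nat.notMem_of_lt_sInf (s := {n : ℕ | lam ^ n < x}) this
    simpa using h2

/-- x ≤ lam ^ j implies the branch index is > j -/
lemma lt_kidx {x : ℝ} (hx : 0 < x) {j : ℕ} (hj : x ≤ lam ^ j) : j < kidx lam x := by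
  by_contra hc
  push_neg at hc
  have hmem : kidx lam x ∈ {n : ℕ | lam ^ n < x} := by
    have hne : {n : ℕ | lam ^ n < x}.Nonempty := by
      obtain ⟨n, hn⟩ := exists_pow_lt_of_lt_one hx hl2
      exact ⟨n, hn⟩
    exact Nat.sInf_mem hne
  have : lam ^ j ≤ lam ^ (kidx lam x) := pow_le_pow_of_le_one hl1.le hl2.le hc
  have : lam ^ j < x := lt_of_le_of_lt this hmem
  linarith

lemma kidx_mono {x y : ℝ} (hx : 0 < x) (hxy : x ≤ y) : kidx lam y ≤ kidx lam x := by
  have hne : {n : ℕ | lam ^ n < x}.Nonempty := by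
    obtain ⟨n, hn⟩ := exists_pow_lt_of_lt_one hx hl2
    exact ⟨n, hn⟩
  have hmem := Nat.sInf_mem hne
  exact Nat.sInf_le (lt_of_lt_of_le hmem hxy)

lemma Flam_eq {x : ℝ} {n : ℕ} (hn : 1 ≤ n) (hx : x ∈ Wint lam n) :
    Flam lam x = (x - lam ^ n) / dfac lam n := by
  have hIoc := Wint_subset hl1 hl2 n hn hx
  have hk : kidx lam x = n := kidx_eq hl1 hl2 hn hx
  unfold Flam
  rw [if_pos ⟨hIoc.1, hIoc.2⟩]
  unfold kidx at hk
  rw [hk]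
  unfold dfac
  by_cases h : n = 1
  · rw [if_pos h, if_pos h, h, pow_one]
  · rw [if_neg h, if_neg h]

lemma Flam_mem {x : ℝ} {n : ℕ} (hn : 1 ≤ n) (hx : x ∈ Wint lam n) :
    Flam lam x ∈ Set.Ioc 0 1 := by
  rw [Flam_eq hl1 hl2 hn hx]
  have hd := dfac_pos hl1 hl2 (lam := lam) n
  constructor
  · apply div_pos _ hd; linarith [hx.1]
  · rw [div_le_one hd]
    have h2 : x ≤ lam ^ (n-1) := hx.2
    have key : lam ^ (n-1) - lam ^ n ≤ dfac lam n := by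
      unfold dfac
      by_cases h : n = 1
      · rw [if_pos h, h]; norm_num
      · rw [if_neg h]
        have h2n : 2 ≤ n := by omega
        have : lam ^ (n-1) = lam ^ (n-2) * lam := by
          rw [← pow_succ]; congr 1; omega
        have hn' : lam ^ n = lam ^ (n-2) * lam * lam := by
          rw [← pow_succ, ← pow_succ]; congr 1; omega
        rw [this, hn']
        have hp2 : lam ^ (n-2) ≤ 1 := pow_le_one₀ hl1.le hl2.le
        nlinarith [mul_pos hl1 (show (0:ℝ) < 1 - lam by linarith)]
    linarith

lemma Flam_le {x : ℝ} {n : ℕ} (hn : 2 ≤ n) (hx : x ∈ Wint lam n) :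
    Flam lam x ≤ lam ^ (n - 2) := by
  rw [Flam_eq hl1 hl2 (by omega) hx]
  have hd := dfac_pos hl1 hl2 (lam := lam) n
  rw [div_le_iff₀ hd]
  have h2 : x ≤ lam ^ (n-1) := hx.2
  have e1 : lam ^ (n-1) = lam ^ (n-2) * lam := by rw [← pow_succ]; congr 1; omega
  have e2 : lam ^ n = lam ^ (n-2) * lam * lam := by rw [← pow_succ, ← pow_succ]; congr 1; omega
  have hdf : dfac lam n = lam * (1 - lam) := by unfold dfac; rw [if_neg (by omega)]
  rw [hdf, e2]
  nlinarith [hx.2, e1]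

lemma Flam_mono {x y : ℝ} {n : ℕ} (hn : 1 ≤ n) (hx : x ∈ Wint lam n) (hy : y ∈ Wint lam n)
    (hxy : x ≤ y) : Flam lam x ≤ Flam lam y := by
  rw [Flam_eq hl1 hl2 hn hx, Flam_eq hl1 hl2 hn hy]
  have hd := dfac_pos hl1 hl2 (lam := lam) n
  gcongr



noncomputable def rfac (mu : ℝ) (n : ℕ) : ℝ := if n = 1 then 1 - mu else mu * (1 - mu)

noncomputable def Sfn (lam mu : ℝ) : ℕ → ℝ → ℝ
  | 0 => fun _ => 0
  | (m+1) => fun x => if 0 < x ∧ x ≤ 1 then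
      mu ^ (kidx lam x) + rfac mu (kidx lam x) * Sfn lam mu m (Flam lam x) else 0

variable {mu : ℝ} (hm1 : 0 < mu) (hm2 : mu < 1)

omit hl1 hl2 in
lemma Sfn_succ (m : ℕ) (x : ℝ) : Sfn lam mu (m+1) x = if 0 < x ∧ x ≤ 1 then
    mu ^ (kidx lam x) + rfac mu (kidx lam x) * Sfn lam mu m (Flam lam x) else 0 := rfl

include hm1 hm2

omit hl1 hl2

lemma rfac_pos (n : ℕ) : 0 < rfac mu n := by
  unfold rfac; split
  · linarith
  · have : 0 < 1 - mu := by linarith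
    positivity

lemma rfac_le (n : ℕ) : rfac mu n ≤ 1 - mu := by
  unfold rfac; split
  · exact le_refl _
  · nlinarith

include hl1 hl2

lemma Sfn_nonneg : ∀ m x, 0 ≤ Sfn lam mu m x := by
  intro m
  induction m with
  | zero => intro x; simp [Sfn]
  | succ m ih =>
    intro x
    rw [Sfn_succ]
    split
    · have h1 := rfac_pos hm1 hm2 (kidx lam x)
      have h2 := ih (Flam lam x)
      positivity
    · exact le_refl _

lemma Sfn_le : ∀ m, ∀ x ∈ Set.Ioc (0:ℝ) 1, Sfn lam mu m x ≤ mu ^ (kidx lam x - 1) := by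
  intro m
  induction m with
  | zero => intro x _; simp [Sfn]; positivity
  | succ m ih =>
    intro x hx
    set n := kidx lam x with hn
    have hn1 : 1 ≤ n := kidx_pos hl1 hl2 hx
    have hW : x ∈ Wint lam n := mem_Wint_kidx hl1 hl2 hx
    have hF : Flam lam x ∈ Set.Ioc (0:ℝ) 1 := Flam_mem hl1 hl2 hn1 hW
    have hS := ih (Flam lam x) hF
    rw [Sfn_succ, if_pos ⟨hx.1, hx.2⟩, ← hn]
    by_cases h : n = 1
    · have : Sfn lam mu m (Flam lam x) ≤ 1 := by
        refine hS.trans ?_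
        exact pow_le_one₀ hm1.le hm2.le
      rw [h]
      unfold rfac
      rw [if_pos rfl]
      have hp0 : mu ^ (1 - 1) = 1 := by norm_num
      rw [hp0]
      simp only [pow_one]
      nlinarith
    · have h2 : 2 ≤ n := by omega
      have hFle : Flam lam x ≤ lam ^ (n - 2) := Flam_le hl1 hl2 h2 hW
      have hk : n - 2 < kidx lam (Flam lam x) := lt_kidx hl1 hl2 hF.1 hFle
      have hle2 : Sfn lam mu m (Flam lam x) ≤ mu ^ (n - 2) := by
        refine hS.trans ?_
        apply pow_le_pow_of_le_one hm1.le hm2.le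
        omega
      unfold rfac
      rw [if_neg h]
      have e1 : mu ^ (n-1) = mu ^ (n-2) * mu := by rw [← pow_succ]; congr 1; omega
      have e2 : mu ^ n = mu ^ (n-2) * mu * mu := by rw [← pow_succ, ← pow_succ]; congr 1; omega
      rw [e1, e2]
      nlinarith [pow_nonneg hm1.le (n-2), Sfn_nonneg hl1 hl2 hm1 hm2 m (Flam lam x),
        mul_le_mul_of_nonneg_left hle2
          (le_of_lt (mul_pos hm1 (show (0:ℝ) < 1 - mu by linarith)))]

lemma Sfn_le_one : ∀ m, ∀ x ∈ Set.Ioc (0:ℝ) 1, Sfn lam mu m x ≤ 1 := by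
  intro m x hx
  exact (Sfn_le hl1 hl2 hm1 hm2 m x hx).trans (pow_le_one₀ hm1.le hm2.le)

lemma Sfn_mono_m : ∀ m x, Sfn lam mu m x ≤ Sfn lam mu (m+1) x := by
  intro m
  induction m with
  | zero =>
    intro x
    exact Sfn_nonneg hl1 hl2 hm1 hm2 1 x
  | succ m ih =>
    intro x
    rw [Sfn_succ, Sfn_succ]
    split
    · have := ih (Flam lam x)
      have hr := rfac_pos hm1 hm2 (kidx lam x)
      nlinarith
    · exact le_refl _

lemma Sfn_mono_x : ∀ m, ∀ x y, x ∈ Set.Ioc (0:ℝ) 1 → y ∈ Set.Ioc (0:ℝ) 1 → x ≤ y →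
    Sfn lam mu m x ≤ Sfn lam mu m y := by
  intro m
  induction m with
  | zero => intro x y _ _ _; exact le_refl _
  | succ m ih =>
    intro x y hx hy hxy
    have hnx1 : 1 ≤ kidx lam x := kidx_pos hl1 hl2 hx
    have hny1 : 1 ≤ kidx lam y := kidx_pos hl1 hl2 hy
    have hWx : x ∈ Wint lam (kidx lam x) := mem_Wint_kidx hl1 hl2 hx
    have hWy : y ∈ Wint lam (kidx lam y) := mem_Wint_kidx hl1 hl2 hy
    by_cases hk : kidx lam x = kidx lam y
    · rw [Sfn_succ, Sfn_succ, if_pos ⟨hx.1, hx.2⟩, if_pos ⟨hy.1, hy.2⟩, hk]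
      have hWx' : x ∈ Wint lam (kidx lam y) := hk ▸ hWx
      have hmono : Flam lam x ≤ Flam lam y := Flam_mono hl1 hl2 hny1 hWx' hWy hxy
      have hFx : Flam lam x ∈ Set.Ioc (0:ℝ) 1 := Flam_mem hl1 hl2 hny1 hWx'
      have hFy : Flam lam y ∈ Set.Ioc (0:ℝ) 1 := Flam_mem hl1 hl2 hny1 hWy
      have := ih (Flam lam x) (Flam lam y) hFx hFy hmono
      have hr := rfac_pos hm1 hm2 (kidx lam y)
      nlinarith
    · have hlt : kidx lam y < kidx lam x :=
        lt_of_le_of_ne (kidx_mono hl1 hl2 hx.1 hxy) (fun h => hk h.symm)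
      calc Sfn lam mu (m+1) x ≤ mu ^ (kidx lam x - 1) :=
            Sfn_le hl1 hl2 hm1 hm2 (m+1) x hx
        _ ≤ mu ^ (kidx lam y) := by
            apply pow_le_pow_of_le_one hm1.le hm2.le; omega
        _ ≤ Sfn lam mu (m+1) y := by
            rw [Sfn_succ, if_pos ⟨hy.1, hy.2⟩]
            have hr := rfac_pos hm1 hm2 (kidx lam y)
            have hs := Sfn_nonneg hl1 hl2 hm1 hm2 m (Flam lam y)
            nlinarith


noncomputable def hfun (lam mu : ℝ) (x : ℝ) : ℝ :=
  if x ≤ 0 then 0 else if 1 ≤ x then 1 else ⨆ m, Sfn lam mu m x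

lemma hfun_bdd {x : ℝ} (hx : x ∈ Set.Ioc (0:ℝ) 1) :
    BddAbove (Set.range fun m => Sfn lam mu m x) := by
  refine ⟨1, ?_⟩
  rintro z ⟨m, rfl⟩
  exact Sfn_le_one hl1 hl2 hm1 hm2 m x hx

lemma hfun_eq_csSup {x : ℝ} (hx : 0 < x) (hx1 : x < 1) :
    hfun lam mu x = ⨆ m, Sfn lam mu m x := by
  unfold hfun
  rw [if_neg (by linarith), if_neg (by linarith)]

omit hl1 hl2 hm1 hm2 in
lemma hfun_one : hfun lam mu 1 = 1 := by
  unfold hfun; rw [if_neg (by norm_num), if_pos le_rfl]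

omit hm1 hm2 in
lemma kidx_one : kidx lam 1 = 1 := by
  apply kidx_eq hl1 hl2 le_rfl
  constructor
  · simpa using hl2
  · norm_num

omit hm1 hm2 in
lemma Flam_one : Flam lam 1 = 1 := by
  have h1 : (1:ℝ) ∈ Wint lam 1 := by
    constructor
    · simpa using hl2
    · norm_num
  rw [Flam_eq hl1 hl2 le_rfl h1]
  unfold dfac
  rw [if_pos rfl, pow_one]
  exact div_self (by linarith)

lemma Sfn_one (m : ℕ) : Sfn lam mu m 1 = 1 - (1-mu)^m := by
  induction m with
  | zero => show (0:ℝ) = 1 - (1-mu)^0; norm_num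
  | succ m ih =>
    rw [Sfn_succ, if_pos (by norm_num), kidx_one hl1 hl2, Flam_one hl1 hl2, ih]
    unfold rfac
    rw [if_pos rfl, pow_one]
    ring

lemma tendsto_Sfn {x : ℝ} (hx : x ∈ Set.Ioc (0:ℝ) 1) :
    Tendsto (fun m => Sfn lam mu m x) atTop (𝓝 (hfun lam mu x)) := by
  rcases lt_or_eq_of_le hx.2 with h | h
  · rw [hfun_eq_csSup hl1 hl2 hm1 hm2 hx.1 h]
    apply tendsto_atTop_ciSup
    · intro a b hab
      induction hab with
      | refl => exact le_refl _
      | step _ ih => exact ih.trans (Sfn_mono_m hl1 hl2 hm1 hm2 _ x)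
    · exact hfun_bdd hl1 hl2 hm1 hm2 hx
  · subst h
    rw [hfun_one]
    have : (fun m => Sfn lam mu m 1) = fun m => 1 - (1-mu)^m := by
      funext m; exact Sfn_one hl1 hl2 hm1 hm2 m
    rw [this]
    have h0 : Tendsto (fun m : ℕ => (1-mu)^m) atTop (𝓝 0) :=
      tendsto_pow_atTop_nhds_zero_of_lt_one (by linarith) (by linarith)
    have := (tendsto_const_nhds (x := (1:ℝ)) (f := atTop (α := ℕ))).sub h0
    simpa using this

lemma hfun_nonneg (x : ℝ) : 0 ≤ hfun lam mu x := by
  unfold hfun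
  split
  · exact le_refl _
  · split
    · norm_num
    · rename_i h1 h2
      push_neg at h1 h2
      refine le_ciSup_of_le (hfun_bdd hl1 hl2 hm1 hm2 ⟨h1, h2.le⟩) 0 ?_
      exact le_of_eq rfl

lemma hfun_le_pow {x : ℝ} (hx : x ∈ Set.Ioc (0:ℝ) 1) :
    hfun lam mu x ≤ mu ^ (kidx lam x - 1) := by
  refine le_of_tendsto (tendsto_Sfn hl1 hl2 hm1 hm2 hx) ?_
  filter_upwards with m
  exact Sfn_le hl1 hl2 hm1 hm2 m x hx

lemma hfun_le_one (x : ℝ) : hfun lam mu x ≤ 1 := by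
  unfold hfun
  split
  · norm_num
  · split
    · exact le_refl _
    · rename_i h1 h2
      push_neg at h1 h2
      apply ciSup_le
      intro m
      exact Sfn_le_one hl1 hl2 hm1 hm2 m x ⟨h1, h2.le⟩

lemma hfun_mono : Monotone (hfun lam mu) := by
  intro x y hxy
  rcases le_or_gt x 0 with hx0 | hx0
  · rw [show hfun lam mu x = 0 by unfold hfun; rw [if_pos hx0]]
    exact hfun_nonneg hl1 hl2 hm1 hm2 y
  rcases le_or_gt 1 y with hy1 | hy1
  · rw [show hfun lam mu y = 1 by unfold hfun; rw [if_neg (by linarith), if_pos hy1]]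
    exact hfun_le_one hl1 hl2 hm1 hm2 x
  -- now 0 < x ≤ y < 1
  rw [hfun_eq_csSup hl1 hl2 hm1 hm2 hx0 (lt_of_le_of_lt hxy hy1),
      hfun_eq_csSup hl1 hl2 hm1 hm2 (lt_of_lt_of_le hx0 hxy) hy1]
  apply ciSup_mono (hfun_bdd hl1 hl2 hm1 hm2 ⟨lt_of_lt_of_le hx0 hxy, hy1.le⟩)
  intro m
  exact Sfn_mono_x hl1 hl2 hm1 hm2 m x y ⟨hx0, by linarith⟩ ⟨by linarith, hy1.le⟩ hxy

lemma hfun_funEq {x : ℝ} (hx : x ∈ Set.Ioc (0:ℝ) 1) :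
    hfun lam mu x = mu ^ (kidx lam x) + rfac mu (kidx lam x) * hfun lam mu (Flam lam x) := by
  have hn1 : 1 ≤ kidx lam x := kidx_pos hl1 hl2 hx
  have hW : x ∈ Wint lam (kidx lam x) := mem_Wint_kidx hl1 hl2 hx
  have hF : Flam lam x ∈ Set.Ioc (0:ℝ) 1 := Flam_mem hl1 hl2 hn1 hW
  have t1 : Tendsto (fun m => Sfn lam mu (m+1) x) atTop (𝓝 (hfun lam mu x)) :=
    (tendsto_Sfn hl1 hl2 hm1 hm2 hx).comp (tendsto_add_atTop_nat 1)
  have t2 : Tendsto (fun m => mu ^ (kidx lam x) + rfac mu (kidx lam x) * Sfn lam mu m (Flam lam x))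
      atTop (𝓝 (mu ^ (kidx lam x) + rfac mu (kidx lam x) * hfun lam mu (Flam lam x))) := by
    exact tendsto_const_nhds.add (tendsto_const_nhds.mul (tendsto_Sfn hl1 hl2 hm1 hm2 hF))
  have : (fun m => Sfn lam mu (m+1) x) =
      fun m => mu ^ (kidx lam x) + rfac mu (kidx lam x) * Sfn lam mu m (Flam lam x) := by
    funext m
    rw [Sfn_succ, if_pos ⟨hx.1, hx.2⟩]
  rw [this] at t1
  exact tendsto_nhds_unique t1 t2

lemma hfun_pow (j : ℕ) : hfun lam mu (lam ^ j) = mu ^ j := by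
  induction j with
  | zero => simpa using hfun_one (lam := lam) (mu := mu)
  | succ j ih =>
    have hWj : lam ^ (j+1) ∈ Wint lam (j+2) := by
      constructor
      · exact pow_lt_pow_right_of_lt_one₀ hl1 hl2 (by omega)
      · norm_num
    have hmem : lam ^ (j+1) ∈ Set.Ioc (0:ℝ) 1 := Wint_subset hl1 hl2 (j+2) (by omega) hWj
    have hk : kidx lam (lam ^ (j+1)) = j + 2 := kidx_eq hl1 hl2 (by omega) hWj
    have hFl : Flam lam (lam ^ (j+1)) = lam ^ j := by
      rw [Flam_eq hl1 hl2 (by omega) hWj]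
      unfold dfac
      rw [if_neg (by omega)]
      have : lam ^ (j + 2) = lam ^ j * lam * lam := by ring
      rw [this, div_eq_iff (by nlinarith : lam * (1 - lam) ≠ 0)]
      ring
    rw [hfun_funEq hl1 hl2 hm1 hm2 hmem, hk, hFl, ih]
    unfold rfac
    rw [if_neg (by omega)]
    ring


omit hl1 hl2 hm1 hm2 in
lemma hfun_zero : hfun lam mu 0 = 0 := by unfold hfun; rw [if_pos le_rfl]

omit hl1 hl2 hm1 hm2 in
lemma hfun_ge_one {x : ℝ} (hx : 1 ≤ x) : hfun lam mu x = 1 := by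
  unfold hfun; rw [if_neg (by linarith), if_pos hx]

omit hl1 hl2 hm1 hm2 in
lemma hfun_nonpos {x : ℝ} (hx : x ≤ 0) : hfun lam mu x = 0 := by
  unfold hfun; rw [if_pos hx]

lemma rightLim_zero : Function.rightLim (hfun lam mu) 0 = 0 := by
  have hmono := hfun_mono hl1 hl2 hm1 hm2
  have hub : ∀ N : ℕ, Function.rightLim (hfun lam mu) 0 ≤ mu ^ N := by
    intro N
    have h1 : (0:ℝ) < lam ^ N := pow_pos hl1 N
    have := hmono.rightLim_le h1
    rwa [hfun_pow hl1 hl2 hm1 hm2 N] at this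
  have h0 : Tendsto (fun N : ℕ => mu ^ N) atTop (𝓝 0) :=
    tendsto_pow_atTop_nhds_zero_of_lt_one hm1.le hm2
  have hle : Function.rightLim (hfun lam mu) 0 ≤ 0 :=
    ge_of_tendsto h0 (Eventually.of_forall hub)
  have hge : 0 ≤ Function.rightLim (hfun lam mu) 0 := by
    have := hmono.le_rightLim (le_refl (0:ℝ))
    rwa [hfun_zero] at this
  linarith

lemma tendsto_hfun_zero : Tendsto (hfun lam mu) (𝓝[>] (0:ℝ)) (𝓝 0) := by
  have := (hfun_mono hl1 hl2 hm1 hm2).tendsto_rightLim 0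
  rwa [rightLim_zero hl1 hl2 hm1 hm2] at this

lemma hfun_eventually {x : ℝ} {k : ℕ} (hk : 1 ≤ k) (hxl : lam ^ k ≤ x)
    (hxu : x < lam ^ (k-1)) :
    ∀ᶠ y in 𝓝[>] x, hfun lam mu y =
      mu ^ k + rfac mu k * hfun lam mu ((y - lam ^ k) / dfac lam k) := by
  filter_upwards [Ioo_mem_nhdsGT_of_mem (Set.mem_Ico.2 ⟨le_rfl, hxu⟩)] with y hy
  have hyW : y ∈ Wint lam k := ⟨lt_of_le_of_lt hxl hy.1, hy.2.le⟩
  have hyIoc : y ∈ Set.Ioc (0:ℝ) 1 := Wint_subset hl1 hl2 k hk hyW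
  have := hfun_funEq hl1 hl2 hm1 hm2 hyIoc
  rwa [kidx_eq hl1 hl2 hk hyW, Flam_eq hl1 hl2 hk hyW] at this

omit hm1 hm2 in
lemma tendsto_affine (x : ℝ) (k : ℕ) :
    Tendsto (fun y => (y - lam ^ k) / dfac lam k) (𝓝[>] x)
      (𝓝[>] ((x - lam ^ k) / dfac lam k)) := by
  have hd := dfac_pos hl1 hl2 (lam := lam) k
  apply tendsto_nhdsWithin_of_tendsto_nhds_of_eventually_within
  · have hcont : Continuous (fun y : ℝ => (y - lam ^ k) / dfac lam k) := by
      apply Continuous.div_const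
      exact continuous_id.sub continuous_const
    exact (hcont.tendsto x).mono_left nhdsWithin_le_nhds
  · filter_upwards [self_mem_nhdsWithin] with y hy
    have hxy : x < y := hy
    simp only [Set.mem_Ioi]
    gcongr

/-- The right limit of `hfun` coincides with `hfun` everywhere. -/
lemma rightLim_eq (x : ℝ) : Function.rightLim (hfun lam mu) x = hfun lam mu x := by
  classical
  have hmono := hfun_mono hl1 hl2 hm1 hm2
  set g : ℝ → ℝ := fun x => Function.rightLim (hfun lam mu) x - hfun lam mu x with hg
  have hg0 : ∀ x, 0 ≤ g x := fun x => by
    have := hmono.le_rightLim (le_refl x); simp [hg]; linarith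
  have hg1 : ∀ x, g x ≤ 1 := fun x => by
    have h1 : Function.rightLim (hfun lam mu) x ≤ hfun lam mu (x+1) :=
      hmono.rightLim_le (by linarith)
    have h2 := hfun_le_one hl1 hl2 hm1 hm2 (x+1)
    have h3 := hfun_nonneg hl1 hl2 hm1 hm2 x
    simp only [hg]; linarith
  have hbdd : BddAbove (Set.range g) := ⟨1, by rintro z ⟨u, rfl⟩; exact hg1 u⟩
  have hne : (Set.range g).Nonempty := ⟨g 0, 0, rfl⟩
  set G := sSup (Set.range g) with hG
  have hGnonneg : 0 ≤ G := le_csSup_of_le hbdd ⟨0, rfl⟩ (hg0 0)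
  -- key step : every g value is ≤ (1-mu) * G
  have key : ∀ x, g x ≤ (1 - mu) * G := by
    intro x
    rcases lt_or_ge x 0 with hx | hx
    · -- x < 0 : g x = 0
      have : Function.rightLim (hfun lam mu) x ≤ hfun lam mu (x/2) :=
        hmono.rightLim_le (by linarith)
      rw [hfun_nonpos (by linarith : x/2 ≤ 0)] at this
      have h0 := hg0 x
      have : g x ≤ 0 := by simp only [hg]; rw [hfun_nonpos hx.le]; linarith
      nlinarith
    rcases eq_or_lt_of_le hx with hx0 | hx0
    · -- x = 0
      have : g x = 0 := by
        simp only [hg, ← hx0]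
        rw [rightLim_zero hl1 hl2 hm1 hm2, hfun_zero]; ring
      rw [this]; nlinarith
    rcases le_or_gt 1 x with hx1 | hx1
    · -- x ≥ 1
      have h1 : Function.rightLim (hfun lam mu) x ≤ hfun lam mu (x+1) :=
        hmono.rightLim_le (by linarith)
      rw [hfun_ge_one (by linarith : (1:ℝ) ≤ x + 1)] at h1
      have : g x ≤ 0 := by simp only [hg]; rw [hfun_ge_one hx1]; linarith
      nlinarith [hg0 x]
    -- now 0 < x < 1
    have hxIoc : x ∈ Set.Ioc (0:ℝ) 1 := ⟨hx0, hx1.le⟩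
    set k := kidx lam x with hk
    have hk1 : 1 ≤ k := kidx_pos hl1 hl2 hxIoc
    have hW : x ∈ Wint lam k := mem_Wint_kidx hl1 hl2 hxIoc
    rcases eq_or_lt_of_le hW.2 with hxe | hxu
    · -- x = lam ^ (k-1) : right endpoint, here g x = 0
      have hk2 : 2 ≤ k := by
        by_contra hc
        have : k = 1 := by omega
        rw [this] at hxe
        simp at hxe
        linarith
      set j := k - 1 with hj
      have hj1 : 1 ≤ j := by omega
      have hxj : x = lam ^ j := hxe
      have hxuj : x < lam ^ (j-1) := by
        rw [hxj]
        exact pow_lt_pow_right_of_lt_one₀ hl1 hl2 (by omega)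
      have hev := hfun_eventually hl1 hl2 hm1 hm2 hj1 (le_of_eq hxj.symm) hxuj
      have haff : Tendsto (fun y => (y - lam ^ j) / dfac lam j) (𝓝[>] x) (𝓝[>] (0:ℝ)) := by
        have := tendsto_affine hl1 hl2 x j
        rw [show (x - lam ^ j) / dfac lam j = 0 by rw [hxj]; simp] at this
        exact this
      have hcomp : Tendsto (fun y => hfun lam mu ((y - lam ^ j) / dfac lam j)) (𝓝[>] x)
          (𝓝 0) := (tendsto_hfun_zero hl1 hl2 hm1 hm2).comp haff
      have htend : Tendsto (hfun lam mu) (𝓝[>] x) (𝓝 (mu ^ j)) := by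
        have : Tendsto (fun y => mu ^ j + rfac mu j * hfun lam mu ((y - lam ^ j) / dfac lam j))
            (𝓝[>] x) (𝓝 (mu ^ j + rfac mu j * 0)) :=
          tendsto_const_nhds.add (tendsto_const_nhds.mul hcomp)
        rw [mul_zero, add_zero] at this
        exact this.congr' (by filter_upwards [hev] with y hy using hy.symm)
      have hrl : Function.rightLim (hfun lam mu) x = mu ^ j :=
        tendsto_nhds_unique (hmono.tendsto_rightLim x) htend
      have : g x = 0 := by
        simp only [hg]
        rw [hrl, hxj, hfun_pow hl1 hl2 hm1 hm2 j]; ring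
      rw [this]; nlinarith
    · -- interior : g x = rfac k * g (Flam x)
      have hev := hfun_eventually hl1 hl2 hm1 hm2 hk1 hW.1.le hxu
      set z := (x - lam ^ k) / dfac lam k with hz
      have haff : Tendsto (fun y => (y - lam ^ k) / dfac lam k) (𝓝[>] x) (𝓝[>] z) :=
        tendsto_affine hl1 hl2 x k
      have hcomp : Tendsto (fun y => hfun lam mu ((y - lam ^ k) / dfac lam k)) (𝓝[>] x)
          (𝓝 (Function.rightLim (hfun lam mu) z)) :=
        (hmono.tendsto_rightLim z).comp haff
      have htend : Tendsto (hfun lam mu) (𝓝[>] x)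
          (𝓝 (mu ^ k + rfac mu k * Function.rightLim (hfun lam mu) z)) := by
        have : Tendsto (fun y => mu ^ k + rfac mu k * hfun lam mu ((y - lam ^ k) / dfac lam k))
            (𝓝[>] x) (𝓝 (mu ^ k + rfac mu k * Function.rightLim (hfun lam mu) z)) :=
          tendsto_const_nhds.add (tendsto_const_nhds.mul hcomp)
        exact this.congr' (by filter_upwards [hev] with y hy using hy.symm)
      have hrl : Function.rightLim (hfun lam mu) x
          = mu ^ k + rfac mu k * Function.rightLim (hfun lam mu) z :=
        tendsto_nhds_unique (hmono.tendsto_rightLim x) htend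
      have hfx : hfun lam mu x = mu ^ k + rfac mu k * hfun lam mu z := by
        have := hfun_funEq hl1 hl2 hm1 hm2 hxIoc
        rwa [← hk, Flam_eq hl1 hl2 hk1 hW, ← hz] at this
      have hgx : g x = rfac mu k * g z := by
        simp only [hg, hrl, hfx]; ring
      rw [hgx]
      have h1 : g z ≤ G := le_csSup hbdd ⟨z, rfl⟩
      have h2 : 0 ≤ g z := hg0 z
      have h3 := rfac_le hm1 hm2 k
      have h4 := rfac_pos hm1 hm2 k
      nlinarith
  -- conclude : G ≤ (1-mu) * G hence G ≤ 0
  have hGle : G ≤ (1 - mu) * G := by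
    apply csSup_le hne
    rintro z ⟨u, rfl⟩
    exact key u
  have hG0 : G ≤ 0 := by nlinarith
  have := hg0 x
  have h2 : g x ≤ G := le_csSup hbdd ⟨x, rfl⟩
  have : g x = 0 := le_antisymm (h2.trans hG0) (hg0 x)
  simp only [hg] at this
  linarith


lemma key_ratio {n : ℕ} (hn : 1 ≤ n) {w : ℝ} (hw : lam ^ n ≤ w) (hw' : w ≤ lam ^ (n-1)) :
    rfac mu n * hfun lam mu ((w - lam ^ n) / dfac lam n) = hfun lam mu w - mu ^ n := by
  rcases eq_or_lt_of_le hw with he | hlt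
  · rw [← he]
    simp only [sub_self, zero_div]
    rw [hfun_zero, hfun_pow hl1 hl2 hm1 hm2 n, mul_zero]
    ring
  · have hW : w ∈ Wint lam n := ⟨hlt, hw'⟩
    have hIoc : w ∈ Set.Ioc (0:ℝ) 1 := Wint_subset hl1 hl2 n hn hW
    have := hfun_funEq hl1 hl2 hm1 hm2 hIoc
    rw [kidx_eq hl1 hl2 hn hW, Flam_eq hl1 hl2 hn hW] at this
    rw [this]
    ring

/-- The Stieltjes function attached to `hfun`. -/
noncomputable def HH (lam mu : ℝ) (hl1 : 0 < lam) (hl2 : lam < 1) (hm1 : 0 < mu)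
    (hm2 : mu < 1) : StieltjesFunction ℝ where
  toFun := hfun lam mu
  mono' := hfun_mono hl1 hl2 hm1 hm2
  right_continuous' := by
    intro x
    rw [← continuousWithinAt_Ioi_iff_Ici]
    exact (hfun_mono hl1 hl2 hm1 hm2).continuousWithinAt_Ioi_iff_rightLim_eq.2
      (rightLim_eq hl1 hl2 hm1 hm2 x)

lemma HH_univ : (HH lam mu hl1 hl2 hm1 hm2).measure Set.univ = 1 := by
  rw [StieltjesFunction.measure_univ (l := 0) (u := 1)]
  · norm_num
  · apply Tendsto.congr' _ (tendsto_const_nhds (x := (0:ℝ)))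
    filter_upwards [eventually_le_atBot (0:ℝ)] with y hy
    exact (hfun_nonpos (lam := lam) (mu := mu) hy).symm
  · apply Tendsto.congr' _ (tendsto_const_nhds (x := (1:ℝ)))
    filter_upwards [eventually_ge_atTop (1:ℝ)] with y hy
    exact (hfun_ge_one (lam := lam) (mu := mu) hy).symm

lemma HH_Ioc (a b : ℝ) : (HH lam mu hl1 hl2 hm1 hm2).measure (Set.Ioc a b)
    = ENNReal.ofReal (hfun lam mu b - hfun lam mu a) :=
  StieltjesFunction.measure_Ioc _ a b

/-- main conformality computation -/
lemma conformal_main {n : ℕ} (hn : 1 ≤ n) {A : Set ℝ} (hA : MeasurableSet A)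
    (hAW : A ⊆ Wint lam n) :
    (HH lam mu hl1 hl2 hm1 hm2).measure (Flam lam '' A)
      = ENNReal.ofReal (1 / rfac mu n) * (HH lam mu hl1 hl2 hm1 hm2).measure A := by
  classical
  set m := (HH lam mu hl1 hl2 hm1 hm2).measure with hm
  haveI : IsProbabilityMeasure m := ⟨HH_univ hl1 hl2 hm1 hm2⟩
  set c := lam ^ n with hc
  set d := dfac lam n with hd
  have hdpos : 0 < d := dfac_pos hl1 hl2 n
  set β : ℝ → ℝ := fun y => d * y + c with hβ
  have hβmeas : Measurable β := (measurable_id.const_mul d).add_const c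
  -- image = preimage
  have himg : Flam lam '' A = β ⁻¹' A := by
    have h1 : Flam lam '' A = (fun x => (x - c) / d) '' A := by
      apply Set.image_congr
      intro x hx
      exact Flam_eq hl1 hl2 hn (hAW hx)
    rw [h1, Set.image_eq_preimage_of_inverse (g := β)
      (fun x => by simp only [hβ]; field_simp; ring)
      (fun y => by simp only [hβ]; field_simp; ring)]
  -- the interval computation
  have claim : ∀ a b : ℝ, (m.map β) (Set.Ioc a b ∩ Wint lam n)
      = ENNReal.ofReal (1 / rfac mu n) * m (Set.Ioc a b ∩ Wint lam n) := by
    intro a b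
    have hrw : Set.Ioc a b ∩ Wint lam n = Set.Ioc (a ⊔ lam ^ n) (b ⊓ lam ^ (n-1)) :=
      Set.Ioc_inter_Ioc
    rw [hrw]
    set u := a ⊔ lam ^ n with hu
    set v := b ⊓ lam ^ (n-1) with hv
    have hpre : β ⁻¹' (Set.Ioc u v) = Set.Ioc ((u - c)/d) ((v - c)/d) := by
      ext y
      simp only [Set.mem_preimage, Set.mem_Ioc, hβ]
      constructor
      · rintro ⟨h1, h2⟩
        constructor
        · rw [div_lt_iff₀ hdpos]; nlinarith
        · rw [le_div_iff₀ hdpos]; nlinarith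
      · rintro ⟨h1, h2⟩
        constructor
        · rw [div_lt_iff₀ hdpos] at h1; nlinarith
        · rw [le_div_iff₀ hdpos] at h2; nlinarith
    rcases le_or_gt u v with huv | huv
    · have hun : lam ^ n ≤ u := le_sup_right
      have hvn : v ≤ lam ^ (n-1) := inf_le_right
      have hu1 : u ≤ lam ^ (n-1) := huv.trans hvn
      have hv1 : lam ^ n ≤ v := hun.trans huv
      have k1 := key_ratio hl1 hl2 hm1 hm2 hn hun hu1
      have k2 := key_ratio hl1 hl2 hm1 hm2 hn hv1 hvn
      have hrpos : 0 < rfac mu n := rfac_pos hm1 hm2 n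
      rw [Measure.map_apply hβmeas measurableSet_Ioc, hpre, hm, HH_Ioc, HH_Ioc]
      have heq : hfun lam mu ((v - c)/d) - hfun lam mu ((u - c)/d)
          = (1 / rfac mu n) * (hfun lam mu v - hfun lam mu u) := by
        have e1 : hfun lam mu ((u - c)/d) = (hfun lam mu u - mu ^ n) / rfac mu n := by
          rw [eq_div_iff (ne_of_gt hrpos)]
          rw [← k1, hc, hd]; ring
        have e2 : hfun lam mu ((v - c)/d) = (hfun lam mu v - mu ^ n) / rfac mu n := by
          rw [eq_div_iff (ne_of_gt hrpos)]
          rw [← k2, hc, hd]; ring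
        rw [e1, e2]
        field_simp
        ring
      rw [heq, ENNReal.ofReal_mul (by positivity)]
    · rw [Set.Ioc_eq_empty (not_lt.2 huv.le)]
      simp
  -- conclude
  have hWmeas : MeasurableSet (Wint lam n) := measurableSet_Ioc
  have hres : (m.map β).restrict (Wint lam n)
      = (ENNReal.ofReal (1 / rfac mu n) • m).restrict (Wint lam n) := by
    haveI hfin : IsFiniteMeasure ((m.map β).restrict (Wint lam n)) := by
      constructor
      rw [Measure.restrict_apply_univ, Measure.map_apply hβmeas hWmeas]
      exact measure_lt_top m _
    apply MeasureTheory.Measure.ext_of_Ioc_finite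
    · rw [Measure.restrict_apply_univ, Measure.restrict_apply_univ]
      have := claim (lam ^ n) (lam ^ (n-1))
      rw [show Set.Ioc (lam ^ n) (lam ^ (n-1)) ∩ Wint lam n = Wint lam n by
        rw [Set.inter_eq_self_of_subset_right]; exact fun x hx => hx] at this
      simpa using this
    · intro a b _
      rw [Measure.restrict_apply measurableSet_Ioc, Measure.restrict_apply measurableSet_Ioc]
      simpa using claim a b
  calc m (Flam lam '' A) = m (β ⁻¹' A) := by rw [himg]
    _ = (m.map β) A := (Measure.map_apply hβmeas hA).symm
    _ = ((m.map β).restrict (Wint lam n)) A := by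
        rw [Measure.restrict_apply hA, Set.inter_eq_self_of_subset_left hAW]
    _ = ((ENNReal.ofReal (1 / rfac mu n) • m).restrict (Wint lam n)) A := by rw [hres]
    _ = ENNReal.ofReal (1 / rfac mu n) * m A := by
        rw [Measure.restrict_apply hA, Set.inter_eq_self_of_subset_left hAW,
          Measure.smul_apply, smul_eq_mul]
omit hm1 hm2 in
lemma exp_slope {t : ℝ} (ht : 0 < t) {n : ℕ} (hn : 1 ≤ n) :
    Real.exp (Real.log ((1-lam)^t / (1 - lam^t))) * slopeW lam n ^ t
      = 1 / rfac (lam ^ t) n := by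
  have h1l : (0:ℝ) < 1 - lam := by linarith
  have hmu1 : (0:ℝ) < lam ^ t := Real.rpow_pos_of_pos hl1 t
  have hmu2 : lam ^ t < 1 := Real.rpow_lt_one hl1.le hl2 ht
  have hpos : (0:ℝ) < (1-lam)^t / (1 - lam^t) := by
    apply div_pos (Real.rpow_pos_of_pos h1l t) (by linarith)
  rw [Real.exp_log hpos]
  have h1t : (0:ℝ) < (1-lam)^t := Real.rpow_pos_of_pos h1l t
  unfold slopeW rfac
  have hAne : (1-lam)^t ≠ 0 := ne_of_gt h1t
  have hmne : lam ^ t ≠ 0 := ne_of_gt hmu1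
  have hBne : (1:ℝ) - lam ^ t ≠ 0 := by linarith
  by_cases h : n = 1
  · rw [if_pos h, if_pos h, one_div, one_div, Real.inv_rpow h1l.le,
      div_mul_eq_mul_div, mul_inv_cancel₀ hAne, one_div]
  · rw [if_neg h, if_neg h, one_div, one_div, Real.inv_rpow (by positivity),
      Real.mul_rpow hl1.le h1l.le]
    field_simp

end S4

/-- For `lam ∈ (0,1)`, `t > 0` and `p = log ψ(t)` with
`ψ(t) = (1-lam)^t/(1-lam^t)`, there is a `(t,p)`-conformal Borel probability measure
on `(0,1]` with `m(W k) = (1-lam^t) * lam^(t(k-1))` for all `k ≥ 1`. -/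
theorem stmt4 (lam t : ℝ) (h1 : 0 < lam) (h2 : lam < 1) (ht : 0 < t) :
    ∃ m : Measure ℝ, IsProbabilityMeasure m ∧ m (Set.Ioc 0 1) = 1 ∧
      IsConformal lam t (Real.log ((1-lam)^t / (1 - lam^t))) m ∧
      ∀ k : ℕ, 1 ≤ k → m (Wint lam k) =
        ENNReal.ofReal ((1 - lam^t) * lam ^ (t * ((k:ℝ) - 1))) := by
  have hm1 : (0:ℝ) < lam ^ t := Real.rpow_pos_of_pos h1 t
  have hm2 : lam ^ t < 1 := Real.rpow_lt_one h1.le h2 ht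
  set mu := lam ^ t with hmu
  refine ⟨(S4.HH lam mu h1 h2 hm1 hm2).measure, ⟨S4.HH_univ h1 h2 hm1 hm2⟩, ?_, ?_, ?_⟩
  · rw [S4.HH_Ioc, S4.hfun_zero, S4.hfun_one]
    norm_num
  · intro n hn A hA hAW
    rw [show Real.exp (Real.log ((1-lam)^t / (1 - lam^t))) * slopeW lam n ^ t
        = 1 / S4.rfac mu n from S4.exp_slope h1 h2 ht hn]
    exact S4.conformal_main h1 h2 hm1 hm2 hn hA hAW
  · intro k hk
    obtain ⟨k', rfl⟩ : ∃ k', k = k' + 1 := ⟨k - 1, by omega⟩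
    have hW : Wint lam (k'+1) = Set.Ioc (lam ^ (k'+1)) (lam ^ k') := by
      unfold Wint; norm_num
    rw [hW, S4.HH_Ioc, S4.hfun_pow h1 h2 hm1 hm2, S4.hfun_pow h1 h2 hm1 hm2]
    congr 1
    have hcast : t * ((((k'+1):ℕ):ℝ) - 1) = t * (k' : ℝ) := by push_cast; ring
    rw [hcast, Real.rpow_mul h1.le, Real.rpow_natCast]
    rw [← hmu]
    ring
end

section
/- Let λ ∈ (0,1) and t > 0 with λ^t ≥ 1/2, and set p = log(4 λ^t (1−λ)^t). Then there exists a (t,p)-conformal Borel probability measure m on (0,1] satisfying m(W_k) = [ (k−1) + λ^{−t}(1 − k/2) ]·(1/2)^k for every k ≥ 1. -/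
set_option linter.unusedSectionVars false
set_option linter.unusedVariables false


open MeasureTheory Set Filter Topology

namespace S5

variable (lam : ℝ)

noncomputable def sl (n : ℕ) : ℝ := if n = 1 then 1 - lam else lam * (1 - lam)

noncomputable def gn (n : ℕ) (x : ℝ) : ℝ := (x - lam ^ n) / sl lam n

noncomputable def gi (n : ℕ) (z : ℝ) : ℝ := lam ^ n + z * sl lam n

noncomputable def idx (x : ℝ) : ℕ := sInf {n : ℕ | lam ^ n < x}

noncomputable def TT (a : ℝ) (n : ℕ) : ℝ := ((n : ℝ) + 1 - a * n / 2) * (1/2) ^ n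

noncomputable def rr (a : ℝ) (n : ℕ) : ℝ := if n = 1 then a / 4 else 1 / 4

section Basic

variable {lam : ℝ} (h1 : 0 < lam) (h2 : lam < 1)
include h1 h2

lemma sl_pos (n : ℕ) : 0 < sl lam n := by
  unfold sl; split
  · linarith
  · nlinarith

lemma key (n : ℕ) (hn : 1 ≤ n) : lam ^ (n - 1) - lam ^ n = sl lam n * lam ^ (n - 2) := by
  unfold sl
  rcases n with _ | m
  · omega
  rcases m with _ | j
  · norm_num
  · have hne : ¬ (j + 2 = 1) := by omega
    simp only [hne, if_false]
    have e1 : j + 2 - 1 = j + 1 := by omega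
    have e2 : j + 2 - 2 = j := by omega
    rw [e1, e2]
    ring

lemma pow_anti {m n : ℕ} (h : m ≤ n) : lam ^ n ≤ lam ^ m :=
  pow_le_pow_of_le_one h1.le h2.le h

lemma pow_lt_pow_succ (n : ℕ) : lam ^ (n + 1) < lam ^ n := by
  rw [pow_succ]
  nlinarith [pow_pos h1 n]

lemma pow_anti_strict {m n : ℕ} (h : m < n) : lam ^ n < lam ^ m :=
  lt_of_lt_of_le (lt_of_le_of_lt (pow_anti h1 h2 h) (pow_lt_pow_succ h1 h2 m)) le_rfl

lemma pow_mem_Ioc01 (n : ℕ) : lam ^ n ∈ Set.Ioc (0:ℝ) 1 :=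
  ⟨pow_pos h1 n, pow_le_one₀ h1.le h2.le⟩

end Basic

section TTlem

variable {a : ℝ} (ha1 : 1 ≤ a) (ha2 : a ≤ 2)
include ha1 ha2

lemma TT_zero : TT a 0 = 1 := by unfold TT; norm_num

lemma TT_one : TT a 1 = 1 - a / 4 := by unfold TT; norm_num; ring

lemma TT_pos (n : ℕ) : 0 < TT a n := by
  unfold TT
  have h : (0:ℝ) < (1/2) ^ n := by positivity
  have hn : (0:ℝ) ≤ (n:ℝ) := Nat.cast_nonneg n
  have h3 : (0:ℝ) ≤ (2 - a) * (n:ℝ) := mul_nonneg (by linarith) hn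
  have hf : (0:ℝ) < (n:ℝ) + 1 - a * n / 2 := by nlinarith
  exact mul_pos hf h

lemma TT_le_geom (n : ℕ) : TT a n ≤ ((n:ℝ) + 1) * (1/2) ^ n := by
  unfold TT
  have h : (0:ℝ) < (1/2) ^ n := by positivity
  have hn : (0:ℝ) ≤ (n:ℝ) := Nat.cast_nonneg n
  have h3 : (0:ℝ) ≤ a * (n:ℝ) := mul_nonneg (by linarith) hn
  have hf : (n:ℝ) + 1 - a * n / 2 ≤ (n:ℝ) + 1 := by linarith
  exact mul_le_mul_of_nonneg_right hf h.le

lemma TT_le_one (n : ℕ) : TT a n ≤ 1 := by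
  refine le_trans (TT_le_geom ha1 ha2 n) ?_
  have h : ((n:ℝ) + 1) ≤ 2 ^ n := by
    have := Nat.lt_two_pow_self (n := n)
    have : ((n:ℝ) + 1) ≤ ((2^n : ℕ) : ℝ) := by exact_mod_cast this
    simpa using this
  have h2 : ((n:ℝ)+1) * (1/2)^n ≤ (2:ℝ)^n * (1/2)^n := by
    apply mul_le_mul_of_nonneg_right h (by positivity)
  calc ((n:ℝ) + 1) * (1/2) ^ n ≤ (2:ℝ)^n * (1/2)^n := h2
    _ = 1 := by rw [← mul_pow]; norm_num

lemma TT_succ_le (n : ℕ) : TT a (n + 1) ≤ TT a n := by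
  unfold TT
  have h : (0:ℝ) < (1/2) ^ n := by positivity
  have hn : (0:ℝ) ≤ (n:ℝ) := Nat.cast_nonneg n
  push_cast
  rw [pow_succ]
  have h3 : (0:ℝ) ≤ (2 - a) * (n:ℝ) := mul_nonneg (by linarith) hn
  have hfac : ((n:ℝ) + 1 + 1 - a * ((n:ℝ)+1) / 2) ≤ 2 * ((n:ℝ) + 1 - a * n / 2) := by linarith
  calc ((n:ℝ) + 1 + 1 - a * ((n:ℝ)+1) / 2) * ((1/2)^n * (1/2))
      ≤ (2 * ((n:ℝ) + 1 - a * n / 2)) * ((1/2)^n * (1/2)) := by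
        apply mul_le_mul_of_nonneg_right hfac (by positivity)
    _ = ((n:ℝ) + 1 - a * n / 2) * (1/2)^n := by ring

lemma TT_anti {m n : ℕ} (h : m ≤ n) : TT a n ≤ TT a m :=
  antitone_nat_of_succ_le (fun k => TT_succ_le ha1 ha2 k) h

omit ha1 ha2 in
lemma TT_rec (n : ℕ) : TT a (n + 1) = TT a (n + 2) + TT a n / 4 := by
  unfold TT
  push_cast
  rw [pow_succ, pow_succ]
  ring

lemma TT_exists_small {ε : ℝ} (hε : 0 < ε) : ∃ j : ℕ, TT a j ≤ ε := by
  have hs : Summable (fun n : ℕ => ((n:ℝ) + 1) * (1/2) ^ n) := by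
    have h1 : Summable (fun n : ℕ => ((n:ℝ)) * (1/2) ^ n) := by
      have := summable_pow_mul_geometric_of_norm_lt_one (R := ℝ) 1 (r := 1/2) (by norm_num)
      simpa using this
    have h2 : Summable (fun n : ℕ => ((1:ℝ)/2) ^ n) := summable_geometric_of_lt_one (by norm_num) (by norm_num)
    simpa [add_mul] using h1.add h2
  have ht := hs.tendsto_atTop_zero
  rw [Metric.tendsto_atTop] at ht
  obtain ⟨N, hN⟩ := ht ε hε
  refine ⟨N, le_trans (TT_le_geom ha1 ha2 N) ?_⟩
  have := hN N le_rfl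
  rw [Real.dist_eq] at this
  have hpos : (0:ℝ) ≤ ((N:ℝ)+1) * (1/2)^N := by positivity
  rw [sub_zero, abs_of_nonneg hpos] at this
  linarith

lemma rr_pos (n : ℕ) : 0 < rr a n := by
  unfold rr; split <;> linarith

lemma rr_le_half (n : ℕ) : rr a n ≤ 1/2 := by
  unfold rr; split <;> linarith

end TTlem

section IdxLem

variable {lam : ℝ} (h1 : 0 < lam) (h2 : lam < 1)
include h1 h2

lemma idx_spec {x : ℝ} (hx : x ∈ Set.Ioc (0:ℝ) 1) :
    1 ≤ idx lam x ∧ x ∈ Wint lam (idx lam x) := by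
  obtain ⟨hx0, hx1⟩ := hx
  have hne : {n : ℕ | lam ^ n < x}.Nonempty := by
    obtain ⟨k, hk⟩ := exists_pow_lt_of_lt_one hx0 h2
    exact ⟨k, hk⟩
  have hmem : lam ^ (idx lam x) < x := Nat.sInf_mem hne
  have hpos : 1 ≤ idx lam x := by
    by_contra hcon
    have h0 : idx lam x = 0 := Nat.eq_zero_of_not_pos hcon
    rw [h0, pow_zero] at hmem
    exact absurd hmem (not_lt.mpr hx1)
  have hup : x ≤ lam ^ (idx lam x - 1) := by
    have hnm : idx lam x - 1 ∉ {n : ℕ | lam ^ n < x} := by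
      intro hc
      have h2' : idx lam x ≤ idx lam x - 1 := Nat.sInf_le hc
      omega
    simpa using not_lt.mp hnm
  exact ⟨hpos, hmem, hup⟩

lemma idx_eq {x : ℝ} {n : ℕ} (hn : 1 ≤ n) (hx : x ∈ Wint lam n) : idx lam x = n := by
  obtain ⟨hl, hr⟩ := hx
  have hmem : n ∈ {k : ℕ | lam ^ k < x} := hl
  have hle : idx lam x ≤ n := Nat.sInf_le hmem
  rcases lt_or_eq_of_le hle with h | h
  · exfalso
    have hne : {k : ℕ | lam ^ k < x}.Nonempty := ⟨n, hmem⟩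
    have hmem2 : lam ^ (idx lam x) < x := Nat.sInf_mem hne
    have : lam ^ (n - 1) ≤ lam ^ (idx lam x) := pow_anti h1 h2 (by omega)
    linarith
  · exact h

lemma idx_anti {x y : ℝ} (hx : 0 < x) (hxy : x ≤ y) : idx lam y ≤ idx lam x := by
  have hne : {n : ℕ | lam ^ n < x}.Nonempty := by
    obtain ⟨k, hk⟩ := exists_pow_lt_of_lt_one hx h2
    exact ⟨k, hk⟩
  have hmem : lam ^ (idx lam x) < x := Nat.sInf_mem hne
  exact Nat.sInf_le (lt_of_lt_of_le hmem hxy)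

lemma mem_W_high {x : ℝ} {j : ℕ} (hx0 : 0 < x) (hxj : x ≤ lam ^ j) : j + 1 ≤ idx lam x := by
  by_contra h
  push_neg at h
  have hle : idx lam x ≤ j := by omega
  have hne : {n : ℕ | lam ^ n < x}.Nonempty := by
    obtain ⟨k, hk⟩ := exists_pow_lt_of_lt_one hx0 h2
    exact ⟨k, hk⟩
  have hmem : lam ^ (idx lam x) < x := Nat.sInf_mem hne
  have hj : lam ^ j ≤ lam ^ (idx lam x) := pow_anti h1 h2 hle
  linarith

/-- `Flam` agrees with the branch map on `W n`. -/
lemma Flam_eq {x : ℝ} {n : ℕ} (hn : 1 ≤ n) (hx : x ∈ Wint lam n) :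
    Flam lam x = gn lam n x := by
  have hi : idx lam x = n := idx_eq h1 h2 hn hx
  obtain ⟨hl, hr⟩ := hx
  have hx0 : 0 < x := lt_of_le_of_lt (pow_nonneg h1.le n) hl
  have hx1 : x ≤ 1 := le_trans hr (pow_le_one₀ h1.le h2.le)
  unfold Flam gn sl idx at *
  rw [if_pos ⟨hx0, hx1⟩]
  by_cases hc : n = 1
  · rw [hi, if_pos hc, hc]
    norm_num
  · rw [hi, if_neg hc, if_neg hc]

lemma gi_gn {n : ℕ} (z : ℝ) : gn lam n (gi lam n z) = z := by
  unfold gn gi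
  have := sl_pos h1 h2 (lam := lam) n
  field_simp
  ring

lemma gn_gi {n : ℕ} (x : ℝ) : gi lam n (gn lam n x) = x := by
  unfold gn gi
  have := sl_pos h1 h2 (lam := lam) n
  field_simp
  ring

lemma gi_mem {n : ℕ} (hn : 1 ≤ n) {z : ℝ} (hz : z ∈ Set.Ioc (0:ℝ) (lam ^ (n - 2))) :
    gi lam n z ∈ Wint lam n := by
  obtain ⟨hz0, hz1⟩ := hz
  have hsl := sl_pos h1 h2 (lam := lam) n
  have hkey := key h1 h2 n hn
  constructor
  · unfold gi; nlinarith
  · unfold gi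
    have : z * sl lam n ≤ lam ^ (n-2) * sl lam n := by nlinarith
    nlinarith

lemma gn_mem {n : ℕ} (hn : 1 ≤ n) {x : ℝ} (hx : x ∈ Wint lam n) :
    gn lam n x ∈ Set.Ioc (0:ℝ) (lam ^ (n - 2)) := by
  obtain ⟨hl, hr⟩ := hx
  have hsl := sl_pos h1 h2 (lam := lam) n
  have hkey := key h1 h2 n hn
  constructor
  · unfold gn
    exact div_pos (by linarith) hsl
  · unfold gn
    rw [div_le_iff₀ hsl]
    nlinarith

lemma gn_lt_gn {n : ℕ} {x y : ℝ} (h : x < y) : gn lam n x < gn lam n y := by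
  unfold gn
  have hsl := sl_pos h1 h2 (lam := lam) n
  gcongr

lemma gi_lt_gi {n : ℕ} {z w : ℝ} (h : z < w) : gi lam n z < gi lam n w := by
  unfold gi
  have hsl := sl_pos h1 h2 (lam := lam) n
  nlinarith

lemma gn_le_gn {n : ℕ} {x y : ℝ} (h : x ≤ y) : gn lam n x ≤ gn lam n y := by
  unfold gn
  have hsl := sl_pos h1 h2 (lam := lam) n
  gcongr

/-- image of `(0,1]` under `Flam` stays in `(0,1]`. -/
lemma Flam_mem {x : ℝ} (hx : x ∈ Set.Ioc (0:ℝ) 1) : Flam lam x ∈ Set.Ioc (0:ℝ) 1 := by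
  obtain ⟨hi, hW⟩ := idx_spec h1 h2 hx
  rw [Flam_eq h1 h2 hi hW]
  have := gn_mem h1 h2 hi hW
  exact ⟨this.1, le_trans this.2 (pow_le_one₀ h1.le h2.le)⟩

end IdxLem

noncomputable def PP (lam a : ℝ) (k : ℕ) (x : ℝ) : ℝ :=
  ∏ i ∈ Finset.range k, rr a (idx lam ((Flam lam)^[i] x))

noncomputable def HH (lam a : ℝ) (x : ℝ) : ℝ :=
  ∑' k : ℕ, PP lam a k x * TT a (idx lam ((Flam lam)^[k] x))

section HHlem

variable {lam a : ℝ} (h1 : 0 < lam) (h2 : lam < 1) (ha1 : 1 ≤ a) (ha2 : a ≤ 2)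

omit h1 h2 in
include ha1 ha2 in
lemma PP_pos (k : ℕ) (x : ℝ) : 0 < PP lam a k x :=
  Finset.prod_pos (fun i _ => rr_pos ha1 ha2 _)

omit h1 h2 in
include ha1 ha2 in
lemma PP_le (k : ℕ) (x : ℝ) : PP lam a k x ≤ (1/2) ^ k := by
  unfold PP
  calc ∏ i ∈ Finset.range k, rr a (idx lam ((Flam lam)^[i] x))
      ≤ ∏ _i ∈ Finset.range k, ((1:ℝ)/2) :=
        Finset.prod_le_prod (fun i _ => (rr_pos ha1 ha2 _).le)
          (fun i _ => rr_le_half ha1 ha2 _)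
    _ = (1/2) ^ k := by simp

omit h1 h2 in
include ha1 ha2 in
lemma term_nonneg (k : ℕ) (x : ℝ) :
    0 ≤ PP lam a k x * TT a (idx lam ((Flam lam)^[k] x)) :=
  mul_nonneg (PP_pos ha1 ha2 k x).le (TT_pos ha1 ha2 _).le

omit h1 h2 in
include ha1 ha2 in
lemma term_le (k : ℕ) (x : ℝ) :
    PP lam a k x * TT a (idx lam ((Flam lam)^[k] x)) ≤ (1/2) ^ k := by
  calc PP lam a k x * TT a (idx lam ((Flam lam)^[k] x))
      ≤ PP lam a k x * 1 := by
        exact mul_le_mul_of_nonneg_left (TT_le_one ha1 ha2 _) (PP_pos ha1 ha2 k x).le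
    _ = PP lam a k x := mul_one _
    _ ≤ (1/2) ^ k := PP_le ha1 ha2 k x

omit h1 h2 in
include ha1 ha2 in
lemma summable_HH (x : ℝ) :
    Summable (fun k : ℕ => PP lam a k x * TT a (idx lam ((Flam lam)^[k] x))) := by
  apply Summable.of_nonneg_of_le (fun k => term_nonneg (lam := lam) ha1 ha2 k x) (fun k => term_le (lam := lam) ha1 ha2 k x)
  exact summable_geometric_of_lt_one (by norm_num) (by norm_num)

omit h1 h2 in
include ha1 ha2 in
lemma HH_nonneg (x : ℝ) : 0 ≤ HH lam a x :=
  tsum_nonneg (fun k => term_nonneg (lam := lam) ha1 ha2 k x)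

omit h1 h2 in
include ha1 ha2 in
lemma HH_ge_TT (x : ℝ) : TT a (idx lam x) ≤ HH lam a x := by
  have h := Summable.le_tsum (summable_HH (lam := lam) ha1 ha2 x) 0 (fun j _ => term_nonneg (lam := lam) ha1 ha2 j x)
  simpa [PP, HH] using h

omit h1 h2 in
include ha1 ha2 in
lemma HH_le_two (x : ℝ) : HH lam a x ≤ 2 := by
  have h := Summable.tsum_le_tsum (fun k => term_le (lam := lam) ha1 ha2 k x)
    (summable_HH (lam := lam) ha1 ha2 x)
    (summable_geometric_of_lt_one (by norm_num) (by norm_num))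
  calc HH lam a x ≤ ∑' k : ℕ, ((1:ℝ)/2) ^ k := h
    _ = 2 := by rw [tsum_geometric_of_lt_one (by norm_num) (by norm_num)]; norm_num

omit h1 h2 in
include ha1 ha2 in
lemma HH_eq (x : ℝ) :
    HH lam a x = TT a (idx lam x) + rr a (idx lam x) * HH lam a (Flam lam x) := by
  unfold HH
  rw [Summable.tsum_eq_zero_add (summable_HH (lam := lam) ha1 ha2 x)]
  congr 1
  · simp [PP]
  · have hterm : ∀ k : ℕ,
        PP lam a (k+1) x * TT a (idx lam ((Flam lam)^[k+1] x)) =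
        rr a (idx lam x) * (PP lam a k (Flam lam x) *
          TT a (idx lam ((Flam lam)^[k] (Flam lam x)))) := by
      intro k
      have hP : PP lam a (k+1) x = rr a (idx lam x) * PP lam a k (Flam lam x) := by
        unfold PP
        rw [Finset.prod_range_succ']
        simp only [Function.iterate_succ_apply, Function.iterate_zero_apply]
        ring
      rw [hP, Function.iterate_succ_apply]
      ring
    rw [tsum_congr hterm, tsum_mul_left]

end HHlem

section Core

variable {lam a : ℝ} (h1 : 0 < lam) (h2 : lam < 1) (ha1 : 1 ≤ a) (ha2 : a ≤ 2)
include h1 h2 ha1 ha2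

lemma idx_one : idx lam 1 = 1 := by
  have : (1:ℝ) ∈ Wint lam 1 := by
    constructor
    · simpa using h2
    · norm_num
  exact idx_eq h1 h2 le_rfl this

lemma Flam_one : Flam lam (1:ℝ) = 1 := by
  have hW : (1:ℝ) ∈ Wint lam 1 := by
    constructor
    · simpa using h2
    · norm_num
  rw [Flam_eq h1 h2 le_rfl hW]
  unfold gn sl
  simp only [if_pos rfl]
  rw [pow_one]
  exact div_self (by linarith)

lemma HH_one : HH lam a 1 = 1 := by
  have he := HH_eq (lam := lam) ha1 ha2 1
  rw [idx_one h1 h2 ha1 ha2, Flam_one h1 h2 ha1 ha2] at he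
  have hT1 : TT a 1 = 1 - a/4 := TT_one ha1 ha2
  have hr1 : rr a 1 = a/4 := by unfold rr; simp
  rw [hT1, hr1] at he
  have hzero : (1 - a/4) * (HH lam a 1 - 1) = 0 := by linear_combination he
  rcases mul_eq_zero.mp hzero with h | h
  · exfalso; nlinarith
  · linarith

lemma HH_pow (n : ℕ) : HH lam a (lam ^ n) = TT a n := by
  induction n with
  | zero => rw [pow_zero, HH_one h1 h2 ha1 ha2, TT_zero ha1 ha2]
  | succ n ih =>
    have hW : lam ^ (n+1) ∈ Wint lam (n+2) := by
      constructor
      · exact pow_lt_pow_succ h1 h2 (n+1)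
      · simp
    have hi : idx lam (lam ^ (n+1)) = n + 2 := idx_eq h1 h2 (by omega) hW
    have hF : Flam lam (lam ^ (n+1)) = lam ^ n := by
      rw [Flam_eq h1 h2 (by omega) hW]
      unfold gn sl
      have hne : ¬ (n + 2 = 1) := by omega
      simp only [hne, if_false]
      rw [div_eq_iff (by nlinarith : lam * (1 - lam) ≠ 0)]
      ring
    have he := HH_eq (lam := lam) ha1 ha2 (lam ^ (n+1))
    rw [hi, hF, ih] at he
    have hr : rr a (n+2) = 1/4 := by unfold rr; simp
    rw [hr] at he
    rw [he, TT_rec (a := a) n]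
    ring

lemma HH_tail_aux (k : ℕ) : ∀ (j : ℕ) (x : ℝ), x ∈ Set.Ioc (0:ℝ) (lam ^ j) →
    HH lam a x ≤ TT a j + 2 * (1/2) ^ k := by
  induction k with
  | zero =>
    intro j x hx
    have := HH_le_two (lam := lam) ha1 ha2 x
    have := TT_pos (a := a) ha1 ha2 j
    simpa using by linarith
  | succ k ih =>
    intro j x hx
    obtain ⟨hx0, hxj⟩ := hx
    have hx1 : x ∈ Set.Ioc (0:ℝ) 1 :=
      ⟨hx0, le_trans hxj (pow_le_one₀ h1.le h2.le)⟩
    obtain ⟨him, hW⟩ := idx_spec h1 h2 hx1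
    set m := idx lam x with hm
    have hjm : j + 1 ≤ m := mem_W_high h1 h2 hx0 hxj
    have hF : Flam lam x = gn lam m x := Flam_eq h1 h2 him hW
    have hFm : gn lam m x ∈ Set.Ioc (0:ℝ) (lam ^ (m - 2)) := gn_mem h1 h2 him hW
    have hIH := ih (m - 2) (gn lam m x) hFm
    have he := HH_eq (lam := lam) ha1 ha2 x
    rw [hF] at he
    rw [← hm] at he
    by_cases hm1 : m = 1
    · -- j = 0
      have hj0 : j = 0 := by omega
      subst hj0
      rw [hm1] at he hIH
      have hr1 : rr a 1 = a/4 := by unfold rr; simp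
      have hT1 : TT a 1 = 1 - a/4 := TT_one ha1 ha2
      rw [hr1, hT1] at he
      rw [show (1:ℕ) - 2 = 0 from rfl, TT_zero ha1 ha2] at hIH
      have hHF0 : 0 ≤ HH lam a (gn lam 1 x) := HH_nonneg (lam := lam) ha1 ha2 _
      rw [TT_zero ha1 ha2, pow_succ]
      have hp : (0:ℝ) < (1/2)^k := by positivity
      nlinarith [mul_le_mul_of_nonneg_left hIH (show (0:ℝ) ≤ a/4 by linarith)]
    · -- m ≥ 2
      have hm2 : 2 ≤ m := by omega
      have hr : rr a m = 1/4 := by unfold rr; simp [hm1]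
      rw [hr] at he
      have hrec : TT a m + TT a (m - 2)/4 = TT a (m - 1) := by
        have := TT_rec (a := a) (m - 2)
        have e1 : m - 2 + 1 = m - 1 := by omega
        have e2 : m - 2 + 2 = m := by omega
        rw [e1, e2] at this
        linarith
      have hanti : TT a (m-1) ≤ TT a j := TT_anti ha1 ha2 (by omega)
      have hp : (0:ℝ) < (1/2)^k := by positivity
      calc HH lam a x = TT a m + 1/4 * HH lam a (gn lam m x) := he
        _ ≤ TT a m + 1/4 * (TT a (m-2) + 2 * (1/2)^k) := by nlinarith
        _ = TT a (m-1) + (1/2) * (1/2)^k := by rw [← hrec]; ring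
        _ ≤ TT a j + 2 * (1/2)^(k+1) := by rw [pow_succ]; nlinarith

lemma HH_tail {j : ℕ} {x : ℝ} (hx : x ∈ Set.Ioc (0:ℝ) (lam ^ j)) :
    HH lam a x ≤ TT a j := by
  by_contra hcon
  push_neg at hcon
  have hε : (0:ℝ) < (HH lam a x - TT a j)/2 := by linarith
  obtain ⟨k, hk⟩ := exists_pow_lt_of_lt_one hε (show (1:ℝ)/2 < 1 by norm_num)
  have := HH_tail_aux h1 h2 ha1 ha2 k j x hx
  linarith

lemma HH_le_one {x : ℝ} (hx : x ∈ Set.Ioc (0:ℝ) 1) : HH lam a x ≤ 1 := by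
  have := HH_tail h1 h2 ha1 ha2 (j := 0) (by simpa using hx)
  rwa [TT_zero ha1 ha2] at this

lemma HH_mono_aux (k : ℕ) : ∀ x y : ℝ, x ∈ Set.Ioc (0:ℝ) 1 → y ∈ Set.Ioc (0:ℝ) 1 →
    x ≤ y → HH lam a x ≤ HH lam a y + (1/2) ^ k := by
  induction k with
  | zero =>
    intro x y hx hy hxy
    have := HH_le_one h1 h2 ha1 ha2 hx
    have := HH_nonneg (lam := lam) ha1 ha2 y
    simpa using by linarith
  | succ k ih =>
    intro x y hx hy hxy
    obtain ⟨him, hWx⟩ := idx_spec h1 h2 hx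
    obtain ⟨hin, hWy⟩ := idx_spec h1 h2 hy
    set m := idx lam x with hm
    set n := idx lam y with hn
    have hnm : n ≤ m := idx_anti h1 h2 hx.1 hxy
    by_cases hc : m = n
    · -- same branch
      have hFx : Flam lam x = gn lam m x := Flam_eq h1 h2 him hWx
      have hFy : Flam lam y = gn lam m y := by
        rw [hc] at *
        exact Flam_eq h1 h2 hin hWy
      have hgle : gn lam m x ≤ gn lam m y := gn_le_gn h1 h2 hxy
      have hFx1 : gn lam m x ∈ Set.Ioc (0:ℝ) 1 := by
        have := gn_mem h1 h2 him hWx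
        exact ⟨this.1, le_trans this.2 (pow_le_one₀ h1.le h2.le)⟩
      have hFy1 : gn lam m y ∈ Set.Ioc (0:ℝ) 1 := by
        have := gn_mem h1 h2 (hc ▸ hin) (hc ▸ hWy)
        exact ⟨this.1, le_trans this.2 (pow_le_one₀ h1.le h2.le)⟩
      have hIH := ih _ _ hFx1 hFy1 hgle
      have hex := HH_eq (lam := lam) ha1 ha2 x
      have hey := HH_eq (lam := lam) ha1 ha2 y
      rw [hFx] at hex
      rw [hFy, ← hn, ← hc] at hey
      rw [← hm] at hex
      have hrpos := rr_pos (a := a) ha1 ha2 m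
      have hrle := rr_le_half (a := a) ha1 ha2 m
      have hp : (0:ℝ) < (1/2)^k := by positivity
      calc HH lam a x = TT a m + rr a m * HH lam a (gn lam m x) := hex
        _ ≤ TT a m + rr a m * (HH lam a (gn lam m y) + (1/2)^k) := by nlinarith
        _ = (TT a m + rr a m * HH lam a (gn lam m y)) + rr a m * (1/2)^k := by ring
        _ ≤ HH lam a y + (1/2)^(k+1) := by
            rw [← hey, pow_succ]
            nlinarith
    · -- different branches : n < m
      have hlt : n < m := lt_of_le_of_ne hnm (Ne.symm hc)
      have hxle : x ∈ Set.Ioc (0:ℝ) (lam ^ (m-1)) := ⟨hx.1, hWx.2⟩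
      have h1' : HH lam a x ≤ TT a (m-1) := HH_tail h1 h2 ha1 ha2 hxle
      have h2' : TT a (m-1) ≤ TT a n := TT_anti ha1 ha2 (by omega)
      have h3' : TT a n ≤ HH lam a y := HH_ge_TT (lam := lam) ha1 ha2 y
      have hp : (0:ℝ) < (1/2)^(k+1) := by positivity
      linarith

lemma HH_mono {x y : ℝ} (hx : x ∈ Set.Ioc (0:ℝ) 1) (hy : y ∈ Set.Ioc (0:ℝ) 1)
    (hxy : x ≤ y) : HH lam a x ≤ HH lam a y := by
  by_contra hcon
  push_neg at hcon
  have hε : (0:ℝ) < (HH lam a x - HH lam a y) := by linarith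
  obtain ⟨k, hk⟩ := exists_pow_lt_of_lt_one hε (show (1:ℝ)/2 < 1 by norm_num)
  have := HH_mono_aux h1 h2 ha1 ha2 k x y hx hy hxy
  linarith

end Core

section RC

variable {lam a : ℝ} (h1 : 0 < lam) (h2 : lam < 1) (ha1 : 1 ≤ a) (ha2 : a ≤ 2)
include h1 h2 ha1 ha2

omit ha1 ha2 in
lemma gn_right {m : ℕ} (hm : 1 ≤ m) : gn lam m (lam ^ (m-1)) = lam ^ (m-2) := by
  unfold gn
  rw [div_eq_iff (sl_pos h1 h2 m).ne']
  have := key h1 h2 m hm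
  linarith

lemma RC0 {ε : ℝ} (hε : 0 < ε) : ∃ y, y ∈ Set.Ioc (0:ℝ) 1 ∧ HH lam a y ≤ ε := by
  obtain ⟨j, hj⟩ := TT_exists_small ha1 ha2 hε
  exact ⟨lam ^ j, pow_mem_Ioc01 h1 h2 j, by rw [HH_pow h1 h2 ha1 ha2]; exact hj⟩

lemma RC_aux (k : ℕ) : ∀ x : ℝ, x ∈ Set.Ioo (0:ℝ) 1 →
    ∃ y, x < y ∧ y ∈ Set.Ioc (0:ℝ) 1 ∧ HH lam a y ≤ HH lam a x + (1/2)^k := by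
  induction k with
  | zero =>
    intro x hx
    refine ⟨1, hx.2, by norm_num, ?_⟩
    rw [HH_one h1 h2 ha1 ha2]
    have := HH_nonneg (lam := lam) ha1 ha2 x
    norm_num
    linarith
  | succ k ih =>
    intro x hx
    have hx1 : x ∈ Set.Ioc (0:ℝ) 1 := ⟨hx.1, hx.2.le⟩
    obtain ⟨him, hW⟩ := idx_spec h1 h2 hx1
    set m := idx lam x with hm
    have hrpos := rr_pos (a := a) ha1 ha2 m
    have hrle := rr_le_half (a := a) ha1 ha2 m
    have hp : (0:ℝ) < (1/2)^k := by positivity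
    by_cases hend : x = lam ^ (m - 1)
    · -- right endpoint of the branch
      have hm2 : 2 ≤ m := by
        by_contra hcon
        have : m = 1 := by omega
        rw [this] at hend
        simp at hend
        rw [hend] at hx
        exact absurd hx.2 (by norm_num)
      obtain ⟨j0, hj0⟩ := TT_exists_small (a := a) ha1 ha2 (show (0:ℝ) < (1/2)^(k+1) by positivity)
      set j := max j0 m with hj
      have hTj : TT a j ≤ (1/2)^(k+1) := le_trans (TT_anti ha1 ha2 (le_max_left _ _)) hj0
      have hzmem : lam ^ j ∈ Set.Ioc (0:ℝ) (lam ^ (m - 1 - 2)) :=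
        ⟨pow_pos h1 j, pow_anti h1 h2 (by omega)⟩
      set y := gi lam (m-1) (lam ^ j) with hy
      have hyW : y ∈ Wint lam (m-1) := gi_mem h1 h2 (by omega) hzmem
      have hywr : y ∈ Set.Ioc (0:ℝ) 1 := by
        constructor
        · exact lt_of_le_of_lt (pow_nonneg h1.le (m-1)) hyW.1
        · exact le_trans hyW.2 (pow_le_one₀ h1.le h2.le)
      have hxy : x < y := by rw [hend]; exact hyW.1
      refine ⟨y, hxy, hywr, ?_⟩
      have he := HH_eq (lam := lam) ha1 ha2 y
      rw [idx_eq h1 h2 (by omega : 1 ≤ m - 1) hyW] at he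
      rw [Flam_eq h1 h2 (by omega : 1 ≤ m - 1) hyW] at he
      rw [hy, gi_gn h1 h2] at he
      rw [hend, HH_pow h1 h2 ha1 ha2]
      rw [he, HH_pow h1 h2 ha1 ha2]
      have hr'le := rr_le_half (a := a) ha1 ha2 (m-1)
      have hTjpos := (TT_pos (a := a) ha1 ha2 j).le
      have hp1 : (0:ℝ) < (1/2)^(k+1) := by positivity
      nlinarith [mul_le_mul hr'le hTj hTjpos (by norm_num : (0:ℝ) ≤ 1/2)]
    · -- interior point
      have hxlt : x < lam ^ (m-1) := lt_of_le_of_ne hW.2 hend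
      set z0 := gn lam m x with hz0
      have hz0m : z0 ∈ Set.Ioc (0:ℝ) (lam ^ (m-2)) := gn_mem h1 h2 him hW
      have hz0lt : z0 < lam ^ (m-2) := by
        rw [hz0, ← gn_right h1 h2 (m := m) him]
        exact gn_lt_gn h1 h2 hxlt
      have hz0oo : z0 ∈ Set.Ioo (0:ℝ) 1 := by
        constructor
        · exact hz0m.1
        · exact lt_of_lt_of_le hz0lt (pow_le_one₀ h1.le h2.le)
      obtain ⟨z, hz0z, hz1, hzle⟩ := ih z0 hz0oo
      set z' := min z (lam ^ (m-2)) with hz'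
      have hz'gt : z0 < z' := lt_min hz0z hz0lt
      have hz'mem : z' ∈ Set.Ioc (0:ℝ) (lam ^ (m-2)) :=
        ⟨lt_trans hz0m.1 hz'gt, min_le_right _ _⟩
      set y := gi lam m z' with hy
      have hyW : y ∈ Wint lam m := gi_mem h1 h2 him hz'mem
      have hywr : y ∈ Set.Ioc (0:ℝ) 1 := by
        constructor
        · exact lt_of_le_of_lt (pow_nonneg h1.le m) hyW.1
        · exact le_trans hyW.2 (pow_le_one₀ h1.le h2.le)
      have hxy : x < y := by
        have : gi lam m z0 < gi lam m z' := gi_lt_gi h1 h2 hz'gt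
        rwa [hz0, gn_gi h1 h2] at this
      refine ⟨y, hxy, hywr, ?_⟩
      have hz'le : HH lam a z' ≤ HH lam a z :=
        HH_mono h1 h2 ha1 ha2 ⟨hz'mem.1, le_trans (min_le_left _ _) hz1.2⟩ hz1 (min_le_left _ _)
      have hey := HH_eq (lam := lam) ha1 ha2 y
      rw [idx_eq h1 h2 him hyW, Flam_eq h1 h2 him hyW] at hey
      rw [hy, gi_gn h1 h2] at hey
      have hex := HH_eq (lam := lam) ha1 ha2 x
      rw [← hm, Flam_eq h1 h2 him hW, ← hz0] at hex
      have hcomb : HH lam a z' ≤ HH lam a z0 + (1/2)^k := le_trans hz'le hzle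
      rw [hey, hex, pow_succ]
      nlinarith [mul_le_mul_of_nonneg_left hcomb hrpos.le,
        mul_nonneg (show (0:ℝ) ≤ 1/2 - rr a m by linarith) hp.le]

end RC

noncomputable def Hx (lam a : ℝ) (x : ℝ) : ℝ :=
  if x ≤ 0 then 0 else if x ≤ 1 then HH lam a x else 1

section HxLem

variable {lam a : ℝ} (h1 : 0 < lam) (h2 : lam < 1) (ha1 : 1 ≤ a) (ha2 : a ≤ 2)
include h1 h2 ha1 ha2

omit h1 h2 ha1 ha2 in
lemma Hx_eq_HH {x : ℝ} (hx : x ∈ Set.Ioc (0:ℝ) 1) : Hx lam a x = HH lam a x := by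
  unfold Hx
  rw [if_neg (by linarith [hx.1]), if_pos hx.2]

omit h1 h2 ha1 ha2 in
lemma Hx_of_nonpos {x : ℝ} (hx : x ≤ 0) : Hx lam a x = 0 := if_pos hx

lemma Hx_of_ge_one {x : ℝ} (hx : 1 ≤ x) : Hx lam a x = 1 := by
  unfold Hx
  rw [if_neg (by linarith)]
  by_cases h : x ≤ 1
  · have : x = 1 := le_antisymm h hx
    rw [if_pos h, this, HH_one h1 h2 ha1 ha2]
  · rw [if_neg h]

lemma Hx_pow (n : ℕ) : Hx lam a (lam ^ n) = TT a n := by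
  rw [Hx_eq_HH (pow_mem_Ioc01 h1 h2 n), HH_pow h1 h2 ha1 ha2]

lemma Hx_nonneg (x : ℝ) : 0 ≤ Hx lam a x := by
  unfold Hx
  split
  · exact le_rfl
  · split
    · exact HH_nonneg (lam := lam) ha1 ha2 x
    · norm_num

lemma Hx_le_one (x : ℝ) : Hx lam a x ≤ 1 := by
  unfold Hx
  split
  · norm_num
  · split
    · rename_i hx0 hx1
      exact HH_le_one h1 h2 ha1 ha2 ⟨by linarith, hx1⟩
    · exact le_rfl

lemma Hx_mono : Monotone (Hx lam a) := by
  intro x y hxy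
  by_cases hy0 : y ≤ 0
  · rw [Hx_of_nonpos (le_trans hxy hy0), Hx_of_nonpos hy0]
  push_neg at hy0
  by_cases hx0 : x ≤ 0
  · rw [Hx_of_nonpos hx0]
    exact Hx_nonneg h1 h2 ha1 ha2 y
  push_neg at hx0
  by_cases hy1 : y ≤ 1
  · rw [Hx_eq_HH ⟨hx0, le_trans hxy hy1⟩, Hx_eq_HH ⟨hy0, hy1⟩]
    exact HH_mono h1 h2 ha1 ha2 ⟨hx0, le_trans hxy hy1⟩ ⟨hy0, hy1⟩ hxy
  push_neg at hy1
  rw [Hx_of_ge_one h1 h2 ha1 ha2 hy1.le]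
  exact Hx_le_one h1 h2 ha1 ha2 x

lemma Hx_right_small (x : ℝ) {ε : ℝ} (hε : 0 < ε) :
    ∃ y, x < y ∧ Hx lam a y < Hx lam a x + ε := by
  rcases lt_trichotomy x 0 with hx | hx | hx
  · refine ⟨x/2, by linarith, ?_⟩
    rw [Hx_of_nonpos (by linarith), Hx_of_nonpos hx.le]
    linarith
  · obtain ⟨y, hy, hHy⟩ := RC0 h1 h2 ha1 ha2 (show (0:ℝ) < ε/2 from by linarith)
    refine ⟨y, by rw [← hx] at hy; exact hy.1, ?_⟩
    rw [Hx_eq_HH hy, hx, Hx_of_nonpos le_rfl]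
    linarith
  · by_cases hx1 : 1 ≤ x
    · refine ⟨x + 1, by linarith, ?_⟩
      rw [Hx_of_ge_one h1 h2 ha1 ha2 (by linarith), Hx_of_ge_one h1 h2 ha1 ha2 hx1]
      linarith
    · push_neg at hx1
      obtain ⟨k, hk⟩ := exists_pow_lt_of_lt_one hε (show (1:ℝ)/2 < 1 by norm_num)
      obtain ⟨y, hxy, hy, hHy⟩ := RC_aux h1 h2 ha1 ha2 k x ⟨hx, hx1⟩
      refine ⟨y, hxy, ?_⟩
      rw [Hx_eq_HH hy, Hx_eq_HH ⟨hx, hx1.le⟩]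
      calc HH lam a y ≤ HH lam a x + (1/2)^k := hHy
        _ < HH lam a x + ε := by linarith

lemma Hx_right_continuous (x : ℝ) : ContinuousWithinAt (Hx lam a) (Set.Ici x) x := by
  have hmono := Hx_mono h1 h2 ha1 ha2
  rw [ContinuousWithinAt]
  apply tendsto_order.2
  constructor
  · intro b hb
    filter_upwards [self_mem_nhdsWithin] with y hy
    exact lt_of_lt_of_le hb (hmono hy)
  · intro b hb
    obtain ⟨y0, hxy0, hy0⟩ := Hx_right_small h1 h2 ha1 ha2 x
      (show 0 < (b - Hx lam a x) from by linarith)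
    have hIco : Set.Ico x y0 ∈ 𝓝[≥] x := Ico_mem_nhdsGE hxy0
    filter_upwards [hIco] with y hy
    calc Hx lam a y ≤ Hx lam a y0 := hmono hy.2.le
      _ < b := by linarith

end HxLem

/-- The Stieltjes function of the conformal measure. -/
noncomputable def SF {lam a : ℝ} (h1 : 0 < lam) (h2 : lam < 1) (ha1 : 1 ≤ a) (ha2 : a ≤ 2) :
    StieltjesFunction ℝ where
  toFun := Hx lam a
  mono' := Hx_mono h1 h2 ha1 ha2
  right_continuous' := Hx_right_continuous h1 h2 ha1 ha2

lemma Ioc_inter_Ioc_clamp {u v A B : ℝ} (hAB : A ≤ B) :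
    Set.Ioc u v ∩ Set.Ioc A B = Set.Ioc (max A (min u B)) (max A (min v B)) := by
  ext z
  simp only [Set.mem_inter_iff, Set.mem_Ioc]
  constructor
  · rintro ⟨⟨hu, hv⟩, hA, hB⟩
    exact ⟨max_lt hA (lt_of_le_of_lt (min_le_left _ _) hu),
      le_max_of_le_right (le_min hv hB)⟩
  · rintro ⟨hl, hr⟩
    have hzB : z ≤ B := le_trans hr (max_le hAB (min_le_right _ _))
    have hzA : A < z := lt_of_le_of_lt (le_max_left _ _) hl
    have hzu : u < z := by
      rcases le_total u B with h | h
      · have hmin : min u B = u := min_eq_left h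
        rw [hmin] at hl
        exact lt_of_le_of_lt (le_max_right A u) hl
      · exfalso
        have hmin : min u B = B := min_eq_right h
        rw [hmin] at hl
        exact absurd hzB (not_le.mpr (lt_of_le_of_lt (le_max_right A B) hl))
    have hzv : z ≤ v := by
      rcases le_or_gt z A with h | h
      · exact absurd h (not_le.mpr hzA)
      · have : z ≤ max A (min v B) := hr
        rcases max_cases A (min v B) with ⟨he, _⟩ | ⟨he, _⟩
        · rw [he] at hr; linarith
        · rw [he] at hr; exact le_trans hr (min_le_left _ _)
    exact ⟨⟨hzu, hzv⟩, hzA, hzB⟩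

section MeasLem

variable {lam a : ℝ} (h1 : 0 < lam) (h2 : lam < 1) (ha1 : 1 ≤ a) (ha2 : a ≤ 2)
include h1 h2

lemma gi_measurable (n : ℕ) : Measurable (gi lam n) := by
  unfold gi
  fun_prop

lemma gi_preimage_Ioc (n : ℕ) (u v : ℝ) :
    gi lam n ⁻¹' (Set.Ioc u v) = Set.Ioc (gn lam n u) (gn lam n v) := by
  have hsl := sl_pos h1 h2 (lam := lam) n
  ext z
  simp only [Set.mem_preimage, Set.mem_Ioc]
  unfold gi gn
  rw [div_lt_iff₀ hsl, le_div_iff₀ hsl]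
  constructor <;> rintro ⟨hA, hB⟩ <;> constructor <;> nlinarith

include ha1 ha2

/-- pointwise conformal relation on the closed branch -/
lemma PC {n : ℕ} (hn : 1 ≤ n) {x : ℝ} (hx : x ∈ Set.Icc (lam ^ n) (lam ^ (n-1))) :
    Hx lam a x = TT a n + rr a n * Hx lam a (gn lam n x) := by
  rcases eq_or_lt_of_le hx.1 with heq | hlt
  · rw [← heq]
    have hg0 : gn lam n (lam ^ n) = 0 := by
      unfold gn; rw [div_eq_iff (sl_pos h1 h2 n).ne']; ring
    rw [hg0, Hx_of_nonpos le_rfl]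
    have := Hx_pow h1 h2 ha1 ha2 (lam := lam) (a := a) n
    rw [this]
    ring
  · have hW : x ∈ Wint lam n := ⟨hlt, hx.2⟩
    have hx01 : x ∈ Set.Ioc (0:ℝ) 1 :=
      ⟨lt_of_le_of_lt (pow_nonneg h1.le n) hlt,
       le_trans hx.2 (pow_le_one₀ h1.le h2.le)⟩
    have hg := gn_mem h1 h2 hn hW
    have hg01 : gn lam n x ∈ Set.Ioc (0:ℝ) 1 :=
      ⟨hg.1, le_trans hg.2 (pow_le_one₀ h1.le h2.le)⟩
    rw [Hx_eq_HH hx01, Hx_eq_HH hg01]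
    have he := HH_eq (lam := lam) ha1 ha2 x
    rw [idx_eq h1 h2 hn hW, Flam_eq h1 h2 hn hW] at he
    exact he

end MeasLem

section MeasMain

variable {lam a : ℝ} (h1 : 0 < lam) (h2 : lam < 1) (ha1 : 1 ≤ a) (ha2 : a ≤ 2)
include h1 h2 ha1 ha2

lemma SF_coe : ⇑(SF h1 h2 ha1 ha2) = Hx lam a := rfl

lemma SF_bot : Tendsto (⇑(SF h1 h2 ha1 ha2)) atBot (𝓝 0) := by
  rw [SF_coe]
  have hev : (Hx lam a) =ᶠ[atBot] (fun _ => (0:ℝ)) := by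
    filter_upwards [eventually_le_atBot (0:ℝ)] with x hx
    exact Hx_of_nonpos hx
  exact Tendsto.congr' hev.symm tendsto_const_nhds

lemma SF_top : Tendsto (⇑(SF h1 h2 ha1 ha2)) atTop (𝓝 1) := by
  rw [SF_coe]
  have hev : (Hx lam a) =ᶠ[atTop] (fun _ => (1:ℝ)) := by
    filter_upwards [eventually_ge_atTop (1:ℝ)] with x hx
    exact Hx_of_ge_one h1 h2 ha1 ha2 hx
  exact Tendsto.congr' hev.symm tendsto_const_nhds

lemma SF_prob : IsProbabilityMeasure (SF h1 h2 ha1 ha2).measure :=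
  StieltjesFunction.isProbabilityMeasure _ (SF_bot h1 h2 ha1 ha2) (SF_top h1 h2 ha1 ha2)

lemma SF_Ioc (u v : ℝ) :
    (SF h1 h2 ha1 ha2).measure (Set.Ioc u v) = ENNReal.ofReal (Hx lam a v - Hx lam a u) :=
  StieltjesFunction.measure_Ioc _ u v

lemma SF_Ioc01 : (SF h1 h2 ha1 ha2).measure (Set.Ioc 0 1) = 1 := by
  rw [SF_Ioc h1 h2 ha1 ha2, Hx_of_ge_one h1 h2 ha1 ha2 le_rfl, Hx_of_nonpos le_rfl]
  norm_num

lemma SF_W {k : ℕ} (hk : 1 ≤ k) :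
    (SF h1 h2 ha1 ha2).measure (Wint lam k) = ENNReal.ofReal (TT a (k-1) - TT a k) := by
  unfold Wint
  rw [SF_Ioc h1 h2 ha1 ha2, Hx_pow h1 h2 ha1 ha2, Hx_pow h1 h2 ha1 ha2]

lemma SF_branch {n : ℕ} (hn : 1 ≤ n) {A : Set ℝ} (hA : MeasurableSet A)
    (hAW : A ⊆ Wint lam n) :
    (SF h1 h2 ha1 ha2).measure (Flam lam '' A)
      = ENNReal.ofReal (rr a n)⁻¹ * (SF h1 h2 ha1 ha2).measure A := by
  set mm := (SF h1 h2 ha1 ha2).measure with hmm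
  have hWm : MeasurableSet (Wint lam n) := measurableSet_Ioc
  have hgim : Measurable (gi lam n) := gi_measurable h1 h2 n
  have hrpos : 0 < rr a n := rr_pos ha1 ha2 n
  have hAB : lam ^ n ≤ lam ^ (n-1) := pow_anti h1 h2 (by omega)
  -- image = preimage under inverse branch
  have himg : Flam lam '' A = gi lam n ⁻¹' A := by
    ext z
    simp only [Set.mem_image, Set.mem_preimage]
    constructor
    · rintro ⟨x, hxA, rfl⟩
      rw [Flam_eq h1 h2 hn (hAW hxA), gn_gi h1 h2]
      exact hxA
    · intro hz
      exact ⟨gi lam n z, hz, by rw [Flam_eq h1 h2 hn (hAW hz), gi_gn h1 h2]⟩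
  -- the two measures agree on Ioc's
  have key2 : ∀ u v : ℝ,
      ((mm.map (gi lam n)).restrict (Wint lam n)) (Set.Ioc u v)
        = ENNReal.ofReal ((rr a n)⁻¹ * (Hx lam a (max (lam^n) (min v (lam^(n-1))))
            - Hx lam a (max (lam^n) (min u (lam^(n-1)))))) ∧
      ((ENNReal.ofReal (rr a n)⁻¹) • (mm.restrict (Wint lam n))) (Set.Ioc u v)
        = ENNReal.ofReal ((rr a n)⁻¹ * (Hx lam a (max (lam^n) (min v (lam^(n-1))))
            - Hx lam a (max (lam^n) (min u (lam^(n-1)))))) := by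
    intro u v
    set P := max (lam^n) (min u (lam^(n-1))) with hP
    set Q := max (lam^n) (min v (lam^(n-1))) with hQ
    have hPm : P ∈ Set.Icc (lam^n) (lam^(n-1)) :=
      ⟨le_max_left _ _, max_le hAB (min_le_right _ _)⟩
    have hQm : Q ∈ Set.Icc (lam^n) (lam^(n-1)) :=
      ⟨le_max_left _ _, max_le hAB (min_le_right _ _)⟩
    have hPC_P := PC h1 h2 ha1 ha2 hn hPm
    have hPC_Q := PC h1 h2 ha1 ha2 hn hQm
    have hclamp : Set.Ioc u v ∩ Wint lam n = Set.Ioc P Q := by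
      unfold Wint
      rw [Ioc_inter_Ioc_clamp hAB]
    have eP : Hx lam a (gn lam n P) = (rr a n)⁻¹ * (Hx lam a P - TT a n) := by
      rw [hPC_P]
      field_simp
      ring
    have eQ : Hx lam a (gn lam n Q) = (rr a n)⁻¹ * (Hx lam a Q - TT a n) := by
      rw [hPC_Q]
      field_simp
      ring
    constructor
    · rw [Measure.restrict_apply measurableSet_Ioc,
        Measure.map_apply hgim (measurableSet_Ioc.inter hWm), hclamp,
        gi_preimage_Ioc h1 h2 n P Q, hmm, SF_Ioc h1 h2 ha1 ha2, eP, eQ]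
      congr 1
      ring
    · rw [Measure.smul_apply, Measure.restrict_apply measurableSet_Ioc, hclamp, hmm,
        SF_Ioc h1 h2 ha1 ha2, smul_eq_mul,
        ← ENNReal.ofReal_mul (by positivity : (0:ℝ) ≤ (rr a n)⁻¹)]
  have hmeq : (mm.map (gi lam n)).restrict (Wint lam n)
      = (ENNReal.ofReal (rr a n)⁻¹) • (mm.restrict (Wint lam n)) := by
    refine Measure.ext_of_Ioc' _ _ (fun u v _ => ?_) (fun u v _ => ?_)
    · rw [(key2 u v).1]; exact ENNReal.ofReal_ne_top
    · rw [(key2 u v).1, (key2 u v).2]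
  have hAiW : A ∩ Wint lam n = A := Set.inter_eq_self_of_subset_left hAW
  calc mm (Flam lam '' A) = mm (gi lam n ⁻¹' A) := by rw [himg]
    _ = (mm.map (gi lam n)) A := (Measure.map_apply hgim hA).symm
    _ = ((mm.map (gi lam n)).restrict (Wint lam n)) A := by
        rw [Measure.restrict_apply hA, hAiW]
    _ = ((ENNReal.ofReal (rr a n)⁻¹) • (mm.restrict (Wint lam n))) A := by rw [hmeq]
    _ = ENNReal.ofReal (rr a n)⁻¹ * mm A := by
        rw [Measure.smul_apply, Measure.restrict_apply hA, hAiW, smul_eq_mul]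

end MeasMain

lemma TT_diff (a : ℝ) {k : ℕ} (hk : 1 ≤ k) :
    TT a (k-1) - TT a k = (((k:ℝ)) - 1 + a * (1 - (k:ℝ)/2)) * (1/2)^k := by
  obtain ⟨j, rfl⟩ : ∃ j, k = j + 1 := ⟨k-1, by omega⟩
  unfold TT
  simp only [Nat.add_sub_cancel]
  push_cast
  rw [pow_succ]
  ring

end S5

/-- For `lam ∈ (0,1)`, `t > 0` with `lam^t ≥ 1/2` and
`p = log (4 lam^t (1-lam)^t)`, there is a `(t,p)`-conformal Borel probability
measure on `(0,1]` with `m(W k) = ((k-1) + lam^(-t)(1-k/2)) * (1/2)^k` for `k ≥ 1`. -/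
theorem stmt5 (lam t : ℝ) (h1 : 0 < lam) (h2 : lam < 1) (ht : 0 < t)
    (hlt : 1/2 ≤ lam ^ t) :
    ∃ m : Measure ℝ, IsProbabilityMeasure m ∧ m (Set.Ioc 0 1) = 1 ∧
      IsConformal lam t (Real.log (4 * lam^t * (1-lam)^t)) m ∧
      ∀ k : ℕ, 1 ≤ k → m (Wint lam k) =
        ENNReal.ofReal (((k:ℝ) - 1 + lam ^ (-t) * (1 - (k:ℝ)/2)) * (1/2)^k) := by
  have hpt : 0 < lam ^ t := Real.rpow_pos_of_pos h1 t
  have hone : lam ^ t ≤ 1 := Real.rpow_le_one h1.le h2.le ht.le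
  have haeq : lam ^ (-t) = (lam ^ t)⁻¹ := Real.rpow_neg h1.le t
  have ha1 : 1 ≤ lam ^ (-t) := by
    rw [haeq]
    exact (one_le_inv₀ hpt).mpr hone
  have ha2 : lam ^ (-t) ≤ 2 := by
    rw [haeq]
    rw [inv_le_comm₀ hpt (by norm_num)]
    linarith
  have hq : 0 < (1:ℝ) - lam := by linarith
  have hq2 : 0 < (1-lam) ^ t := Real.rpow_pos_of_pos hq t
  refine ⟨(S5.SF h1 h2 ha1 ha2).measure, S5.SF_prob h1 h2 ha1 ha2,
    S5.SF_Ioc01 h1 h2 ha1 ha2, ?_, ?_⟩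
  · intro n hn A hAmeas hAW
    rw [S5.SF_branch h1 h2 ha1 ha2 hn hAmeas hAW]
    have hexp : Real.exp (Real.log (4 * lam^t * (1-lam)^t)) = 4 * lam^t * (1-lam)^t :=
      Real.exp_log (by positivity)
    have hco : Real.exp (Real.log (4 * lam^t * (1-lam)^t)) * slopeW lam n ^ t
        = (S5.rr (lam ^ (-t)) n)⁻¹ := by
      rw [hexp]
      unfold slopeW S5.rr
      by_cases hc : n = 1
      · rw [if_pos hc, if_pos hc, one_div, Real.inv_rpow hq.le, haeq]
        field_simp
      · rw [if_neg hc, if_neg hc, one_div,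
          Real.inv_rpow (by positivity : (0:ℝ) ≤ lam * (1-lam)),
          Real.mul_rpow h1.le hq.le]
        rw [show ((1:ℝ)/4)⁻¹ = 4 by norm_num]
        field_simp
    rw [hco]
  · intro k hk
    rw [S5.SF_W h1 h2 ha1 ha2 hk]
    congr 1
    exact S5.TT_diff (lam ^ (-t)) hk
end
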